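/- arXiv:2206.00353 — 8 statements merged into one kernel-verified Lean document; each statement's English description precedes it below -/
import Mathlib

section
/- Let $(X,\mathcal{B},\mu,f,T_f)$ be a composition dynamical system on $L^p(X)$, $1\le p<\infty$. Then $T_f$ is positively expansive (i.e., $\sup_{n\in\mathbb{N}}\|T_f^n\varphi\|_p=\infty$ for every nonzero $\varphi\in L^p(X)$) if and only if for every measurable set $B$ with $\mu(B)>0$ one has $\sup_{n\in\mathbb{N}}\mu(f^{-n}(B))=\infty$. -/
open MeasureTheory Filter Set ENNReal

/-- Theorem E(1): `T_f` is positively expansive iff `sup_{n∈ℕ} μ(f⁻ⁿ(B)) = ∞`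
for every measurable set `B` of positive measure. -/
theorem stmt_1
    {X : Type*} [MeasurableSpace X] (μ : Measure X) [SigmaFinite μ]
    (p : ℝ≥0∞) (hp1 : 1 ≤ p) (hpT : p ≠ ⊤)
    (f : X → X) (hf_inj : Function.Injective f) (hf_meas : Measurable f)
    (hf_bi : ∀ B : Set X, MeasurableSet B → MeasurableSet (f '' B))
    (c : ℝ≥0∞) (hc : 0 < c) (hcT : c ≠ ⊤)
    (hb : ∀ B : Set X, MeasurableSet B → μ (f ⁻¹' B) ≤ c * μ B) :
    (∀ φ : X → ℂ, MemLp φ p μ → ¬ φ =ᵐ[μ] 0 →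
        (⨆ n : ℕ, eLpNorm (φ ∘ (f^[n])) p μ) = ⊤) ↔
    (∀ B : Set X, MeasurableSet B → 0 < μ B →
        (⨆ n : ℕ, μ ((f^[n]) ⁻¹' B)) = ⊤) := by
  have hp0 : p ≠ 0 := fun h => by simp [h] at hp1
  have hr : 0 < p.toReal := ENNReal.toReal_pos hp0 hpT
  have hr' : 0 < 1 / p.toReal := by positivity
  -- preimages of null sets under iterates are null
  have hnull : ∀ (n : ℕ) (N : Set X), MeasurableSet N → μ N = 0 →
      μ (f^[n] ⁻¹' N) = 0 := by
    intro n
    induction n with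
    | zero => intro N _ hN0; simpa using hN0
    | succ n ih =>
      intro N hN hN0
      have hmeas : MeasurableSet (f^[n] ⁻¹' N) := (hf_meas.iterate n) hN
      have heq : f^[n+1] ⁻¹' N = f ⁻¹' (f^[n] ⁻¹' N) := by
        rw [Function.iterate_succ]; rfl
      rw [heq]
      have h1 := hb _ hmeas
      rw [ih N hN hN0, mul_zero] at h1
      exact le_antisymm h1 (zero_le)
  -- a.e. equality is preserved by composition with iterates
  have hae : ∀ (n : ℕ) (φ ψ : X → ℂ), φ =ᵐ[μ] ψ →
      (φ ∘ f^[n]) =ᵐ[μ] (ψ ∘ f^[n]) := by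
    intro n φ ψ h
    have h0 : μ {x | φ x ≠ ψ x} = 0 := h
    have hN0 : μ (toMeasurable μ {x | φ x ≠ ψ x}) = 0 := by
      rw [measure_toMeasurable]; exact h0
    have hkey := hnull n _ (measurableSet_toMeasurable μ _) hN0
    refine measure_mono_null ?_ hkey
    intro x hx
    exact subset_toMeasurable μ _ hx
  constructor
  · -- expansive → set condition
    intro H B hB hB0
    obtain ⟨B', hB'm, hB's, hB'0, hB'fin⟩ :=
      MeasureTheory.Measure.exists_subset_measure_lt_top hB hB0
    set φ : X → ℂ := B'.indicator (fun _ => (1:ℂ)) with hφdef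
    have hmem : MemLp φ p μ := memLp_indicator_const p hB'm 1 (Or.inr hB'fin.ne)
    have hne : ¬ φ =ᵐ[μ] 0 := by
      intro h
      have h0 : μ {x | φ x ≠ 0} = 0 := h
      have hsub : B' ⊆ {x | φ x ≠ 0} := by
        intro x hx
        simp only [hφdef, Set.mem_setOf_eq, Set.indicator_of_mem hx]
        exact one_ne_zero
      exact absurd (measure_mono_null hsub h0) hB'0.ne'
    have Htop := H φ hmem hne
    rw [iSup_eq_top] at Htop ⊢
    intro b hbt
    obtain ⟨n, hn⟩ := Htop (b ^ (1 / p.toReal))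
      (ENNReal.rpow_lt_top_of_nonneg (le_of_lt hr') hbt.ne)
    refine ⟨n, ?_⟩
    have hcomp : φ ∘ f^[n] = (f^[n] ⁻¹' B').indicator (fun _ => (1:ℂ)) := by
      funext x
      by_cases hx : f^[n] x ∈ B' <;>
        simp [hφdef, Function.comp, Set.indicator, hx]
    rw [hcomp, eLpNorm_indicator_const ((hf_meas.iterate n) hB'm) hp0 hpT] at hn
    simp only [enorm_one, one_mul] at hn
    have : b < μ (f^[n] ⁻¹' B') := (ENNReal.rpow_lt_rpow_iff hr').mp hn
    exact this.trans_le (measure_mono (Set.preimage_mono hB's))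
  · -- set condition → expansive
    intro H φ hφ hφ0
    set ψ : X → ℂ := hφ.aestronglyMeasurable.mk φ with hψdef
    have hψm : StronglyMeasurable ψ := hφ.aestronglyMeasurable.stronglyMeasurable_mk
    have hφψ : φ =ᵐ[μ] ψ := hφ.aestronglyMeasurable.ae_eq_mk
    have hψ0 : ¬ ψ =ᵐ[μ] 0 := fun h => hφ0 (hφψ.trans h)
    -- find ε > 0 with μ {x | ε ≤ ‖ψ x‖} > 0
    have hnorm : Measurable fun x => ‖ψ x‖ := hψm.norm.measurable
    have hexists : ∃ k : ℕ, 0 < μ {x | (1:ℝ)/(k+1) ≤ ‖ψ x‖} := by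
      by_contra hcon
      push_neg at hcon
      apply hψ0
      have hsub : {x | ψ x ≠ 0} ⊆ ⋃ k : ℕ, {x | (1:ℝ)/(k+1) ≤ ‖ψ x‖} := by
        intro x hx
        have hpos : 0 < ‖ψ x‖ := norm_pos_iff.mpr hx
        obtain ⟨k, hk⟩ := exists_nat_one_div_lt hpos
        refine Set.mem_iUnion.mpr ⟨k, ?_⟩
        show (1:ℝ)/(k+1) ≤ ‖ψ x‖
        exact le_of_lt (by push_cast at hk ⊢; linarith)
      have : μ {x | ψ x ≠ 0} = 0 := by
        refine measure_mono_null hsub ?_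
        refine measure_iUnion_null fun k => ?_
        exact le_antisymm (hcon k) (zero_le)
      exact this
    obtain ⟨k, hk⟩ := hexists
    set ε : ℝ := (1:ℝ)/(k+1) with hεdef
    have hε : 0 < ε := by positivity
    set B : Set X := {x | ε ≤ ‖ψ x‖} with hBdef
    have hBm : MeasurableSet B := hnorm measurableSet_Ici
    have Htop := H B hBm hk
    set e : ℝ≥0∞ := ENNReal.ofReal ε with hedef
    have he0 : e ≠ 0 := by
      simp [hedef, ENNReal.ofReal_eq_zero, not_le, hε]
    have heT : e ≠ ⊤ := ENNReal.ofReal_ne_top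
    rw [iSup_eq_top] at Htop ⊢
    intro b hbt
    have hbe : b / e < ⊤ := ENNReal.div_lt_top hbt.ne he0
    obtain ⟨n, hn⟩ := Htop ((b / e) ^ p.toReal)
      (ENNReal.rpow_lt_top_of_nonneg (le_of_lt hr) hbe.ne)
    refine ⟨n, ?_⟩
    set S : Set X := f^[n] ⁻¹' B with hSdef
    have hSm : MeasurableSet S := (hf_meas.iterate n) hBm
    -- bound : e * μ S ^ (1/p.toReal) ≤ eLpNorm (φ ∘ f^[n]) p μ
    have hmono : eLpNorm (S.indicator (fun _ => ε)) p μ ≤ eLpNorm (ψ ∘ f^[n]) p μ := by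
      apply eLpNorm_mono
      intro x
      by_cases hx : x ∈ S
      · have : ε ≤ ‖ψ (f^[n] x)‖ := hx
        rwa [Set.indicator_of_mem hx, Real.norm_eq_abs, abs_of_pos hε]
      · rw [Set.indicator_of_notMem hx]
        simp
    have hcongr : eLpNorm (ψ ∘ f^[n]) p μ = eLpNorm (φ ∘ f^[n]) p μ :=
      eLpNorm_congr_ae (hae n ψ φ hφψ.symm)
    have hind : eLpNorm (S.indicator (fun _ => ε)) p μ = e * μ S ^ (1 / p.toReal) := by
      rw [eLpNorm_indicator_const hSm hp0 hpT]
      congr 1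
      rw [hedef]
      exact (Real.enorm_eq_ofReal hε.le)
    have hbound : e * μ S ^ (1 / p.toReal) ≤ eLpNorm (φ ∘ f^[n]) p μ := by
      rw [← hind, ← hcongr]; exact hmono
    refine lt_of_lt_of_le ?_ hbound
    have h1 : b / e < μ S ^ (1 / p.toReal) := by
      have := ENNReal.rpow_lt_rpow hn hr'
      rwa [← ENNReal.rpow_mul, mul_one_div, div_self hr.ne', ENNReal.rpow_one] at this
    calc b = e * (b / e) := by
              rw [ENNReal.mul_div_cancel he0 heT]
      _ < e * μ S ^ (1 / p.toReal) := by
              exact (ENNReal.mul_lt_mul_iff_right he0 heT).mpr h1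
end

section
/- Let $(X,\mathcal{B},\mu,f,T_f)$ be a composition dynamical system on $L^p(X)$, $1\le p<\infty$. Then $T_f$ is uniformly positively expansive (i.e., $\lim_{n\to\infty}\|T_f^n\varphi\|_p=\infty$ uniformly on the unit sphere of $L^p(X)$) if and only if $\mu(f^{-n}(B))/\mu(B)\to\infty$ as $n\to\infty$ uniformly with respect to $B\in\mathcal{B}^+=\{B\in\mathcal{B}:0<\mu(B)<\infty\}$. -/
open MeasureTheory Filter Set ENNReal

private lemma iter_bound {X : Type*} [MeasurableSpace X] (μ : Measure X)
    (f : X → X) (hf_meas : Measurable f) (c : ℝ≥0∞)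
    (hb : ∀ B : Set X, MeasurableSet B → μ (f ⁻¹' B) ≤ c * μ B) :
    ∀ n, ∀ B : Set X, MeasurableSet B → μ ((f^[n]) ⁻¹' B) ≤ c ^ n * μ B := by
  intro n
  induction n with
  | zero => intro B hB; simp
  | succ n ih =>
    intro B hB
    rw [Function.iterate_succ']
    have hpre : (f ∘ f^[n]) ⁻¹' B = f^[n] ⁻¹' (f ⁻¹' B) := rfl
    rw [hpre]
    calc μ (f^[n] ⁻¹' (f ⁻¹' B)) ≤ c ^ n * μ (f ⁻¹' B) := ih _ (hf_meas hB)
      _ ≤ c ^ n * (c * μ B) := mul_le_mul_right (hb B hB) _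
      _ = c ^ (n + 1) * μ B := by rw [pow_succ]; ring

/-- Theorem E(3): `T_f` is uniformly positively expansive iff
`μ(f⁻ⁿ(B))/μ(B) → ∞` uniformly with respect to `B ∈ 𝓑⁺`. -/
theorem stmt_3
    {X : Type*} [MeasurableSpace X] (μ : Measure X) [SigmaFinite μ]
    (p : ℝ≥0∞) (hp1 : 1 ≤ p) (hpT : p ≠ ⊤)
    (f : X → X) (hf_inj : Function.Injective f) (hf_meas : Measurable f)
    (hf_bi : ∀ B : Set X, MeasurableSet B → MeasurableSet (f '' B))
    (c : ℝ≥0∞) (hc : 0 < c) (hcT : c ≠ ⊤)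
    (hb : ∀ B : Set X, MeasurableSet B → μ (f ⁻¹' B) ≤ c * μ B) :
    (∀ M : ℝ≥0∞, M ≠ ⊤ → ∃ N : ℕ, ∀ n ≥ N, ∀ φ : X → ℂ,
        MemLp φ p μ → eLpNorm φ p μ = 1 →
        M ≤ eLpNorm (φ ∘ (f^[n])) p μ) ↔
    (∀ M : ℝ≥0∞, M ≠ ⊤ → ∃ N : ℕ, ∀ n ≥ N, ∀ B : Set X,
        MeasurableSet B → 0 < μ B → μ B ≠ ⊤ →
        M * μ B ≤ μ ((f^[n]) ⁻¹' B)) := by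
  have hp0 : p ≠ 0 := fun h => by simp [h] at hp1
  set r : ℝ := p.toReal with hr_def
  have hr : 0 < r := ENNReal.toReal_pos hp0 hpT
  constructor
  · -- expansive → measure condition
    intro H M hM
    obtain ⟨N, hN⟩ := H (M ^ (1 / r)) (ENNReal.rpow_ne_top_of_nonneg (by positivity) hM)
    refine ⟨N, fun n hn B hB hB0 hBT => ?_⟩
    have hBr_pos : 0 < (μ B) ^ (1 / r) := ENNReal.rpow_pos hB0 hBT
    have hBr_ne_top : (μ B) ^ (1 / r) ≠ ⊤ :=
      ENNReal.rpow_ne_top_of_nonneg (by positivity) hBT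
    set a : NNReal := ((μ B) ^ (1 / r))⁻¹.toNNReal with ha_def
    have haB : (a : ℝ≥0∞) = ((μ B) ^ (1 / r))⁻¹ :=
      coe_toNNReal (ENNReal.inv_ne_top.mpr hBr_pos.ne')
    set φ : X → ℂ := B.indicator (fun _ => ((a : ℝ) : ℂ)) with hφ_def
    have hnorm : (‖((a : ℝ) : ℂ)‖₊ : ℝ≥0∞) = (a : ℝ≥0∞) := by
      rw [Complex.nnnorm_real]
      simp
    have hmem : MemLp φ p μ := memLp_indicator_const p hB _ (Or.inr hBT)
    have h1 : eLpNorm φ p μ = 1 := by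
      rw [hφ_def, eLpNorm_indicator_const hB hp0 hpT, enorm_eq_nnnorm, hnorm, haB]
      exact ENNReal.inv_mul_cancel hBr_pos.ne' hBr_ne_top
    have key := hN n hn φ hmem h1
    have hcomp : φ ∘ (f^[n]) = ((f^[n]) ⁻¹' B).indicator (fun _ => ((a : ℝ) : ℂ)) := by
      ext x
      by_cases hx : f^[n] x ∈ B <;>
        simp [hφ_def, Set.indicator_apply, Set.mem_preimage, hx]
    rw [hcomp, eLpNorm_indicator_const ((hf_meas.iterate n) hB) hp0 hpT, enorm_eq_nnnorm, hnorm, haB] at key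
    -- key : M ^ (1/r) ≤ (μ B ^ (1/r))⁻¹ * μ ((f^[n]) ⁻¹' B) ^ (1/r)
    have key2 : M ^ (1 / r) * (μ B) ^ (1 / r) ≤ μ ((f^[n]) ⁻¹' B) ^ (1 / r) := by
      calc M ^ (1 / r) * (μ B) ^ (1 / r)
          ≤ ((μ B ^ (1 / r))⁻¹ * μ ((f^[n]) ⁻¹' B) ^ (1 / r)) * (μ B) ^ (1 / r) :=
            mul_le_mul_left key _
        _ = μ ((f^[n]) ⁻¹' B) ^ (1 / r) := by
            rw [mul_comm ((μ B ^ (1 / r))⁻¹) _, mul_assoc,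
              ENNReal.inv_mul_cancel hBr_pos.ne' hBr_ne_top, mul_one]
    have := ENNReal.rpow_le_rpow key2 hr.le
    rwa [ENNReal.mul_rpow_of_nonneg _ _ hr.le, ← ENNReal.rpow_mul, ← ENNReal.rpow_mul,
      ← ENNReal.rpow_mul, one_div_mul_cancel hr.ne', ENNReal.rpow_one, ENNReal.rpow_one,
      ENNReal.rpow_one] at this
  · -- measure condition → expansive
    intro H M₀ hM₀
    rcases eq_or_ne M₀ 0 with hM0 | hM0
    · exact ⟨0, fun n _ φ _ _ => by simp [hM0]⟩
    set M : ℝ≥0∞ := M₀ ^ r with hM_def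
    have hM_ne_top : M ≠ ⊤ := ENNReal.rpow_ne_top_of_nonneg hr.le hM₀
    have hM_ne_zero : M ≠ 0 := by
      simp only [hM_def]
      exact (ENNReal.rpow_pos (zero_lt_iff.mpr hM0) hM₀).ne'
    obtain ⟨N, hN⟩ := H M hM_ne_top
    refine ⟨N, fun n hn φ hφ hφ1 => ?_⟩
    -- measurable representative
    set g : X → ℂ := hφ.aestronglyMeasurable.mk φ with hg_def
    have hg : StronglyMeasurable g := hφ.aestronglyMeasurable.stronglyMeasurable_mk
    have hgφ : φ =ᵐ[μ] g := hφ.aestronglyMeasurable.ae_eq_mk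
    have hg1 : eLpNorm g p μ = 1 := by rw [← eLpNorm_congr_ae hgφ]; exact hφ1
    -- a.e. equality after composing with f^[n]
    have hnull : μ ((f^[n]) ⁻¹' toMeasurable μ {x | φ x ≠ g x}) = 0 := by
      have h0 : μ (toMeasurable μ {x | φ x ≠ g x}) = 0 := by
        rw [measure_toMeasurable]
        exact hgφ
      have := iter_bound μ f hf_meas c hb n (toMeasurable μ {x | φ x ≠ g x})
        (measurableSet_toMeasurable μ _)
      rw [h0, mul_zero] at this
      exact le_antisymm this (zero_le)
    have hae : φ ∘ (f^[n]) =ᵐ[μ] g ∘ (f^[n]) := by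
      refine measure_mono_null (fun x hx => ?_) hnull
      exact subset_toMeasurable μ _ hx
    -- the measure inequality M • μ ≤ map f^[n] μ
    have hle : M • μ ≤ Measure.map (f^[n]) μ := by
      refine Measure.le_iff.mpr fun s hs => ?_
      rw [Measure.map_apply (hf_meas.iterate n) hs, Measure.smul_apply, smul_eq_mul]
      rcases eq_or_ne (μ s) 0 with h0 | h0
      · simp [h0]
      rcases eq_or_ne (μ s) ⊤ with hT | hT
      · -- infinite case via σ-finiteness
        have hmono : Monotone fun k => s ∩ spanningSets μ k :=
          fun i j hij => inter_subset_inter_right s (monotone_spanningSets μ hij)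
        have hUnion : (⋃ k, s ∩ spanningSets μ k) = s := by
          rw [← inter_iUnion, iUnion_spanningSets, inter_univ]
        have htendsto : Tendsto (fun k => μ (s ∩ spanningSets μ k)) atTop (nhds (μ s)) := by
          have := tendsto_measure_iUnion_atTop (μ := μ) hmono
          rwa [hUnion] at this
        have hbound : ∀ k, M * μ (s ∩ spanningSets μ k) ≤ μ ((f^[n]) ⁻¹' s) := by
          intro k
          rcases eq_or_ne (μ (s ∩ spanningSets μ k)) 0 with hk0 | hk0
          · simp [hk0]
          · calc M * μ (s ∩ spanningSets μ k)
                ≤ μ ((f^[n]) ⁻¹' (s ∩ spanningSets μ k)) :=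
                  hN n hn _ (hs.inter (measurableSet_spanningSets μ k))
                    (zero_lt_iff.mpr hk0)
                    ((measure_mono inter_subset_right).trans_lt
                      (measure_spanningSets_lt_top μ k)).ne
              _ ≤ μ ((f^[n]) ⁻¹' s) := measure_mono (preimage_mono inter_subset_left)
        have := ENNReal.Tendsto.const_mul (a := M) htendsto (Or.inl h0)
        exact le_of_tendsto' this hbound
      · exact hN n hn s hs (zero_lt_iff.mpr h0) hT
    -- compute
    have hgm : Measurable fun y => (‖g y‖₊ : ℝ≥0∞) ^ r := hg.measurable.enorm.pow_const r
    have hint : ∫⁻ x, (‖g x‖₊ : ℝ≥0∞) ^ r ∂μ = 1 := by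
      have h := hg1
      rw [eLpNorm_eq_lintegral_rpow_enorm_toReal hp0 hpT] at h; simp only [enorm_eq_nnnorm] at h
      calc ∫⁻ x, (‖g x‖₊ : ℝ≥0∞) ^ r ∂μ
          = ((∫⁻ x, (‖g x‖₊ : ℝ≥0∞) ^ r ∂μ) ^ (1 / r)) ^ r := by
            rw [← ENNReal.rpow_mul, one_div_mul_cancel hr.ne', ENNReal.rpow_one]
        _ = 1 := by rw [h, ENNReal.one_rpow]
    calc M₀ = (M * 1) ^ (1 / r) := by
          rw [mul_one, hM_def, ← ENNReal.rpow_mul, mul_one_div_cancel hr.ne',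
            ENNReal.rpow_one]
      _ = (∫⁻ x, (‖g x‖₊ : ℝ≥0∞) ^ r ∂(M • μ)) ^ (1 / r) := by
          rw [lintegral_smul_measure, hint, smul_eq_mul]
      _ ≤ (∫⁻ x, (‖g x‖₊ : ℝ≥0∞) ^ r ∂(Measure.map (f^[n]) μ)) ^ (1 / r) :=
          ENNReal.rpow_le_rpow (lintegral_mono' hle le_rfl) (by positivity)
      _ = (∫⁻ x, (‖g (f^[n] x)‖₊ : ℝ≥0∞) ^ r ∂μ) ^ (1 / r) := by
          rw [lintegral_map hgm (hf_meas.iterate n)]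
      _ = eLpNorm (g ∘ (f^[n])) p μ := by
          rw [eLpNorm_eq_lintegral_rpow_enorm_toReal hp0 hpT]
          rfl
      _ = eLpNorm (φ ∘ (f^[n])) p μ := (eLpNorm_congr_ae hae).symm
end

section
/- Let $(X,\mathcal{B},\mu,f,T_f)$ be a composition dynamical system with $f$ invertible and $T_f$ invertible on $L^p(X)$, $1\le p<\infty$. Then $T_f$ is uniformly expansive if and only if $\mathcal{B}^+=\{B:0<\mu(B)<\infty\}$ can be written as a union $\mathcal{B}^+=\mathcal{B}^+_{\mathcal{A}}\cup\mathcal{B}^+_{\mathcal{C}}$ such that $\mu(f^n(B))/\mu(B)\to\infty$ uniformly on $\mathcal{B}^+_{\mathcal{A}}$ and $\mu(f^{-n}(B))/\mu(B)\to\infty$ uniformly on $\mathcal{B}^+_{\mathcal{C}}$. -/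
open MeasureTheory Filter Set ENNReal

section Helpers

variable {X : Type*} [MeasurableSpace X] {μ : Measure X}

private lemma perm_pow_meas (e : Equiv.Perm X) (he : Measurable e) (he' : Measurable e.symm) :
    ∀ k : ℤ, Measurable ⇑(e ^ k) := by
  have hnat : ∀ n : ℕ, Measurable ⇑(e ^ n) := by
    intro n
    induction n with
    | zero => simpa using measurable_id
    | succ n ih =>
      have h : ⇑(e ^ (n + 1)) = ⇑(e ^ n) ∘ ⇑e := by
        funext x; simp [pow_succ, Equiv.Perm.mul_apply]
      rw [h]; exact ih.comp he
  have hnat' : ∀ n : ℕ, Measurable ⇑((e ^ n)⁻¹) := by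
    intro n
    induction n with
    | zero => simpa using measurable_id
    | succ n ih =>
      have h : ⇑((e ^ (n + 1))⁻¹) = ⇑((e ^ n)⁻¹) ∘ ⇑e.symm := by
        funext x
        simp [pow_succ', mul_inv_rev, Equiv.Perm.mul_apply, Equiv.Perm.inv_def]
      rw [h]; exact ih.comp he'
  intro k
  rcases k with n | n
  · simpa using hnat n
  · rw [zpow_negSucc]
    exact hnat' (n + 1)

private lemma perm_symm_pre (σ : Equiv.Perm X) (B : Set X) :
    ⇑σ⁻¹ ⁻¹' B = ⇑σ '' B := by
  rw [Equiv.Perm.inv_def, ← Equiv.image_eq_preimage_symm]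

private lemma null_pre (e : Equiv.Perm X) (he : Measurable e) (he' : Measurable e.symm)
    {c c' : ℝ≥0∞}
    (hb : ∀ B : Set X, MeasurableSet B → μ (⇑e ⁻¹' B) ≤ c * μ B)
    (hb' : ∀ B : Set X, MeasurableSet B → μ (⇑e '' B) ≤ c' * μ B) :
    ∀ k : ℤ, ∀ B : Set X, μ B = 0 → μ (⇑(e ^ k) ⁻¹' B) = 0 := by
  have hmB : ∀ n : ℕ, ∀ B : Set X, MeasurableSet B → MeasurableSet (⇑(e ^ (n : ℤ)) ⁻¹' B) :=
    fun n B hB => hB.preimage (perm_pow_meas e he he' n)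
  have hpre : ∀ n : ℕ, ∀ B : Set X, MeasurableSet B → μ B = 0 → μ (⇑(e ^ n) ⁻¹' B) = 0 := by
    intro n
    induction n with
    | zero => intro B _ h0; simpa using h0
    | succ n ih =>
      intro B hB h0
      have h : ⇑(e ^ (n + 1)) ⁻¹' B = ⇑e ⁻¹' (⇑(e ^ n) ⁻¹' B) := by
        ext x; simp [pow_succ, Equiv.Perm.mul_apply]
      rw [h]
      have hm : MeasurableSet (⇑(e ^ n) ⁻¹' B) := by
        simpa using hmB n B hB
      have := hb _ hm
      rw [ih B hB h0, mul_zero] at this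
      exact le_antisymm this (zero_le)
  have himg : ∀ n : ℕ, ∀ B : Set X, MeasurableSet B → μ B = 0 → μ (⇑(e ^ n) '' B) = 0 := by
    intro n
    induction n with
    | zero => intro B _ h0; simpa using h0
    | succ n ih =>
      intro B hB h0
      have h : ⇑(e ^ (n + 1)) '' B = ⇑e '' (⇑(e ^ n) '' B) := by
        ext x
        simp only [pow_succ', Set.mem_image, Equiv.Perm.mul_apply]
        constructor
        · rintro ⟨y, hy, rfl⟩; exact ⟨e ^ n • y, ⟨y, hy, rfl⟩, rfl⟩
        · rintro ⟨z, ⟨y, hy, rfl⟩, rfl⟩; exact ⟨y, hy, rfl⟩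
      rw [h]
      have hm : MeasurableSet (⇑(e ^ n) '' B) := by
        rw [← perm_symm_pre]
        exact hB.preimage (by simpa using perm_pow_meas e he he' (-(n : ℤ)))
      have := hb' _ hm
      rw [ih B hB h0, mul_zero] at this
      exact le_antisymm this (zero_le)
  -- general k, general B
  intro k B h0
  have hsub : ⇑(e ^ k) ⁻¹' B ⊆ ⇑(e ^ k) ⁻¹' (toMeasurable μ B) :=
    Set.preimage_mono (subset_toMeasurable μ B)
  refine measure_mono_null hsub ?_
  have hmeas : MeasurableSet (toMeasurable μ B) := measurableSet_toMeasurable μ B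
  have h0' : μ (toMeasurable μ B) = 0 := by rwa [measure_toMeasurable]
  rcases k with n | n
  · have : ⇑(e ^ (Int.ofNat n)) = ⇑(e ^ n) := by norm_cast
    rw [this]
    exact hpre n _ hmeas h0'
  · rw [zpow_negSucc, perm_symm_pre]
    exact himg (n + 1) _ hmeas h0'

private lemma ae_comp_perm (e : Equiv.Perm X) (he : Measurable e) (he' : Measurable e.symm)
    {c c' : ℝ≥0∞}
    (hb : ∀ B : Set X, MeasurableSet B → μ (⇑e ⁻¹' B) ≤ c * μ B)
    (hb' : ∀ B : Set X, MeasurableSet B → μ (⇑e '' B) ≤ c' * μ B)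
    (k : ℤ) {φ ψ : X → ℂ} (h : φ =ᵐ[μ] ψ) :
    φ ∘ ⇑(e ^ k) =ᵐ[μ] ψ ∘ ⇑(e ^ k) := by
  have h0 : μ {x | φ x ≠ ψ x} = 0 := h
  have : μ (⇑(e ^ k) ⁻¹' {x | φ x ≠ ψ x}) = 0 :=
    null_pre e he he' hb hb' k _ h0
  exact measure_mono_null (fun x hx => hx) this

private noncomputable def vfun (ψ : X → ℂ) (q : ℝ) (x : X) : ℝ≥0∞ := (‖ψ x‖₊ : ℝ≥0∞) ^ q

private def Eset (ψ : X → ℂ) (q : ℝ) (k : ℤ) : Set X :=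
  {x | (2 : ℝ≥0∞) ^ k ≤ vfun ψ q x ∧ vfun ψ q x < 2 ^ (k + 1)}

private lemma vfun_meas {ψ : X → ℂ} (hψ : Measurable ψ) (q : ℝ) :
    Measurable (vfun ψ q) :=
  ENNReal.continuous_rpow_const.measurable.comp hψ.nnnorm.coe_nnreal_ennreal

private lemma Eset_meas {ψ : X → ℂ} (hψ : Measurable ψ) (q : ℝ) (k : ℤ) :
    MeasurableSet (Eset ψ q k) := by
  have h : Eset ψ q k = vfun ψ q ⁻¹' Set.Ico ((2:ℝ≥0∞) ^ k) (2 ^ (k + 1)) := rfl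
  rw [h]
  exact vfun_meas hψ q measurableSet_Ico

private lemma Eset_disj (ψ : X → ℂ) (q : ℝ) :
    Pairwise (Function.onFun Disjoint (Eset ψ q)) := by
  have key : ∀ k k' : ℤ, k < k' → Disjoint (Eset ψ q k) (Eset ψ q k') := by
    intro k k' hlt
    rw [Set.disjoint_left]
    rintro x ⟨_, h2⟩ ⟨h3, _⟩
    exact absurd ((h2.trans_le (ENNReal.zpow_le_of_le one_le_two (by omega))).trans_le h3)
      (lt_irrefl _)
  intro k k' hne
  rcases hne.lt_or_gt with h | h
  · exact key _ _ h
  · exact (key _ _ h).symm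

private lemma Eset_markov {ψ : X → ℂ} (hψ : Measurable ψ) {q : ℝ}
    (hint : ∫⁻ x, vfun ψ q x ∂μ = 1) (k : ℤ) : μ (Eset ψ q k) ≠ ⊤ := by
  have h2k : ((2:ℝ≥0∞) ^ k) ≠ 0 := (ENNReal.zpow_pos two_ne_zero ENNReal.ofNat_ne_top k).ne'
  have hmono : μ (Eset ψ q k) ≤ μ {x | (2:ℝ≥0∞) ^ k ≤ vfun ψ q x} :=
    measure_mono fun x hx => hx.1
  have hmar := mul_meas_ge_le_lintegral₀ (μ := μ) (vfun_meas hψ q).aemeasurable ((2:ℝ≥0∞) ^ k)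
  rw [hint] at hmar
  intro htop
  have heq : μ {x | (2:ℝ≥0∞) ^ k ≤ vfun ψ q x} = ⊤ := top_le_iff.1 (htop ▸ hmono)
  rw [heq, ENNReal.mul_top h2k] at hmar
  exact absurd hmar (by simp)

private lemma mass_lower {ψ : X → ℂ} (hψ : Measurable ψ) {q : ℝ} (hq : 0 ≤ q)
    (hint : ∫⁻ x, vfun ψ q x ∂μ = 1) :
    (2:ℝ≥0∞)⁻¹ ≤ ∑' k : ℤ, 2 ^ k * μ (Eset ψ q k) := by
  have hEm : ∀ k : ℤ, MeasurableSet (Eset ψ q k) := Eset_meas hψ q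
  have h1 : (1:ℝ≥0∞) ≤ 2 * ∑' k : ℤ, 2 ^ k * μ (Eset ψ q k) := by
    calc (1:ℝ≥0∞) = ∫⁻ x in ⋃ k : ℤ, Eset ψ q k, vfun ψ q x ∂μ := by
          rw [← lintegral_indicator (MeasurableSet.iUnion hEm), ← hint]
          apply lintegral_congr
          intro x
          by_cases hx : x ∈ ⋃ k : ℤ, Eset ψ q k
          · rw [Set.indicator_of_mem hx]
          · rw [Set.indicator_of_notMem hx]
            by_contra h
            have hne : vfun ψ q x ≠ 0 := fun h0 => h h0
            have hnT : vfun ψ q x ≠ ⊤ :=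
              ENNReal.rpow_ne_top_of_nonneg hq ENNReal.coe_ne_top
            obtain ⟨k, hk⟩ := ENNReal.exists_mem_Ico_zpow hne hnT one_lt_two
              ENNReal.ofNat_ne_top
            exact hx (Set.mem_iUnion.2 ⟨k, hk.1, hk.2⟩)
      _ = ∑' k : ℤ, ∫⁻ x in Eset ψ q k, vfun ψ q x ∂μ := lintegral_iUnion hEm (Eset_disj ψ q) _
      _ ≤ ∑' k : ℤ, 2 ^ (k + 1) * μ (Eset ψ q k) := by
          refine ENNReal.tsum_le_tsum fun k => ?_
          calc ∫⁻ x in Eset ψ q k, vfun ψ q x ∂μ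
              ≤ ∫⁻ _ in Eset ψ q k, 2 ^ (k + 1) ∂μ :=
                lintegral_mono_ae ((ae_restrict_iff' (hEm k)).2
                  (ae_of_all _ fun x hx => hx.2.le))
            _ = 2 ^ (k + 1) * μ (Eset ψ q k) := setLIntegral_const _ _
      _ = 2 * ∑' k : ℤ, 2 ^ k * μ (Eset ψ q k) := by
          rw [← ENNReal.tsum_mul_left]
          congr 1
          funext k
          rw [ENNReal.zpow_add two_ne_zero ENNReal.ofNat_ne_top k 1, zpow_one, mul_comm ((2:ℝ≥0∞)^k) 2,
            mul_assoc]
  have h2 := mul_le_mul_right h1 (2:ℝ≥0∞)⁻¹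
  rwa [← mul_assoc, ENNReal.inv_mul_cancel two_ne_zero ENNReal.ofNat_ne_top, one_mul, mul_one] at h2

private lemma grow_bound {ψ : X → ℂ} (hψ : Measurable ψ) (q : ℝ)
    {T : X → X} (hT : Measurable T) (S : Set ℤ) (M' : ℝ≥0∞)
    (hS : ∀ k ∈ S, M' * μ (Eset ψ q k) ≤ μ (T ⁻¹' Eset ψ q k)) :
    M' * ∑' k : S, 2 ^ (k : ℤ) * μ (Eset ψ q k) ≤ ∫⁻ x, vfun ψ q (T x) ∂μ := by
  have hEm : ∀ k : ℤ, MeasurableSet (Eset ψ q k) := Eset_meas hψ q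
  have hdisj : Pairwise (Function.onFun Disjoint (fun k : S => T ⁻¹' Eset ψ q (k : ℤ))) := by
    intro k k' hne
    exact Disjoint.preimage T (Eset_disj ψ q (Subtype.coe_injective.ne hne))
  calc M' * ∑' k : S, 2 ^ (k : ℤ) * μ (Eset ψ q k)
      = ∑' k : S, M' * (2 ^ (k : ℤ) * μ (Eset ψ q (k : ℤ))) := ENNReal.tsum_mul_left.symm
    _ ≤ ∑' k : S, ∫⁻ x in T ⁻¹' Eset ψ q (k : ℤ), vfun ψ q (T x) ∂μ := by
        refine ENNReal.tsum_le_tsum fun k => ?_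
        calc M' * (2 ^ (k : ℤ) * μ (Eset ψ q (k : ℤ)))
            = 2 ^ (k : ℤ) * (M' * μ (Eset ψ q (k : ℤ))) := by ring
          _ ≤ 2 ^ (k : ℤ) * μ (T ⁻¹' Eset ψ q (k : ℤ)) :=
              mul_le_mul_right (hS _ k.2) _
          _ = ∫⁻ _ in T ⁻¹' Eset ψ q (k : ℤ), (2:ℝ≥0∞) ^ (k : ℤ) ∂μ :=
              (setLIntegral_const _ _).symm
          _ ≤ ∫⁻ x in T ⁻¹' Eset ψ q (k : ℤ), vfun ψ q (T x) ∂μ :=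
              lintegral_mono_ae ((ae_restrict_iff' (hT (hEm _))).2
                (ae_of_all _ fun x hx => hx.1))
    _ = ∫⁻ x in ⋃ k : S, T ⁻¹' Eset ψ q (k : ℤ), vfun ψ q (T x) ∂μ :=
        (lintegral_iUnion (fun k => hT (hEm _)) hdisj _).symm
    _ ≤ ∫⁻ x, vfun ψ q (T x) ∂μ := setLIntegral_le_lintegral _ _

end Helpers

/-- Theorem E(4): `T_f` is uniformly expansive iff `𝓑⁺` splits as
`𝓑⁺ = 𝓑⁺_𝓐 ∪ 𝓑⁺_𝓒` with `μ(fⁿ(B))/μ(B) → ∞` uniformly on `𝓑⁺_𝓐` and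
`μ(f⁻ⁿ(B))/μ(B) → ∞` uniformly on `𝓑⁺_𝓒`. -/
theorem stmt_4
    {X : Type*} [MeasurableSpace X] (μ : Measure X) [SigmaFinite μ]
    (p : ℝ≥0∞) (hp1 : 1 ≤ p) (hpT : p ≠ ⊤)
    (e : Equiv.Perm X) (he : Measurable e) (he' : Measurable e.symm)
    (c c' : ℝ≥0∞) (hc : 0 < c) (hcT : c ≠ ⊤) (hc' : 0 < c') (hc'T : c' ≠ ⊤)
    (hb : ∀ B : Set X, MeasurableSet B → μ (⇑e ⁻¹' B) ≤ c * μ B)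
    (hb' : ∀ B : Set X, MeasurableSet B → μ (⇑e '' B) ≤ c' * μ B) :
    -- uniform expansivity: the unit sphere of `L^p` splits as `𝓐 ∪ 𝓒`
    (∃ A C : Set (X → ℂ),
        {φ : X → ℂ | MemLp φ p μ ∧ eLpNorm φ p μ = 1} = A ∪ C ∧
        (∀ M : ℝ≥0∞, M ≠ ⊤ → ∃ N : ℕ, ∀ n ≥ N,
          (∀ φ ∈ A, M ≤ eLpNorm (φ ∘ ⇑(e ^ (n : ℤ))) p μ) ∧
          (∀ φ ∈ C, M ≤ eLpNorm (φ ∘ ⇑(e ^ (-(n : ℤ)))) p μ))) ↔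
    -- splitting of `𝓑⁺`
    (∃ 𝓐 𝓒 : Set (Set X),
        {B : Set X | MeasurableSet B ∧ 0 < μ B ∧ μ B ≠ ⊤} = 𝓐 ∪ 𝓒 ∧
        (∀ M : ℝ≥0∞, M ≠ ⊤ → ∃ N : ℕ, ∀ n ≥ N,
          (∀ B ∈ 𝓐, M * μ B ≤ μ (⇑(e ^ (n : ℤ)) '' B)) ∧
          (∀ B ∈ 𝓒, M * μ B ≤ μ (⇑(e ^ (n : ℤ)) ⁻¹' B)))) := by
  have hp0 : p ≠ 0 := (zero_lt_one.trans_le hp1).ne'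
  set q := p.toReal with hqdef
  have hq0 : 0 < q := ENNReal.toReal_pos hp0 hpT
  set γ := 1 / q with hγdef
  have hγ0 : 0 < γ := by rw [hγdef]; positivity
  have hcan : ∀ a : ℝ≥0∞, (a ^ γ) ^ q = a := by
    intro a
    rw [← ENNReal.rpow_mul, hγdef, one_div, inv_mul_cancel₀ hq0.ne', ENNReal.rpow_one]
  have hkey : ∀ M x s : ℝ≥0∞, x ≠ 0 → x ≠ ⊤ →
      M ^ γ ≤ (x ^ γ)⁻¹ * s ^ γ → M * x ≤ s := by
    intro M x s hx0 hxT h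
    rw [mul_comm, ← div_eq_mul_inv] at h
    have h2 : M ^ γ * x ^ γ ≤ s ^ γ :=
      (ENNReal.le_div_iff_mul_le (Or.inl (ENNReal.rpow_pos (pos_iff_ne_zero.2 hx0) hxT).ne')
        (Or.inl (ENNReal.rpow_ne_top_of_nonneg hγ0.le hxT))).1 h
    rw [← ENNReal.mul_rpow_of_nonneg _ _ hγ0.le] at h2
    have h3 := ENNReal.rpow_le_rpow h2 hq0.le
    rwa [hcan, hcan] at h3
  have hmeask : ∀ k : ℤ, Measurable ⇑(e ^ k) := perm_pow_meas e he he'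
  have hnormInd : ∀ (s : Set X), MeasurableSet s → ∀ r : ℝ, 0 ≤ r →
      eLpNorm (s.indicator fun _ => (r : ℂ)) p μ = ENNReal.ofReal r * μ s ^ γ := by
    intro s hs r hr
    rw [eLpNorm_indicator_const hs hp0 hpT]
    congr 1
    rw [← ofReal_norm_eq_enorm, Complex.norm_of_nonneg hr]
  constructor
  · -- uniform expansivity → splitting of 𝓑⁺
    rintro ⟨A, C, hAC, hgrow⟩
    set ind : Set X → (X → ℂ) :=
      fun B => B.indicator (fun _ => (((μ B ^ γ).toReal⁻¹ : ℝ) : ℂ)) with hinddef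
    have hofReal : ∀ B : Set X, 0 < μ B → μ B ≠ ⊤ →
        ENNReal.ofReal ((μ B ^ γ).toReal⁻¹) = (μ B ^ γ)⁻¹ := by
      intro B h0 hT
      have hx0 : μ B ^ γ ≠ 0 := (ENNReal.rpow_pos h0 hT).ne'
      rw [← ENNReal.toReal_inv, ENNReal.ofReal_toReal (ENNReal.inv_ne_top.2 hx0)]
    have hcompnorm : ∀ (B : Set X), MeasurableSet B → 0 < μ B → μ B ≠ ⊤ → ∀ k : ℤ,
        eLpNorm (ind B ∘ ⇑(e ^ k)) p μ = (μ B ^ γ)⁻¹ * μ (⇑(e ^ k) ⁻¹' B) ^ γ := by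
      intro B hB h0 hT k
      have hco : ind B ∘ ⇑(e ^ k)
          = (⇑(e ^ k) ⁻¹' B).indicator fun _ => (((μ B ^ γ).toReal⁻¹ : ℝ) : ℂ) := by
        funext x
        exact (Set.indicator_comp_right (⇑(e ^ k))
          (g := fun _ => (((μ B ^ γ).toReal⁻¹ : ℝ) : ℂ))).symm
      rw [hco, hnormInd _ (hB.preimage (hmeask k)) _ (by positivity), hofReal B h0 hT]
    have hsphere : ∀ B : Set X, MeasurableSet B → 0 < μ B → μ B ≠ ⊤ →
        MemLp (ind B) p μ ∧ eLpNorm (ind B) p μ = 1 := by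
      intro B hB h0 hT
      have hx0 : μ B ^ γ ≠ 0 := (ENNReal.rpow_pos h0 hT).ne'
      have hxT : μ B ^ γ ≠ ⊤ := ENNReal.rpow_ne_top_of_nonneg hγ0.le hT
      refine ⟨memLp_indicator_const p hB _ (Or.inr hT), ?_⟩
      rw [hinddef]
      simp only []
      rw [hnormInd B hB _ (by positivity), hofReal B h0 hT, ENNReal.inv_mul_cancel hx0 hxT]
    refine ⟨{B | (MeasurableSet B ∧ 0 < μ B ∧ μ B ≠ ⊤) ∧ ind B ∈ C},
            {B | (MeasurableSet B ∧ 0 < μ B ∧ μ B ≠ ⊤) ∧ ind B ∈ A}, ?_, ?_⟩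
    · ext B
      simp only [Set.mem_setOf_eq, Set.mem_union]
      constructor
      · rintro ⟨hB, h0, hT⟩
        have hmem : ind B ∈ A ∪ C := by
          rw [← hAC]
          exact ⟨(hsphere B hB h0 hT).1, (hsphere B hB h0 hT).2⟩
        rcases hmem with h | h
        · exact Or.inr ⟨⟨hB, h0, hT⟩, h⟩
        · exact Or.inl ⟨⟨hB, h0, hT⟩, h⟩
      · rintro (⟨h, _⟩ | ⟨h, _⟩) <;> exact h
    · intro M hM
      obtain ⟨N, hN⟩ := hgrow (M ^ γ) (ENNReal.rpow_ne_top_of_nonneg hγ0.le hM)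
      refine ⟨N, fun n hn => ⟨?_, ?_⟩⟩
      · rintro B ⟨⟨hB, h0, hT⟩, hBC⟩
        have hM' := (hN n hn).2 _ hBC
        rw [hcompnorm B hB h0 hT (-(n : ℤ))] at hM'
        have := hkey M (μ B) _ h0.ne' hT hM'
        rwa [show (e ^ (-(n : ℤ))) = (e ^ (n : ℤ))⁻¹ from zpow_neg e _, perm_symm_pre] at this
      · rintro B ⟨⟨hB, h0, hT⟩, hBA⟩
        have hM' := (hN n hn).1 _ hBA
        rw [hcompnorm B hB h0 hT (n : ℤ)] at hM'
        exact hkey M (μ B) _ h0.ne' hT hM'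
  · -- splitting of 𝓑⁺ → uniform expansivity
    rintro ⟨𝓐, 𝓒, hAC, hgrow⟩
    classical
    set rep : (X → ℂ) → (X → ℂ) :=
      fun φ => if h : AEStronglyMeasurable φ μ then h.mk φ else φ with hrepdef
    have hrep : ∀ φ : X → ℂ, MemLp φ p μ → Measurable (rep φ) ∧ φ =ᵐ[μ] rep φ := by
      intro φ hφ
      have h := hφ.aestronglyMeasurable
      rw [hrepdef]
      simp only [dif_pos h]
      exact ⟨h.stronglyMeasurable_mk.measurable, h.ae_eq_mk⟩
    have hcan' : ∀ a : ℝ≥0∞, (a ^ q) ^ γ = a := by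
      intro a
      rw [← ENNReal.rpow_mul, hγdef, mul_one_div, div_self hq0.ne', ENNReal.rpow_one]
    have hint : ∀ φ : X → ℂ, MemLp φ p μ → eLpNorm φ p μ = 1 →
        ∫⁻ x, vfun (rep φ) q x ∂μ = 1 := by
      intro φ hφ h1
      have h2 : eLpNorm (rep φ) p μ = 1 := by
        rw [← eLpNorm_congr_ae (hrep φ hφ).2]; exact h1
      rw [eLpNorm_eq_lintegral_rpow_enorm_toReal hp0 hpT, ← hqdef, ← hγdef] at h2
      have h3 := congrArg (· ^ q) h2
      rw [hcan, ENNReal.one_rpow] at h3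
      exact h3
    have hsplit : ∀ ψ : X → ℂ, Measurable ψ → (∫⁻ x, vfun ψ q x ∂μ = 1) →
        (2:ℝ≥0∞)⁻¹ ≤ (∑' k : {k : ℤ | Eset ψ q k ∈ 𝓒}, 2 ^ (k:ℤ) * μ (Eset ψ q k)) +
          ∑' k : {k : ℤ | Eset ψ q k ∈ 𝓐}, 2 ^ (k:ℤ) * μ (Eset ψ q k) := by
      intro ψ hψ hi
      refine le_trans (mass_lower hψ hq0.le hi) ?_
      calc ∑' k : ℤ, 2 ^ k * μ (Eset ψ q k)
          ≤ ∑' k : ℤ, ({k : ℤ | Eset ψ q k ∈ 𝓒}.indicator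
              (fun k => 2 ^ k * μ (Eset ψ q k)) k
            + {k : ℤ | Eset ψ q k ∈ 𝓐}.indicator
              (fun k => 2 ^ k * μ (Eset ψ q k)) k) := by
            refine ENNReal.tsum_le_tsum fun k => ?_
            by_cases h0 : μ (Eset ψ q k) = 0
            · simp [h0]
            · have hmem : Eset ψ q k ∈ 𝓐 ∪ 𝓒 := by
                rw [← hAC]
                exact ⟨Eset_meas hψ q k, pos_iff_ne_zero.2 h0, Eset_markov hψ hi k⟩
              rcases hmem with h | h
              · refine le_add_of_nonneg_of_le (zero_le) ?_
                rw [Set.indicator_of_mem (show k ∈ {k : ℤ | Eset ψ q k ∈ 𝓐} from h)]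
              · refine le_add_of_le_of_nonneg ?_ (zero_le)
                rw [Set.indicator_of_mem (show k ∈ {k : ℤ | Eset ψ q k ∈ 𝓒} from h)]
        _ = _ := by
            rw [ENNReal.tsum_add, ← tsum_subtype, ← tsum_subtype]
    have h44 : (4:ℝ≥0∞)⁻¹ + 4⁻¹ = 2⁻¹ := by
      rw [(show (4:ℝ≥0∞) = ((4:NNReal):ℝ≥0∞) by norm_num),
        (show (2:ℝ≥0∞) = ((2:NNReal):ℝ≥0∞) by norm_num),
        ← ENNReal.coe_inv (by norm_num), ← ENNReal.coe_inv (by norm_num), ← ENNReal.coe_add,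
        ENNReal.coe_inj]
      rw [NNReal.eq_iff]
      norm_num
    refine ⟨{φ | (MemLp φ p μ ∧ eLpNorm φ p μ = 1) ∧
        (4:ℝ≥0∞)⁻¹ ≤ ∑' k : {k : ℤ | Eset (rep φ) q k ∈ 𝓒},
          2 ^ (k:ℤ) * μ (Eset (rep φ) q k)},
      {φ | (MemLp φ p μ ∧ eLpNorm φ p μ = 1) ∧
        ¬ (4:ℝ≥0∞)⁻¹ ≤ ∑' k : {k : ℤ | Eset (rep φ) q k ∈ 𝓒},
          2 ^ (k:ℤ) * μ (Eset (rep φ) q k)}, ?_, ?_⟩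
    · ext φ
      simp only [Set.mem_setOf_eq, Set.mem_union]
      constructor
      · intro h
        by_cases h4 : (4:ℝ≥0∞)⁻¹ ≤ ∑' k : {k : ℤ | Eset (rep φ) q k ∈ 𝓒},
            2 ^ (k:ℤ) * μ (Eset (rep φ) q k)
        · exact Or.inl ⟨h, h4⟩
        · exact Or.inr ⟨h, h4⟩
      · rintro (⟨h, _⟩ | ⟨h, _⟩) <;> exact h
    · intro M hM
      have hMT : (4:ℝ≥0∞) * M ^ q ≠ ⊤ :=
        ENNReal.mul_ne_top (by norm_num) (ENNReal.rpow_ne_top_of_nonneg hq0.le hM)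
      obtain ⟨N, hN⟩ := hgrow (4 * M ^ q) hMT
      have hMeq : M ^ q = 4 * M ^ q * 4⁻¹ := by
        rw [mul_comm (4:ℝ≥0∞) (M ^ q), mul_assoc,
          ENNReal.mul_inv_cancel (by norm_num) (by norm_num), mul_one]
      refine ⟨N, fun n hn => ⟨?_, ?_⟩⟩
      · rintro φ ⟨⟨hφmem, hφ1⟩, hφC⟩
        obtain ⟨hψm, hψae⟩ := hrep φ hφmem
        have hi := hint φ hφmem hφ1
        rw [eLpNorm_congr_ae (ae_comp_perm e he he' hb hb' (n:ℤ) hψae),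
          eLpNorm_eq_lintegral_rpow_enorm_toReal hp0 hpT, ← hqdef, ← hγdef]
        have hS : ∀ k ∈ {k : ℤ | Eset (rep φ) q k ∈ 𝓒},
            (4 * M ^ q) * μ (Eset (rep φ) q k)
              ≤ μ (⇑(e ^ (n:ℤ)) ⁻¹' Eset (rep φ) q k) :=
          fun k hk => (hN n hn).2 _ hk
        have hg := grow_bound hψm q (hmeask (n:ℤ)) _ _ hS
        have hmq : M ^ q ≤ ∫⁻ x, vfun (rep φ) q (⇑(e ^ (n:ℤ)) x) ∂μ := by
          refine le_trans ?_ hg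
          calc M ^ q = 4 * M ^ q * 4⁻¹ := hMeq
            _ ≤ 4 * M ^ q * _ := mul_le_mul_right hφC _
        calc M = (M ^ q) ^ γ := (hcan' M).symm
          _ ≤ _ := ENNReal.rpow_le_rpow hmq hγ0.le
      · rintro φ ⟨⟨hφmem, hφ1⟩, hφnC⟩
        obtain ⟨hψm, hψae⟩ := hrep φ hφmem
        have hi := hint φ hφmem hφ1
        have hφA : (4:ℝ≥0∞)⁻¹ ≤ ∑' k : {k : ℤ | Eset (rep φ) q k ∈ 𝓐},
            2 ^ (k:ℤ) * μ (Eset (rep φ) q k) := by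
          by_contra h'
          have hs := hsplit (rep φ) hψm hi
          have hlt := ENNReal.add_lt_add (lt_of_not_ge hφnC) (lt_of_not_ge h')
          rw [h44] at hlt
          exact absurd hs (not_le.2 hlt)
        rw [eLpNorm_congr_ae (ae_comp_perm e he he' hb hb' (-(n:ℤ)) hψae),
          eLpNorm_eq_lintegral_rpow_enorm_toReal hp0 hpT, ← hqdef, ← hγdef]
        have hS : ∀ k ∈ {k : ℤ | Eset (rep φ) q k ∈ 𝓐},
            (4 * M ^ q) * μ (Eset (rep φ) q k)
              ≤ μ (⇑(e ^ (-(n:ℤ))) ⁻¹' Eset (rep φ) q k) := by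
          intro k hk
          rw [(show (e ^ (-(n : ℤ))) = (e ^ (n : ℤ))⁻¹ from zpow_neg e _), perm_symm_pre]
          exact (hN n hn).1 _ hk
        have hg := grow_bound hψm q (hmeask (-(n:ℤ))) _ _ hS
        have hmq : M ^ q ≤ ∫⁻ x, vfun (rep φ) q (⇑(e ^ (-(n:ℤ))) x) ∂μ := by
          refine le_trans ?_ hg
          calc M ^ q = 4 * M ^ q * 4⁻¹ := hMeq
            _ ≤ 4 * M ^ q * _ := mul_le_mul_right hφA _
        calc M = (M ^ q) ^ γ := (hcan' M).symm
          _ ≤ _ := ENNReal.rpow_le_rpow hmq hγ0.le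
end

section
/- Let $(X,\mathcal{B},\mu,f,T_f)$ be a dissipative composition dynamical system of bounded distortion generated by $W$. Then $T_f$ is positively expansive if and only if $\sup_{n\in\mathbb{N}}\mu(f^{-n}(W))=\infty$. -/
open MeasureTheory Filter Set ENNReal

section Aux
variable {X : Type*} [MeasurableSpace X]

lemma aux_meas_zpow (e : Equiv.Perm X) (he : Measurable e) (he' : Measurable e.symm) :
    ∀ j : ℤ, Measurable ⇑(e ^ j) := by
  intro j
  induction j using Int.induction_on with
  | zero => simpa using measurable_id
  | succ n ih =>
      rw [zpow_add_one]
      simpa [Equiv.Perm.coe_mul] using ih.comp he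
  | pred n ih =>
      rw [zpow_sub_one]
      have h1 : Measurable ⇑(e⁻¹) := he'
      simpa [Equiv.Perm.coe_mul] using ih.comp h1

lemma aux_meas_zpow_symm (e : Equiv.Perm X) (he : Measurable e) (he' : Measurable e.symm)
    (j : ℤ) : Measurable ⇑(e ^ j).symm := by
  have := aux_meas_zpow e he he' (-j)
  rwa [zpow_neg, Equiv.Perm.inv_def] at this

lemma aux_img_meas (e : Equiv.Perm X) (he : Measurable e) (he' : Measurable e.symm)
    (j : ℤ) {A : Set X} (hA : MeasurableSet A) : MeasurableSet (⇑(e ^ j) '' A) := by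
  rw [Equiv.image_eq_preimage_symm]
  exact aux_meas_zpow_symm e he he' j hA

omit [MeasurableSpace X] in
lemma aux_preimage_eq_image (e : Equiv.Perm X) (j : ℤ) (T : Set X) :
    ⇑(e ^ j) ⁻¹' T = ⇑(e ^ (-j)) '' T := by
  rw [zpow_neg, Equiv.image_eq_preimage_symm, Equiv.Perm.inv_def, Equiv.symm_symm]

lemma aux_hlow (μ : Measure X) (e : Equiv.Perm X) (he : Measurable e) (he' : Measurable e.symm)
    (c c' : ℝ≥0∞) (hc : 0 < c) (hcT : c ≠ ⊤) (hc' : 0 < c') (hc'T : c' ≠ ⊤)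
    (hb : ∀ B : Set X, MeasurableSet B → μ (⇑e ⁻¹' B) ≤ c * μ B)
    (hb' : ∀ B : Set X, MeasurableSet B → μ (⇑e '' B) ≤ c' * μ B)
    (j : ℤ) : ∃ γ : ℝ≥0∞, 0 < γ ∧ ∀ A : Set X, MeasurableSet A →
      γ * μ A ≤ μ (⇑(e ^ j) '' A) := by
  have key1 : ∀ S : Set X, MeasurableSet S → c⁻¹ * μ S ≤ μ (⇑e '' S) := by
    intro S hS
    have hImg : MeasurableSet (⇑e '' S) := by
      rw [Equiv.image_eq_preimage_symm]; exact he' hS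
    have h1 := hb _ hImg
    rw [Equiv.preimage_image] at h1
    calc c⁻¹ * μ S ≤ c⁻¹ * (c * μ (⇑e '' S)) := mul_le_mul_right h1 _
      _ = (c⁻¹ * c) * μ (⇑e '' S) := (mul_assoc _ _ _).symm
      _ = μ (⇑e '' S) := by rw [ENNReal.inv_mul_cancel hc.ne' hcT, one_mul]
  have key2 : ∀ S : Set X, MeasurableSet S → c'⁻¹ * μ S ≤ μ (⇑e ⁻¹' S) := by
    intro S hS
    have h1 := hb' _ (he hS)
    rw [Equiv.image_preimage] at h1
    calc c'⁻¹ * μ S ≤ c'⁻¹ * (c' * μ (⇑e ⁻¹' S)) := mul_le_mul_right h1 _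
      _ = (c'⁻¹ * c') * μ (⇑e ⁻¹' S) := (mul_assoc _ _ _).symm
      _ = μ (⇑e ⁻¹' S) := by rw [ENNReal.inv_mul_cancel hc'.ne' hc'T, one_mul]
  induction j using Int.induction_on with
  | zero => exact ⟨1, one_pos, by simp⟩
  | succ n ih =>
      obtain ⟨γ, hγ, hγle⟩ := ih
      refine ⟨c⁻¹ * γ, ENNReal.mul_pos (ENNReal.inv_ne_zero.mpr hcT) hγ.ne', fun A hA => ?_⟩
      have himg : ⇑(e ^ ((n : ℤ) + 1)) '' A = ⇑e '' (⇑(e ^ (n : ℤ)) '' A) := by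
        rw [show ((n:ℤ)+1) = 1 + (n:ℤ) by ring, zpow_add, zpow_one, Equiv.Perm.coe_mul,
          Set.image_comp]
      rw [himg, mul_assoc]
      calc c⁻¹ * (γ * μ A) ≤ c⁻¹ * μ (⇑(e ^ (n : ℤ)) '' A) :=
            mul_le_mul_right (hγle A hA) _
        _ ≤ μ (⇑e '' (⇑(e ^ (n : ℤ)) '' A)) :=
            key1 _ (aux_img_meas e he he' _ hA)
  | pred n ih =>
      obtain ⟨γ, hγ, hγle⟩ := ih
      refine ⟨c'⁻¹ * γ, ENNReal.mul_pos (ENNReal.inv_ne_zero.mpr hc'T) hγ.ne', fun A hA => ?_⟩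
      have himg : ⇑(e ^ (-(n : ℤ) - 1)) '' A = ⇑e ⁻¹' (⇑(e ^ (-(n : ℤ))) '' A) := by
        rw [show -(n:ℤ)-1 = -1 + -(n:ℤ) by ring, zpow_add, zpow_neg_one, Equiv.Perm.coe_mul,
          Set.image_comp]
        rw [Equiv.Perm.inv_def, Equiv.image_eq_preimage_symm, Equiv.symm_symm]
      rw [himg, mul_assoc]
      calc c'⁻¹ * (γ * μ A) ≤ c'⁻¹ * μ (⇑(e ^ (-(n : ℤ))) '' A) :=
            mul_le_mul_right (hγle A hA) _
        _ ≤ μ (⇑e ⁻¹' (⇑(e ^ (-(n : ℤ))) '' A)) :=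
            key2 _ (aux_img_meas e he he' _ hA)

end Aux

lemma aux_sup_mono {a b : ℕ → ℝ≥0∞} (h : ∀ n, a n ≤ b n) (ha : ⨆ n, a n = ⊤) :
    ⨆ n, b n = ⊤ := top_le_iff.mp (ha ▸ iSup_mono h)

lemma aux_sup_mul {a : ℕ → ℝ≥0∞} (d : ℝ≥0∞) (hd : d ≠ 0) (ha : ⨆ n, a n = ⊤) :
    ⨆ n, d * a n = ⊤ := by
  rw [← ENNReal.mul_iSup, ha, ENNReal.mul_top hd]

lemma aux_sup_of_mul_right {a : ℕ → ℝ≥0∞} (w : ℝ≥0∞) (hw : w ≠ ⊤)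
    (ha : ⨆ n, a n * w = ⊤) : ⨆ n, a n = ⊤ := by
  by_contra h
  have h2 : (⨆ n, a n) * w ≠ ⊤ := ENNReal.mul_ne_top h hw
  rw [ENNReal.iSup_mul] at h2
  exact h2 ha

lemma aux_sup_rpow {a : ℕ → ℝ≥0∞} (t : ℝ) (ht : 0 < t) (ha : ⨆ n, a n = ⊤) :
    ⨆ n, a n ^ t = ⊤ := by
  by_contra h
  have hb : ∀ n, a n ≤ (⨆ n, a n ^ t) ^ (1/t) := by
    intro n
    have h1 : a n ^ t ≤ ((⨆ n, a n ^ t) ^ (1/t)) ^ t := by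
      rw [← ENNReal.rpow_mul, one_div, inv_mul_cancel₀ ht.ne', ENNReal.rpow_one]
      exact le_iSup (fun n => a n ^ t) n
    exact (ENNReal.rpow_le_rpow_iff ht).mp h1
  have h3 : (⊤:ℝ≥0∞) ≤ (⨆ n, a n ^ t) ^ (1/t) := ha ▸ iSup_le hb
  exact (ENNReal.rpow_ne_top_of_nonneg (by positivity) h) (top_le_iff.mp h3)

/-- Theorem ED(1): for a dissipative composition dynamical system of bounded
distortion generated by `W`, `T_f` is positively expansive iff
`sup_{n∈ℕ} μ(f⁻ⁿ(W)) = ∞`. -/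
theorem stmt_6
    {X : Type*} [MeasurableSpace X] (μ : MeasureTheory.Measure X) [MeasureTheory.SigmaFinite μ]
    (p : ℝ≥0∞) (hp1 : 1 ≤ p) (hpT : p ≠ ⊤)
    (e : Equiv.Perm X) (he : Measurable e) (he' : Measurable e.symm)
    (c c' : ℝ≥0∞) (hc : 0 < c) (hcT : c ≠ ⊤) (hc' : 0 < c') (hc'T : c' ≠ ⊤)
    (hb : ∀ B : Set X, MeasurableSet B → μ (⇑e ⁻¹' B) ≤ c * μ B)
    (hb' : ∀ B : Set X, MeasurableSet B → μ (⇑e '' B) ≤ c' * μ B)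
    (W : Set X) (hWm : MeasurableSet W) (hW0 : 0 < μ W) (hWfin : μ W ≠ ⊤)
    (hcover : (⋃ k : ℤ, ⇑(e ^ k) '' W) = Set.univ)
    (hdisj : Pairwise (fun k l : ℤ => Disjoint (⇑(e ^ k) '' W) (⇑(e ^ l) '' W)))
    (K : ℝ≥0∞) (hK0 : 0 < K) (hKT : K ≠ ⊤)
    (hbd : ∀ (k : ℤ) (B : Set X), MeasurableSet B → B ⊆ W →
        K⁻¹ * (μ (⇑(e ^ k) '' W) * μ B) ≤ μ (⇑(e ^ k) '' B) * μ W ∧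
        μ (⇑(e ^ k) '' B) * μ W ≤ K * (μ (⇑(e ^ k) '' W) * μ B)) :
    (∀ φ : X → ℂ, MemLp φ p μ → ¬ φ =ᵐ[μ] 0 →
        (⨆ n : ℕ, eLpNorm (φ ∘ ⇑(e ^ (n : ℤ))) p μ) = ⊤) ↔
    (⨆ n : ℕ, μ (⇑(e ^ (n : ℤ)) ⁻¹' W)) = ⊤ := by
  have hp0 : p ≠ 0 := fun h => by simp [h] at hp1
  have hpt : 0 < p.toReal := ENNReal.toReal_pos hp0 hpT
  constructor
  · -- positively expansive → sup = ⊤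
    intro hexp
    by_contra hsup
    set φ : X → ℂ := W.indicator fun _ => (1:ℂ) with hφdef
    have hmem : MemLp φ p μ := memLp_indicator_const p hWm 1 (Or.inr hWfin)
    have hne : ¬ φ =ᵐ[μ] 0 := by
      intro h0
      have h1 : μ {x | ¬ φ x = (0 : X → ℂ) x} = 0 := by
        rw [Filter.EventuallyEq, ae_iff] at h0; exact h0
      have h2 : W ⊆ {x | ¬ φ x = (0 : X → ℂ) x} := by
        intro x hx
        simp [hφdef, Set.indicator_of_mem hx, hx]
      exact hW0.ne' (le_antisymm (h1 ▸ measure_mono h2) zero_le)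
    have htop := hexp φ hmem hne
    have hbound : ∀ n : ℕ, eLpNorm (φ ∘ ⇑(e ^ (n:ℤ))) p μ ≤
        (⨆ n : ℕ, μ (⇑(e ^ (n:ℤ)) ⁻¹' W)) ^ (1/p.toReal) := by
      intro n
      have hcomp : φ ∘ ⇑(e ^ (n:ℤ)) =
          (⇑(e ^ (n:ℤ)) ⁻¹' W).indicator fun _ => (1:ℂ) := by
        funext x
        show W.indicator (fun _ => (1:ℂ)) ((e ^ (n:ℤ)) x) =
          (⇑(e ^ (n:ℤ)) ⁻¹' W).indicator (fun _ => (1:ℂ)) x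
        by_cases hx : (e ^ (n:ℤ)) x ∈ W
        · rw [Set.indicator_of_mem hx, Set.indicator_of_mem (Set.mem_preimage.mpr hx)]
        · rw [Set.indicator_of_notMem hx,
            Set.indicator_of_notMem (fun h => hx (Set.mem_preimage.mp h))]
      rw [hcomp, eLpNorm_indicator_const (aux_meas_zpow e he he' _ hWm) hp0 hpT]
      simp only [enorm_one, nnnorm_one, ENNReal.coe_one, one_mul]
      exact ENNReal.rpow_le_rpow (le_iSup (fun n : ℕ => μ (⇑(e ^ (n:ℤ)) ⁻¹' W)) n) (by positivity)
    have h3 : (⊤:ℝ≥0∞) ≤ (⨆ n : ℕ, μ (⇑(e ^ (n:ℤ)) ⁻¹' W)) ^ (1/p.toReal) :=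
      htop ▸ iSup_le hbound
    exact (ENNReal.rpow_ne_top_of_nonneg (by positivity) hsup) (top_le_iff.mp h3)
  · -- sup = ⊤ → positively expansive
    intro hsup φ hφ hne
    obtain ⟨ψ, hψsm, hψeq⟩ := hφ.1
    have hψ : Measurable ψ := hψsm.measurable
    have hψne : μ {x | ψ x ≠ 0} ≠ 0 := by
      intro h0
      apply hne
      refine hψeq.trans ?_
      rw [Filter.EventuallyEq, ae_iff]
      simpa using h0
    obtain ⟨m, hm⟩ : ∃ m : ℕ, μ {x | 1/((m:ℝ)+1) ≤ ‖ψ x‖} ≠ 0 := by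
      by_contra h
      push_neg at h
      apply hψne
      have hsub : {x | ψ x ≠ 0} ⊆ ⋃ m : ℕ, {x | 1/((m:ℝ)+1) ≤ ‖ψ x‖} := by
        intro x hx
        obtain ⟨m', hm'⟩ := exists_nat_one_div_lt (norm_pos_iff.mpr hx)
        exact Set.mem_iUnion.mpr ⟨m', hm'.le⟩
      exact le_antisymm ((measure_mono hsub).trans (measure_iUnion_null h).le) zero_le
    set δ : ℝ := 1/((m:ℝ)+1) with hδdef
    have hδ : 0 < δ := by positivity
    set S : Set X := {x | δ ≤ ‖ψ x‖} with hSdef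
    have hSm : MeasurableSet S := measurableSet_le measurable_const hψ.norm
    obtain ⟨k, hk⟩ : ∃ k : ℤ, μ (S ∩ ⇑(e ^ k) '' W) ≠ 0 := by
      by_contra h
      push_neg at h
      apply hm
      have hS : S = ⋃ k : ℤ, S ∩ ⇑(e ^ k) '' W := by
        rw [← Set.inter_iUnion, hcover, Set.inter_univ]
      rw [hS]
      exact measure_iUnion_null h
    set B : Set X := ⇑(e ^ k) ⁻¹' S ∩ W with hBdef
    have hBm : MeasurableSet B := (aux_meas_zpow e he he' k hSm).inter hWm
    have hBW : B ⊆ W := Set.inter_subset_right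
    have himgB : ⇑(e ^ k) '' B = S ∩ ⇑(e ^ k) '' W := by
      rw [hBdef, Set.image_inter (e ^ k).injective, Equiv.image_preimage]
    have hB0 : μ B ≠ 0 := by
      intro h0
      have h2 := (hbd k B hBm hBW).2
      rw [h0, mul_zero, mul_zero] at h2
      have h3 := le_antisymm h2 zero_le
      rcases mul_eq_zero.mp h3 with h4 | h4
      · rw [himgB] at h4; exact hk h4
      · exact hW0.ne' h4
    -- a.e. comparison of φ ∘ e^n and ψ ∘ e^n
    obtain ⟨N, hDN, hNm, hN0⟩ := exists_measurable_superset_of_null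
      (show μ {x | φ x ≠ ψ x} = 0 by rw [Filter.EventuallyEq, ae_iff] at hψeq; exact hψeq)
    have hcompae : ∀ n : ℕ, φ ∘ ⇑(e ^ (n:ℤ)) =ᵐ[μ] ψ ∘ ⇑(e ^ (n:ℤ)) := by
      intro n
      rw [Filter.EventuallyEq, ae_iff]
      obtain ⟨γ, hγ, hγle⟩ := aux_hlow μ e he he' c c' hc hcT hc' hc'T hb hb' (n:ℤ)
      have hpre0 : μ (⇑(e ^ (n:ℤ)) ⁻¹' N) = 0 := by
        have h1 := hγle _ (aux_meas_zpow e he he' (n:ℤ) hNm)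
        rw [Equiv.image_preimage, hN0] at h1
        have h2 := le_antisymm h1 zero_le
        rcases mul_eq_zero.mp h2 with h3 | h3
        · exact absurd h3 hγ.ne'
        · exact h3
      refine measure_mono_null ?_ hpre0
      intro x hx
      exact hDN hx
    -- main pointwise lower bound on eLpNorm
    have key : ∀ n : ℕ, (‖δ‖₊ : ℝ≥0∞) * μ (⇑(e ^ (-(n:ℤ) + k)) '' B) ^ (1/p.toReal) ≤
        eLpNorm (φ ∘ ⇑(e ^ (n:ℤ))) p μ := by
      intro n
      rw [eLpNorm_congr_ae (hcompae n)]
      have hAset : ⇑(e ^ (n:ℤ)) ⁻¹' (⇑(e ^ k) '' B) = ⇑(e ^ (-(n:ℤ) + k)) '' B := by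
        rw [aux_preimage_eq_image, zpow_add, Equiv.Perm.coe_mul, Set.image_comp]
      have hAm : MeasurableSet (⇑(e ^ (-(n:ℤ) + k)) '' B) := aux_img_meas e he he' _ hBm
      have hmono : eLpNorm ((⇑(e ^ (-(n:ℤ)+k)) '' B).indicator fun _ => δ) p μ ≤
          eLpNorm (ψ ∘ ⇑(e ^ (n:ℤ))) p μ := by
        apply eLpNorm_mono
        intro x
        by_cases hx : x ∈ ⇑(e ^ (-(n:ℤ)+k)) '' B
        · rw [Set.indicator_of_mem hx]
          have hx1 : x ∈ ⇑(e ^ (n:ℤ)) ⁻¹' (⇑(e ^ k) '' B) := by rw [hAset]; exact hx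
          have hx2 : (e ^ (n:ℤ)) x ∈ S := by
            have h3 : (e ^ (n:ℤ)) x ∈ ⇑(e ^ k) '' B := hx1
            rw [himgB] at h3
            exact h3.1
          calc ‖δ‖ = δ := Real.norm_of_nonneg hδ.le
            _ ≤ ‖ψ ((e ^ (n:ℤ)) x)‖ := hx2
            _ = ‖(ψ ∘ ⇑(e ^ (n:ℤ))) x‖ := rfl
        · rw [Set.indicator_of_notMem hx]
          simp
      calc (‖δ‖₊ : ℝ≥0∞) * μ (⇑(e ^ (-(n:ℤ)+k)) '' B) ^ (1/p.toReal)
          = eLpNorm ((⇑(e ^ (-(n:ℤ)+k)) '' B).indicator fun _ => δ) p μ :=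
            by rw [eLpNorm_indicator_const hAm hp0 hpT, enorm_eq_nnnorm]
        _ ≤ _ := hmono
    -- the measures of the sets e^{-n+k}(B) are unbounded
    obtain ⟨γ, hγ, hγle⟩ := aux_hlow μ e he he' c c' hc hcT hc' hc'T hb hb' k
    have s1 : ∀ n : ℕ, (K⁻¹ * μ B * γ) * μ (⇑(e ^ (n:ℤ)) ⁻¹' W) ≤
        μ (⇑(e ^ (-(n:ℤ)+k)) '' B) * μ W := by
      intro n
      have hW' : ⇑(e ^ (-(n:ℤ)+k)) '' W = ⇑(e ^ k) '' (⇑(e ^ (-(n:ℤ))) '' W) := by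
        rw [show (-(n:ℤ)+k) = k + -(n:ℤ) by ring, zpow_add, Equiv.Perm.coe_mul, Set.image_comp]
      have h1 := (hbd (-(n:ℤ)+k) B hBm hBW).1
      have h2 : γ * μ (⇑(e ^ (-(n:ℤ))) '' W) ≤ μ (⇑(e ^ (-(n:ℤ)+k)) '' W) := by
        rw [hW']
        exact hγle _ (aux_img_meas e he he' _ hWm)
      rw [aux_preimage_eq_image]
      calc (K⁻¹ * μ B * γ) * μ (⇑(e ^ (-(n:ℤ))) '' W)
          = K⁻¹ * (γ * μ (⇑(e ^ (-(n:ℤ))) '' W) * μ B) := by ring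
        _ ≤ K⁻¹ * (μ (⇑(e ^ (-(n:ℤ)+k)) '' W) * μ B) :=
            mul_le_mul_right (mul_le_mul_left h2 _) _
        _ ≤ μ (⇑(e ^ (-(n:ℤ)+k)) '' B) * μ W := h1
    have s2 : ⨆ n : ℕ, (K⁻¹ * μ B * γ) * μ (⇑(e ^ (n:ℤ)) ⁻¹' W) = ⊤ :=
      aux_sup_mul _ (mul_ne_zero (mul_ne_zero (ENNReal.inv_ne_zero.mpr hKT) hB0) hγ.ne') hsup
    have s3 : ⨆ n : ℕ, μ (⇑(e ^ (-(n:ℤ)+k)) '' B) * μ W = ⊤ := aux_sup_mono s1 s2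
    have c1 : ⨆ n : ℕ, μ (⇑(e ^ (-(n:ℤ)+k)) '' B) = ⊤ := aux_sup_of_mul_right (μ W) hWfin s3
    have c2 : ⨆ n : ℕ, μ (⇑(e ^ (-(n:ℤ)+k)) '' B) ^ (1/p.toReal) = ⊤ :=
      aux_sup_rpow _ (by positivity) c1
    have c3 : ⨆ n : ℕ, (‖δ‖₊ : ℝ≥0∞) * μ (⇑(e ^ (-(n:ℤ)+k)) '' B) ^ (1/p.toReal) = ⊤ :=
      aux_sup_mul _ (by simp [hδ.ne']) c2
    exact aux_sup_mono key c3
end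

section
/- Let $(X,\mathcal{B},\mu,f,T_f)$ be a dissipative composition dynamical system of bounded distortion generated by $W$, with $T_f$ invertible. Then $T_f$ is expansive if and only if $\sup_{n\in\mathbb{Z}}\mu(f^n(W))=\infty$. -/
open MeasureTheory Filter Set ENNReal

/-- Theorem ED(2): for a dissipative composition dynamical system of bounded
distortion generated by `W`, with `T_f` invertible, `T_f` is expansive iff
`sup_{n∈ℤ} μ(fⁿ(W)) = ∞`. -/
theorem stmt_7
    {X : Type*} [MeasurableSpace X] (μ : MeasureTheory.Measure X) [MeasureTheory.SigmaFinite μ]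
    (p : ℝ≥0∞) (hp1 : 1 ≤ p) (hpT : p ≠ ⊤)
    (e : Equiv.Perm X) (he : Measurable e) (he' : Measurable e.symm)
    (c c' : ℝ≥0∞) (hc : 0 < c) (hcT : c ≠ ⊤) (hc' : 0 < c') (hc'T : c' ≠ ⊤)
    (hb : ∀ B : Set X, MeasurableSet B → μ (⇑e ⁻¹' B) ≤ c * μ B)
    (hb' : ∀ B : Set X, MeasurableSet B → μ (⇑e '' B) ≤ c' * μ B)
    (W : Set X) (hWm : MeasurableSet W) (hW0 : 0 < μ W) (hWfin : μ W ≠ ⊤)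
    (hcover : (⋃ k : ℤ, ⇑(e ^ k) '' W) = Set.univ)
    (hdisj : Pairwise (fun k l : ℤ => Disjoint (⇑(e ^ k) '' W) (⇑(e ^ l) '' W)))
    (K : ℝ≥0∞) (hK0 : 0 < K) (hKT : K ≠ ⊤)
    (hbd : ∀ (k : ℤ) (B : Set X), MeasurableSet B → B ⊆ W →
        K⁻¹ * (μ (⇑(e ^ k) '' W) * μ B) ≤ μ (⇑(e ^ k) '' B) * μ W ∧
        μ (⇑(e ^ k) '' B) * μ W ≤ K * (μ (⇑(e ^ k) '' W) * μ B)) :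
    (∀ φ : X → ℂ, MemLp φ p μ → ¬ φ =ᵐ[μ] 0 →
        (⨆ n : ℤ, eLpNorm (φ ∘ ⇑(e ^ n)) p μ) = ⊤) ↔
    (⨆ n : ℤ, μ (⇑(e ^ n) '' W)) = ⊤ := by
  have hp0 : p ≠ 0 := (lt_of_lt_of_le zero_lt_one hp1).ne'
  have hpr : 0 < p.toReal := ENNReal.toReal_pos hp0 hpT
  have hr : (0:ℝ) < 1 / p.toReal := by positivity
  -- measurability of e^n
  have hmeas : ∀ n : ℤ, Measurable ⇑(e ^ n) := by
    intro n
    induction n using Int.induction_on with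
    | zero => simpa using measurable_id
    | succ n ih =>
        have h1 : (e ^ ((n : ℤ) + 1)) = e * e ^ (n : ℤ) := by
          rw [add_comm, zpow_add, zpow_one]
        have h2 : ⇑(e ^ ((n:ℤ)+1)) = ⇑e ∘ ⇑(e ^ (n:ℤ)) := by
          funext x; rw [h1]; rfl
        rw [h2]; exact he.comp ih
    | pred n ih =>
        have h1 : (e ^ (-(n : ℤ) - 1)) = e⁻¹ * e ^ (-(n : ℤ)) := by
          rw [sub_eq_add_neg, add_comm, ← zpow_neg_one, ← zpow_add]
        have h2 : ⇑(e ^ (-(n:ℤ)-1)) = ⇑e.symm ∘ ⇑(e ^ (-(n:ℤ))) := by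
          funext x; rw [h1, ← Equiv.Perm.inv_def]; rfl
        rw [h2]; exact he'.comp ih
  -- null sets are preserved by images of e^n
  have himg0 : ∀ S : Set X, μ S = 0 → μ (⇑e '' S) = 0 := by
    intro S hS
    have h1 : μ (⇑e '' toMeasurable μ S) ≤ c' * μ (toMeasurable μ S) :=
      hb' _ (measurableSet_toMeasurable μ S)
    rw [measure_toMeasurable, hS, mul_zero] at h1
    exact le_antisymm
      (le_trans (measure_mono (Set.image_mono (subset_toMeasurable μ S))) h1) (zero_le)
  have hpre0 : ∀ S : Set X, μ S = 0 → μ (⇑e.symm '' S) = 0 := by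
    intro S hS
    have h1 : μ (⇑e ⁻¹' toMeasurable μ S) ≤ c * μ (toMeasurable μ S) :=
      hb _ (measurableSet_toMeasurable μ S)
    rw [measure_toMeasurable, hS, mul_zero] at h1
    have h2 : ⇑e.symm '' S ⊆ ⇑e ⁻¹' toMeasurable μ S := by
      rw [Equiv.image_eq_preimage_symm, Equiv.symm_symm]
      exact Set.preimage_mono (subset_toMeasurable μ S)
    exact le_antisymm (le_trans (measure_mono h2) h1) (zero_le)
  have hnull : ∀ (n : ℤ) (S : Set X), μ S = 0 → μ (⇑(e ^ n) '' S) = 0 := by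
    intro n
    induction n using Int.induction_on with
    | zero => intro S hS; simpa using hS
    | succ n ih =>
        intro S hS
        have h2 : ⇑(e ^ ((n:ℤ)+1)) = ⇑e ∘ ⇑(e ^ (n:ℤ)) := by
          funext x
          rw [add_comm, zpow_add, zpow_one]; rfl
        have h1 : ⇑(e ^ ((n:ℤ)+1)) '' S = ⇑e '' (⇑(e ^ (n:ℤ)) '' S) := by
          rw [h2, Set.image_comp]
        rw [h1]; exact himg0 _ (ih S hS)
    | pred n ih =>
        intro S hS
        have h0 : (e ^ (-(n:ℤ) - 1)) = e⁻¹ * e ^ (-(n:ℤ)) := by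
          rw [sub_eq_add_neg, add_comm, ← zpow_neg_one, ← zpow_add]
        have h2 : ⇑(e ^ (-(n:ℤ)-1)) = ⇑e.symm ∘ ⇑(e ^ (-(n:ℤ))) := by
          funext x
          rw [h0, ← Equiv.Perm.inv_def]; rfl
        have h1 : ⇑(e ^ (-(n:ℤ)-1)) '' S = ⇑e.symm '' (⇑(e ^ (-(n:ℤ))) '' S) := by
          rw [h2, Set.image_comp]
        rw [h1]; exact hpre0 _ (ih S hS)
  -- preimage under e^n is image under e^(-n)
  have hpreimg : ∀ (n : ℤ) (S : Set X), ⇑(e ^ n) ⁻¹' S = ⇑(e ^ (-n)) '' S := by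
    intro n S
    rw [← Equiv.symm_symm (e ^ n), ← Equiv.image_eq_preimage_symm, ← Equiv.Perm.inv_def, ← zpow_neg]
  have hmeasimg : ∀ (n : ℤ) (S : Set X), MeasurableSet S → MeasurableSet (⇑(e ^ n) '' S) := by
    intro n S hS
    have h := hpreimg (-n) S
    rw [neg_neg] at h
    rw [← h]
    exact hS.preimage (hmeas (-n))
  have himg_comp : ∀ (a b : ℤ) (S : Set X),
      ⇑(e ^ a) '' (⇑(e ^ b) '' S) = ⇑(e ^ (a + b)) '' S := by
    intro a b S
    have h2 : ⇑(e ^ (a + b)) = ⇑(e ^ a) ∘ ⇑(e ^ b) := by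
      funext x
      rw [zpow_add]; rfl
    rw [h2, Set.image_comp]
  constructor
  · -- expansive → sup = ⊤
    intro H
    by_contra hsup
    set φ : X → ℂ := W.indicator (fun _ => 1) with hφdef
    have hmem : MemLp φ p μ := memLp_indicator_const p hWm 1 (Or.inr hWfin)
    have hne : ¬ φ =ᵐ[μ] 0 := by
      intro h
      rw [Filter.EventuallyEq, ae_iff] at h
      have hsub : W ⊆ {x | ¬ φ x = (0 : X → ℂ) x} := by
        intro x hx
        simp only [Set.mem_setOf_eq, Pi.zero_apply, hφdef]
        rw [Set.indicator_of_mem hx]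
        exact one_ne_zero
      exact absurd (le_antisymm (le_trans (measure_mono hsub) h.le) (zero_le)) hW0.ne'
    have hT := H φ hmem hne
    have hcomp : ∀ n : ℤ, eLpNorm (φ ∘ ⇑(e ^ n)) p μ = μ (⇑(e ^ (-n)) '' W) ^ (1 / p.toReal) := by
      intro n
      have h1 : φ ∘ ⇑(e ^ n) = (⇑(e ^ n) ⁻¹' W).indicator (fun _ => (1:ℂ)) := by
        funext x
        by_cases hx : (e ^ n) x ∈ W <;>
          simp [hφdef, Set.indicator, hx, Set.mem_preimage, Function.comp]
      rw [h1, eLpNorm_indicator_const (hWm.preimage (hmeas n)) hp0 hpT, hpreimg n W]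
      simp
    have hle : (⨆ n : ℤ, eLpNorm (φ ∘ ⇑(e ^ n)) p μ) ≤
        (⨆ m : ℤ, μ (⇑(e ^ m) '' W)) ^ (1 / p.toReal) := by
      refine iSup_le fun n => ?_
      rw [hcomp n]
      exact ENNReal.rpow_le_rpow (le_iSup (fun m : ℤ => μ (⇑(e ^ m) '' W)) (-n)) hr.le
    rw [hT] at hle
    have hfin : (⨆ m : ℤ, μ (⇑(e ^ m) '' W)) ^ (1 / p.toReal) < ⊤ :=
      ENNReal.rpow_lt_top_of_nonneg hr.le hsup
    exact hfin.ne (top_le_iff.mp hle)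
  · -- sup = ⊤ → expansive
    intro hsup φ hmem hne
    set ψ : X → ℂ := hmem.1.mk φ with hψdef
    have hψsm : StronglyMeasurable ψ := hmem.1.stronglyMeasurable_mk
    have hφψ : φ =ᵐ[μ] ψ := hmem.1.ae_eq_mk
    have hne' : ¬ ψ =ᵐ[μ] 0 := fun h => hne (hφψ.trans h)
    -- find ε with positive measure level set
    have hA : ∃ j : ℕ, μ {x | 1 / ((j:ℝ) + 1) ≤ ‖ψ x‖} ≠ 0 := by
      by_contra h
      push_neg at h
      apply hne'
      rw [Filter.EventuallyEq, ae_iff]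
      have hsub : {x | ¬ ψ x = (0 : X → ℂ) x} ⊆ ⋃ j : ℕ, {x | 1 / ((j:ℝ) + 1) ≤ ‖ψ x‖} := by
        intro x hx
        have hx' : ψ x ≠ 0 := hx
        have hpos : 0 < ‖ψ x‖ := norm_pos_iff.mpr hx'
        obtain ⟨j, hj⟩ := exists_nat_one_div_lt hpos
        exact Set.mem_iUnion.mpr ⟨j, hj.le⟩
      exact le_antisymm (le_trans (measure_mono hsub) (measure_iUnion_null h).le) (zero_le)
    obtain ⟨j, hAj⟩ := hA
    set ε : ℝ := 1 / ((j:ℝ) + 1) with hεdef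
    have hε : 0 < ε := by positivity
    set A : Set X := {x | ε ≤ ‖ψ x‖} with hAdef
    have hAm : MeasurableSet A := measurableSet_le measurable_const hψsm.measurable.norm
    -- find k0 with μ (A ∩ e^k0 '' W) ≠ 0
    have hk0 : ∃ k0 : ℤ, μ (A ∩ ⇑(e ^ k0) '' W) ≠ 0 := by
      by_contra h
      push_neg at h
      apply hAj
      have hAeq : A = ⋃ k : ℤ, A ∩ ⇑(e ^ k) '' W := by
        rw [← Set.inter_iUnion, hcover, Set.inter_univ]
      rw [hAeq]
      exact measure_iUnion_null h
    obtain ⟨k0, hB0⟩ := hk0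
    set B : Set X := A ∩ ⇑(e ^ k0) '' W with hBdef
    have hBm : MeasurableSet B := hAm.inter (hmeasimg k0 W hWm)
    set B' : Set X := ⇑(e ^ k0) ⁻¹' B with hB'def
    have hB'm : MeasurableSet B' := hBm.preimage (hmeas k0)
    have hB'W : B' ⊆ W := by
      intro x hx
      obtain ⟨w, hw, hwx⟩ := hx.2
      have : x = w := (e ^ k0).injective hwx.symm
      rwa [this]
    have hBimg : ⇑(e ^ k0) '' B' = B := (e ^ k0).image_preimage B
    have hB'0 : μ B' ≠ 0 := by
      intro h
      exact hB0 (by rw [← hBimg] at *; exact hnull k0 B' h)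
    have hB'fin : μ B' ≠ ⊤ := (lt_of_le_of_lt (measure_mono hB'W) hWfin.lt_top).ne
    -- suppose the sup of norms is finite; derive contradiction
    by_contra hS
    set S : ℝ≥0∞ := ⨆ n : ℤ, eLpNorm (φ ∘ ⇑(e ^ n)) p μ with hSdef
    have hSfin : S ≠ ⊤ := hS
    -- lower bound for each n
    have hlow : ∀ n : ℤ, (ENNReal.ofReal ε) * μ (⇑(e ^ (-n + k0)) '' B') ^ (1 / p.toReal) ≤ S := by
      intro n
      have hCn : ⇑(e ^ (-n + k0)) '' B' = ⇑(e ^ n) ⁻¹' B := by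
        rw [hpreimg n B, ← hBimg, himg_comp]
      have hptwise : ∀ x, ‖(⇑(e ^ (-n + k0)) '' B').indicator (fun _ => ε) x‖ ≤
          ‖(ψ ∘ ⇑(e ^ n)) x‖ := by
        intro x
        by_cases hx : x ∈ ⇑(e ^ (-n + k0)) '' B'
        · rw [Set.indicator_of_mem hx, Real.norm_of_nonneg hε.le]
          have hx' : (e ^ n) x ∈ B := by rwa [hCn, Set.mem_preimage] at hx
          exact hx'.1
        · rw [Set.indicator_of_notMem hx]
          simp
      have h1 : eLpNorm ((⇑(e ^ (-n + k0)) '' B').indicator (fun _ => ε)) p μ ≤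
          eLpNorm (ψ ∘ ⇑(e ^ n)) p μ := eLpNorm_mono hptwise
      have h2 : eLpNorm (ψ ∘ ⇑(e ^ n)) p μ = eLpNorm (φ ∘ ⇑(e ^ n)) p μ := by
        refine eLpNorm_congr_ae ?_
        have hnul : μ {x | ¬ φ x = ψ x} = 0 := by
          rw [Filter.EventuallyEq, ae_iff] at hφψ
          exact hφψ
        have hsub : {x | ¬ (ψ ∘ ⇑(e ^ n)) x = (φ ∘ ⇑(e ^ n)) x} ⊆
            ⇑(e ^ n) ⁻¹' {x | ¬ φ x = ψ x} := by
          intro x hx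
          simp only [Set.mem_preimage, Set.mem_setOf_eq] at *
          exact fun h => hx h.symm
        rw [Filter.EventuallyEq, ae_iff]
        refine le_antisymm (le_trans (measure_mono hsub) ?_) (zero_le)
        rw [hpreimg n]
        exact (hnull (-n) _ hnul).le
      rw [eLpNorm_indicator_const (hmeasimg _ _ hB'm) hp0 hpT] at h1
      have h3 : (‖ε‖ₑ : ℝ≥0∞) = ENNReal.ofReal ε := by
        rw [← ofReal_norm, Real.norm_of_nonneg hε.le]
      rw [h3] at h1
      calc ENNReal.ofReal ε * μ (⇑(e ^ (-n + k0)) '' B') ^ (1 / p.toReal)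
          ≤ eLpNorm (ψ ∘ ⇑(e ^ n)) p μ := h1
        _ = eLpNorm (φ ∘ ⇑(e ^ n)) p μ := h2
        _ ≤ S := le_iSup (fun n : ℤ => eLpNorm (φ ∘ ⇑(e ^ n)) p μ) n
    -- deduce uniform bound on μ (e^m '' B')
    have hε0 : ENNReal.ofReal ε ≠ 0 := by
      simp [ENNReal.ofReal_eq_zero, not_le, hε]
    set C : ℝ≥0∞ := (S / ENNReal.ofReal ε) ^ p.toReal with hCdef
    have hCfin : C ≠ ⊤ := by
      have : S / ENNReal.ofReal ε < ⊤ := ENNReal.div_lt_top hSfin hε0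
      exact (ENNReal.rpow_lt_top_of_nonneg hpr.le this.ne).ne
    have hbound : ∀ m : ℤ, μ (⇑(e ^ m) '' B') ≤ C := by
      intro m
      have h1 := hlow (k0 - m)
      rw [neg_sub, sub_add_cancel] at h1
      have h2 : μ (⇑(e ^ m) '' B') ^ (1 / p.toReal) ≤ S / ENNReal.ofReal ε := by
        rw [ENNReal.le_div_iff_mul_le (Or.inl hε0) (Or.inl ofReal_ne_top), mul_comm]
        exact h1
      have h3 := ENNReal.rpow_le_rpow h2 hpr.le
      rwa [← ENNReal.rpow_mul, one_div, inv_mul_cancel₀ hpr.ne', ENNReal.rpow_one] at h3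
    -- bounded distortion transfers bound to W, contradicting hsup
    have hWbound : ∀ m : ℤ, μ (⇑(e ^ m) '' W) ≤ K * (C * μ W) / μ B' := by
      intro m
      have h1 := (hbd m B' hB'm hB'W).1
      have h2 : μ (⇑(e ^ m) '' W) * μ B' ≤ K * (μ (⇑(e ^ m) '' B') * μ W) := by
        calc μ (⇑(e ^ m) '' W) * μ B'
            = K * (K⁻¹ * (μ (⇑(e ^ m) '' W) * μ B')) := by
              rw [← mul_assoc, ENNReal.mul_inv_cancel hK0.ne' hKT, one_mul]
          _ ≤ K * (μ (⇑(e ^ m) '' B') * μ W) := mul_le_mul_right h1 K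
      have h3 : μ (⇑(e ^ m) '' W) * μ B' ≤ K * (C * μ W) :=
        le_trans h2 (mul_le_mul_right (mul_le_mul_left (hbound m) _) K)
      rw [ENNReal.le_div_iff_mul_le (Or.inl hB'0) (Or.inl hB'fin)]
      exact h3
    have hfin : K * (C * μ W) / μ B' ≠ ⊤ := by
      refine (ENNReal.div_lt_top ?_ hB'0).ne
      exact ENNReal.mul_ne_top hKT (ENNReal.mul_ne_top hCfin hWfin)
    exact hfin (top_le_iff.mp (hsup ▸ iSup_le hWbound))
end

section
/- Let $(X,\mathcal{B},\mu,f,T_f)$ be a dissipative composition dynamical system of bounded distortion generated by $W$, with $T_f$ invertible on $L^p(X)$. Then $T_f$ is uniformly expansive if and only if one of the following holds: (UE1) $\lim_{n\to\infty}\inf_{k\in\mathbb{Z}}\frac{\mu(f^{k+n}(W))}{\mu(f^k(W))}=\infty$; (UE2) $\lim_{n\to\infty}\inf_{k\in\mathbb{Z}}\frac{\mu(f^{k-n}(W))}{\mu(f^k(W))}=\infty$; (UE3) $\lim_{n\to\infty}\inf_{k\in\mathbb{N}}\frac{\mu(f^{k+n}(W))}{\mu(f^k(W))}=\infty$ and $\lim_{n\to\infty}\inf_{k\le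 0}\frac{\mu(f^{k-n}(W))}{\mu(f^k(W))}=\infty$. -/
open MeasureTheory Filter Set ENNReal NNReal

set_option linter.unusedSectionVars false
set_option linter.unusedVariables false
set_option maxHeartbeats 2000000

/-! ### Generic helpers -/

private theorem aux_cancel {a b x : ℝ≥0∞} (hx0 : x ≠ 0) (hxT : x ≠ ⊤)
    (h : a * x ≤ b * x) : a ≤ b := (ENNReal.mul_le_mul_iff_left hx0 hxT).mp h

private theorem aux_tendsto_top {f : ℕ → ℝ≥0∞}
    (h : ∀ b : ℝ≥0∞, b ≠ ⊤ → ∃ N : ℕ, ∀ n ≥ N, b ≤ f n) :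
    Filter.Tendsto f Filter.atTop (nhds ⊤) := by
  rw [ENNReal.tendsto_nhds_top_iff_nnreal]
  intro x
  obtain ⟨N, hN⟩ := h ((x : ℝ≥0∞) + 1) (by simp)
  refine Filter.eventually_atTop.mpr ⟨N, fun n hn => ?_⟩
  exact lt_of_lt_of_le (ENNReal.lt_add_right ENNReal.coe_ne_top one_ne_zero) (hN n hn)

private theorem aux_of_tendsto_top {f : ℕ → ℝ≥0∞}
    (h : Filter.Tendsto f Filter.atTop (nhds ⊤)) :
    ∀ b : ℝ≥0∞, b ≠ ⊤ → ∃ N : ℕ, ∀ n ≥ N, b ≤ f n := by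
  intro b hbT
  have h2 := (ENNReal.tendsto_nhds_top_iff_nnreal.mp h) b.toNNReal
  obtain ⟨N, hN⟩ := Filter.eventually_atTop.mp h2
  exact ⟨N, fun n hn => by
    have h3 := hN n hn
    rw [ENNReal.coe_toNNReal hbT] at h3
    exact h3.le⟩

private theorem aux_tsum_split_int (f : ℤ → ℝ≥0∞) :
    (∑' (j : ↥(Set.Iic (0:ℤ))), f j) + ∑' (j : ↥(Set.Ici (1:ℤ))), f j = ∑' j, f j := by
  rw [tsum_subtype (Set.Iic (0:ℤ)) f, tsum_subtype (Set.Ici (1:ℤ)) f, ← ENNReal.tsum_add]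
  congr 1
  funext j
  by_cases hj : j ≤ 0
  · have hj' : ¬ (1:ℤ) ≤ j := by omega
    simp [Set.indicator, hj, hj']
  · have hj' : (1:ℤ) ≤ j := by omega
    simp [Set.indicator, hj, hj']

private theorem aux_half {x y : ℝ≥0∞} (hxy : x + y = 1) (hx : ¬ (2⁻¹ ≤ x)) : 2⁻¹ ≤ y := by
  by_contra hy
  push_neg at hx hy
  have h : x + y < 2⁻¹ + 2⁻¹ := ENNReal.add_lt_add hx hy
  rw [hxy, ENNReal.inv_two_add_inv_two] at h
  exact lt_irrefl _ h

private theorem aux_rpow_le {M y : ℝ≥0∞} {q : ℝ} (hq0 : 0 < q)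
    (h : M ≤ y ^ (1/q)) : M ^ q ≤ y := by
  have h2 := ENNReal.rpow_le_rpow h (le_of_lt hq0)
  rwa [← ENNReal.rpow_mul, one_div, inv_mul_cancel₀ hq0.ne', ENNReal.rpow_one] at h2

private theorem aux_le_rpow {M y : ℝ≥0∞} {q : ℝ} (hq0 : 0 < q)
    (h : M ^ q ≤ y) : M ≤ y ^ (1/q) := by
  have h2 := ENNReal.rpow_le_rpow h (by positivity : (0:ℝ) ≤ 1/q)
  rwa [← ENNReal.rpow_mul, mul_one_div, div_self hq0.ne', ENNReal.rpow_one] at h2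

private theorem aux_rpow_rpow {b : ℝ≥0∞} {q : ℝ} (hq0 : 0 < q) :
    (b ^ (1/q)) ^ q = b := by
  rw [← ENNReal.rpow_mul, one_div, inv_mul_cancel₀ hq0.ne', ENNReal.rpow_one]

private theorem aux_rpow_ne_top {M : ℝ≥0∞} {q : ℝ} (hq0 : 0 < q) (hM : M ≠ ⊤) :
    M ^ q ≠ ⊤ := by
  rw [Ne, ENNReal.rpow_eq_top_iff]
  push_neg
  exact ⟨fun _ => hq0.le, fun h => absurd h hM⟩

private theorem aux_rpow_inv_ne_top {b : ℝ≥0∞} {q : ℝ} (hq0 : 0 < q) (hb : b ≠ ⊤) :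
    b ^ (1/q) ≠ ⊤ := aux_rpow_ne_top (by positivity) hb

/-! ### Dynamics helpers -/

section Dyn
variable {X : Type*} [MeasurableSpace X] {μ : MeasureTheory.Measure X} {e : Equiv.Perm X}

private theorem aux_me (he : Measurable e) (he' : Measurable e.symm) :
    ∀ m : ℤ, Measurable ⇑(e ^ m) := by
  intro m
  induction m using Int.induction_on with
  | zero => simpa [Equiv.Perm.coe_one] using measurable_id
  | succ n ih =>
      have h : (e ^ ((n:ℤ)+1)) = e ^ (n:ℤ) * e := by rw [zpow_add, zpow_one]
      rw [h, Equiv.Perm.coe_mul]; exact ih.comp he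
  | pred n ih =>
      have h : (e ^ (-(n:ℤ)-1)) = e ^ (-(n:ℤ)) * e⁻¹ := by
        rw [sub_eq_add_neg, zpow_add, zpow_neg_one]
      rw [h, Equiv.Perm.coe_mul, Equiv.Perm.inv_def]; exact ih.comp he'

private theorem aux_img (e : Equiv.Perm X) : ∀ (u v : ℤ) (S : Set X),
    ⇑(e ^ u) '' (⇑(e ^ v) '' S) = ⇑(e ^ (u + v)) '' S := by
  intro u v S
  rw [zpow_add, Equiv.Perm.coe_mul, Set.image_comp]

private theorem aux_meas_img (he : Measurable e) (he' : Measurable e.symm) (k : ℤ) {B : Set X}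
    (hB : MeasurableSet B) : MeasurableSet (⇑(e ^ k) '' B) := by
  rw [Equiv.image_eq_preimage_symm]
  have h : ⇑(e ^ k).symm = ⇑(e ^ (-k)) := by rw [← Equiv.Perm.inv_def, ← zpow_neg]
  rw [h]
  exact hB.preimage (aux_me he he' _)

private theorem aux_imgC (μ : MeasureTheory.Measure X) (he : Measurable e) (he' : Measurable e.symm)
    (c c' : ℝ≥0∞) (hcT : c ≠ ⊤) (hc'T : c' ≠ ⊤)
    (hb : ∀ B : Set X, MeasurableSet B → μ (⇑e ⁻¹' B) ≤ c * μ B)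
    (hb' : ∀ B : Set X, MeasurableSet B → μ (⇑e '' B) ≤ c' * μ B) :
    ∀ m : ℤ, ∃ C : ℝ≥0∞, C ≠ ⊤ ∧ ∀ B : Set X, MeasurableSet B → μ (⇑(e ^ m) '' B) ≤ C * μ B := by
  intro m
  induction m using Int.induction_on with
  | zero => exact ⟨1, one_ne_top, fun B _ => by simp [Equiv.Perm.coe_one]⟩
  | succ n ih =>
      obtain ⟨C, hCT, hC⟩ := ih
      refine ⟨c' * C, ENNReal.mul_ne_top hc'T hCT, fun B hB => ?_⟩
      have h1 : ⇑(e ^ ((n:ℤ)+1)) '' B = ⇑e '' (⇑(e ^ (n:ℤ)) '' B) := by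
        have h2 := aux_img e 1 (n:ℤ) B
        rw [zpow_one] at h2; rw [h2, add_comm]
      rw [h1]
      calc μ (⇑e '' (⇑(e ^ (n:ℤ)) '' B)) ≤ c' * μ (⇑(e ^ (n:ℤ)) '' B) :=
            hb' _ (aux_meas_img he he' _ hB)
        _ ≤ c' * (C * μ B) := mul_le_mul_right (hC B hB) _
        _ = c' * C * μ B := (mul_assoc _ _ _).symm
  | pred n ih =>
      obtain ⟨C, hCT, hC⟩ := ih
      refine ⟨c * C, ENNReal.mul_ne_top hcT hCT, fun B hB => ?_⟩
      have h1 : ⇑(e ^ (-(n:ℤ)-1)) '' B = ⇑e ⁻¹' (⇑(e ^ (-(n:ℤ))) '' B) := by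
        have h2 := aux_img e (-1) (-(n:ℤ)) B
        have h3 : ⇑(e ^ (-1 : ℤ)) = ⇑e.symm := by
          rw [zpow_neg_one, Equiv.Perm.inv_def]
        rw [h3] at h2
        rw [sub_eq_add_neg, add_comm, ← h2, Equiv.image_eq_preimage_symm, Equiv.symm_symm]
      rw [h1]
      calc μ (⇑e ⁻¹' (⇑(e ^ (-(n:ℤ))) '' B)) ≤ c * μ (⇑(e ^ (-(n:ℤ))) '' B) :=
            hb _ (aux_meas_img he he' _ hB)
        _ ≤ c * (C * μ B) := mul_le_mul_right (hC B hB) _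
        _ = c * C * μ B := (mul_assoc _ _ _).symm

variable {W : Set X} {c c' : ℝ≥0∞}

private theorem aux_step_up (μ : MeasureTheory.Measure X)
    (he : Measurable e) (he' : Measurable e.symm) (hWm : MeasurableSet W)
    (hb' : ∀ B : Set X, MeasurableSet B → μ (⇑e '' B) ≤ c' * μ B) (k : ℤ) :
    μ (⇑(e ^ (k+1)) '' W) ≤ c' * μ (⇑(e ^ k) '' W) := by
  have h1 : ⇑(e ^ (k+1)) '' W = ⇑e '' (⇑(e ^ k) '' W) := by
    have h2 := aux_img e 1 k W; rw [zpow_one] at h2; rw [h2, add_comm]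
  rw [h1]; exact hb' _ (aux_meas_img he he' _ hWm)

private theorem aux_step_down (μ : MeasureTheory.Measure X)
    (he : Measurable e) (he' : Measurable e.symm) (hWm : MeasurableSet W)
    (hb : ∀ B : Set X, MeasurableSet B → μ (⇑e ⁻¹' B) ≤ c * μ B) (k : ℤ) :
    μ (⇑(e ^ k) '' W) ≤ c * μ (⇑(e ^ (k+1)) '' W) := by
  have h1 : ⇑(e ^ (k+1)) '' W = ⇑e '' (⇑(e ^ k) '' W) := by
    have h2 := aux_img e 1 k W; rw [zpow_one] at h2; rw [h2, add_comm]
  have h3 : ⇑(e ^ k) '' W = ⇑e ⁻¹' (⇑(e ^ (k+1)) '' W) := by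
    rw [h1, Equiv.preimage_image]
  rw [h3]; exact hb _ (aux_meas_img he he' _ hWm)

private theorem aux_w_posfin (μ : MeasureTheory.Measure X)
    (he : Measurable e) (he' : Measurable e.symm)
    (hcT : c ≠ ⊤) (hc'T : c' ≠ ⊤) (hWm : MeasurableSet W)
    (hW0 : 0 < μ W) (hWfin : μ W ≠ ⊤)
    (hb : ∀ B : Set X, MeasurableSet B → μ (⇑e ⁻¹' B) ≤ c * μ B)
    (hb' : ∀ B : Set X, MeasurableSet B → μ (⇑e '' B) ≤ c' * μ B) :
    ∀ k : ℤ, 0 < μ (⇑(e ^ k) '' W) ∧ μ (⇑(e ^ k) '' W) ≠ ⊤ := by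
  have base : 0 < μ (⇑(e ^ (0:ℤ)) '' W) ∧ μ (⇑(e ^ (0:ℤ)) '' W) ≠ ⊤ := by
    simpa [Equiv.Perm.coe_one] using ⟨hW0, hWfin⟩
  intro k
  induction k using Int.induction_on with
  | zero => exact base
  | succ n ih =>
      constructor
      · by_contra h
        push_neg at h
        have h0 : μ (⇑(e ^ ((n:ℤ)+1)) '' W) = 0 := le_antisymm h (zero_le)
        have h4 := aux_step_down μ he he' hWm hb (n:ℤ)
        rw [h0, mul_zero] at h4
        exact absurd (le_antisymm h4 (zero_le)) ih.1.ne'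
      · have h4 := aux_step_up μ he he' hWm hb' (n:ℤ)
        exact ne_top_of_le_ne_top (ENNReal.mul_ne_top hc'T ih.2) h4
  | pred n ih =>
      have heq : (-(n:ℤ) - 1) + 1 = -(n:ℤ) := by ring
      constructor
      · by_contra h
        push_neg at h
        have h0 : μ (⇑(e ^ (-(n:ℤ)-1)) '' W) = 0 := le_antisymm h (zero_le)
        have h4 := aux_step_up μ he he' hWm hb' (-(n:ℤ)-1)
        rw [heq, h0, mul_zero] at h4
        exact absurd (le_antisymm h4 (zero_le)) ih.1.ne'
      · have h4 := aux_step_down μ he he' hWm hb (-(n:ℤ)-1)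
        rw [heq] at h4
        exact ne_top_of_le_ne_top (ENNReal.mul_ne_top hcT ih.2) h4

private theorem aux_pow_up
    {μ : MeasureTheory.Measure X}
    (hstep' : ∀ k : ℤ, μ (⇑(e ^ (k+1)) '' W) ≤ c' * μ (⇑(e ^ k) '' W)) :
    ∀ (j : ℤ) (d : ℕ), μ (⇑(e ^ (j + (d:ℤ))) '' W) ≤ c' ^ d * μ (⇑(e ^ j) '' W) := by
  intro j d
  induction d with
  | zero => simp
  | succ n ih =>
      have h1 : (j + ((n+1 : ℕ) : ℤ)) = (j + (n:ℤ)) + 1 := by push_cast; ring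
      rw [h1]
      calc μ (⇑(e ^ ((j + (n:ℤ)) + 1)) '' W) ≤ c' * μ (⇑(e ^ (j + (n:ℤ))) '' W) := hstep' _
        _ ≤ c' * (c' ^ n * μ (⇑(e ^ j) '' W)) := mul_le_mul_right ih _
        _ = c' ^ (n+1) * μ (⇑(e ^ j) '' W) := by ring

private theorem aux_pow_down
    {μ : MeasureTheory.Measure X}
    (hstep : ∀ k : ℤ, μ (⇑(e ^ k) '' W) ≤ c * μ (⇑(e ^ (k+1)) '' W)) :
    ∀ (j : ℤ) (d : ℕ), μ (⇑(e ^ (j - (d:ℤ))) '' W) ≤ c ^ d * μ (⇑(e ^ j) '' W) := by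
  intro j d
  induction d with
  | zero => simp
  | succ n ih =>
      have h1 : (j - ((n+1 : ℕ) : ℤ)) + 1 = j - (n:ℤ) := by push_cast; ring
      calc μ (⇑(e ^ (j - ((n+1:ℕ):ℤ))) '' W)
          ≤ c * μ (⇑(e ^ ((j - ((n+1:ℕ):ℤ)) + 1)) '' W) := hstep _
        _ = c * μ (⇑(e ^ (j - (n:ℤ))) '' W) := by rw [h1]
        _ ≤ c * (c ^ n * μ (⇑(e ^ j) '' W)) := mul_le_mul_right ih _
        _ = c ^ (n+1) * μ (⇑(e ^ j) '' W) := by ring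

private theorem aux_ratio (μ : MeasureTheory.Measure X)
    (he : Measurable e) (he' : Measurable e.symm)
    (hWm : MeasurableSet W) (hW0 : 0 < μ W) (hWfin : μ W ≠ ⊤)
    (K : ℝ≥0∞) (hK0 : 0 < K) (hKT : K ≠ ⊤)
    (hbd : ∀ (k : ℤ) (B : Set X), MeasurableSet B → B ⊆ W →
        K⁻¹ * (μ (⇑(e ^ k) '' W) * μ B) ≤ μ (⇑(e ^ k) '' B) * μ W ∧
        μ (⇑(e ^ k) '' B) * μ W ≤ K * (μ (⇑(e ^ k) '' W) * μ B))
    (j m : ℤ) (B : Set X) (hB : MeasurableSet B)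
    (hBsub : B ⊆ ⇑(e ^ j) '' W) :
    μ (⇑(e ^ (j+m)) '' W) * μ B ≤ (K * K) * (μ (⇑(e ^ j) '' W) * μ (⇑(e ^ m) '' B)) ∧
    μ (⇑(e ^ j) '' W) * μ (⇑(e ^ m) '' B) ≤ (K * K) * (μ (⇑(e ^ (j+m)) '' W) * μ B) := by
  set B' : Set X := ⇑(e ^ (-j)) '' B with hB'def
  have hB'm : MeasurableSet B' := aux_meas_img he he' _ hB
  have hjB' : ⇑(e ^ j) '' B' = B := by
    rw [hB'def, aux_img, add_neg_cancel, zpow_zero, Equiv.Perm.coe_one, Set.image_id]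
  have hB'W : B' ⊆ W := by
    rw [hB'def]
    intro x hx
    obtain ⟨y, hy, rfl⟩ := hx
    obtain ⟨z, hz, hzy⟩ := hBsub hy
    have h5 : ⇑(e ^ (-j)) (⇑(e ^ j) z) = z := by
      have h6 := congrFun (Equiv.Perm.coe_mul (e ^ (-j)) (e ^ j)) z
      simp only [Function.comp] at h6
      rw [← h6, ← zpow_add, neg_add_cancel, zpow_zero, Equiv.Perm.coe_one, id]
    rw [← hzy, h5]; exact hz
  have hmB : ⇑(e ^ (j+m)) '' B' = ⇑(e ^ m) '' B := by
    have harith : j + m + -j = m := by ring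
    rw [hB'def, aux_img, harith]
  have h1 := hbd j B' hB'm hB'W
  have h2 := hbd (j+m) B' hB'm hB'W
  rw [hjB'] at h1
  rw [hmB] at h2
  set wj := μ (⇑(e ^ j) '' W)
  set wjm := μ (⇑(e ^ (j+m)) '' W)
  set b := μ B
  set b' := μ B'
  set mb := μ (⇑(e ^ m) '' B)
  set w0 := μ W
  have hw00 : w0 ≠ 0 := hW0.ne'
  have hKK : K⁻¹ * K = 1 := ENNReal.inv_mul_cancel hK0.ne' hKT
  have h1a : wj * b' ≤ K * (b * w0) := by
    have h7 := mul_le_mul_right h1.1 K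
    rwa [← mul_assoc, mul_comm K K⁻¹, hKK, one_mul] at h7
  have h2a : wjm * b' ≤ K * (mb * w0) := by
    have h7 := mul_le_mul_right h2.1 K
    rwa [← mul_assoc, mul_comm K K⁻¹, hKK, one_mul] at h7
  constructor
  · refine aux_cancel hw00 hWfin ?_
    calc wjm * b * w0 = wjm * (b * w0) := by ring
      _ ≤ wjm * (K * (wj * b')) := mul_le_mul_right h1.2 _
      _ = K * wj * (wjm * b') := by ring
      _ ≤ K * wj * (K * (mb * w0)) := mul_le_mul_right h2a _
      _ = K * K * (wj * mb) * w0 := by ring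
  · refine aux_cancel hw00 hWfin ?_
    calc wj * mb * w0 = wj * (mb * w0) := by ring
      _ ≤ wj * (K * (wjm * b')) := mul_le_mul_right h2.2 _
      _ = K * wjm * (wj * b') := by ring
      _ ≤ K * wjm * (K * (b * w0)) := mul_le_mul_right h1a _
      _ = K * K * (wjm * b) * w0 := by ring

private theorem aux_dec (μ : MeasureTheory.Measure X)
    (he : Measurable e) (he' : Measurable e.symm) (hWm : MeasurableSet W)
    (hcover : (⋃ k : ℤ, ⇑(e ^ k) '' W) = Set.univ)
    (hdisj : Pairwise (fun k l : ℤ => Disjoint (⇑(e ^ k) '' W) (⇑(e ^ l) '' W)))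
    (ρ : MeasureTheory.Measure X) (g : X → ℝ≥0∞) :
    ∫⁻ x, g x ∂ρ = ∑' j : ℤ, ∫⁻ x in ⇑(e ^ j) '' W, g x ∂ρ := by
  have h1 : ρ.restrict (⋃ k : ℤ, ⇑(e ^ k) '' W) =
      Measure.sum fun j : ℤ => ρ.restrict (⇑(e ^ j) '' W) :=
    Measure.restrict_iUnion hdisj (fun j => aux_meas_img he he' j hWm)
  calc ∫⁻ x, g x ∂ρ = ∫⁻ x, g x ∂(ρ.restrict Set.univ) := by rw [Measure.restrict_univ]
    _ = ∫⁻ x, g x ∂(ρ.restrict (⋃ k : ℤ, ⇑(e ^ k) '' W)) := by rw [hcover]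
    _ = ∑' j : ℤ, ∫⁻ x in ⇑(e ^ j) '' W, g x ∂ρ := by rw [h1, lintegral_sum_measure]

private theorem aux_core
    (μ : MeasureTheory.Measure X)
    (he : Measurable e) (he' : Measurable e.symm)
    (c c' : ℝ≥0∞) (hcT : c ≠ ⊤) (hc'T : c' ≠ ⊤)
    (hb : ∀ B : Set X, MeasurableSet B → μ (⇑e ⁻¹' B) ≤ c * μ B)
    (hb' : ∀ B : Set X, MeasurableSet B → μ (⇑e '' B) ≤ c' * μ B)
    (hWm : MeasurableSet W) (hW0 : 0 < μ W) (hWfin : μ W ≠ ⊤)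
    (hcover : (⋃ k : ℤ, ⇑(e ^ k) '' W) = Set.univ)
    (hdisj : Pairwise (fun k l : ℤ => Disjoint (⇑(e ^ k) '' W) (⇑(e ^ l) '' W)))
    (K : ℝ≥0∞) (hK0 : 0 < K) (hKT : K ≠ ⊤)
    (hbd : ∀ (k : ℤ) (B : Set X), MeasurableSet B → B ⊆ W →
        K⁻¹ * (μ (⇑(e ^ k) '' W) * μ B) ≤ μ (⇑(e ^ k) '' B) * μ W ∧
        μ (⇑(e ^ k) '' B) * μ W ≤ K * (μ (⇑(e ^ k) '' W) * μ B))
    (hwpos : ∀ k : ℤ, 0 < μ (⇑(e ^ k) '' W) ∧ μ (⇑(e ^ k) '' W) ≠ ⊤)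
    (q : ℝ) (hq0 : 0 < q)
    (m : ℤ) (Z : Set ℤ) (φ : X → ℂ) (haem : AEMeasurable φ μ) :
    (⨅ j ∈ Z, μ (⇑(e ^ (j - m)) '' W) / μ (⇑(e ^ j) '' W)) *
      ∑' (j : Z), (∫⁻ x in ⇑(e ^ (j : ℤ)) '' W, (‖φ x‖₊ : ℝ≥0∞) ^ q ∂μ)
    ≤ (K * K) * ∫⁻ x, (‖φ (⇑(e ^ m) x)‖₊ : ℝ≥0∞) ^ q ∂μ := by
  classical
  set g : X → ℝ≥0∞ := fun x => (‖φ x‖₊ : ℝ≥0∞) ^ q with hgdef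
  have hgaem : AEMeasurable g μ := (haem.nnnorm.coe_nnreal_ennreal).pow_const q
  set ν : MeasureTheory.Measure X := Measure.map (⇑(e ^ m)) μ with hνdef
  have hνap : ∀ B : Set X, MeasurableSet B → ν B = μ (⇑(e ^ (-m)) '' B) := by
    intro B hB
    rw [hνdef, Measure.map_apply (aux_me he he' m) hB]
    congr 1
    rw [Equiv.image_eq_preimage_symm]
    congr 1
    rw [← Equiv.Perm.inv_def, ← zpow_neg, neg_neg]
  have hAC : ν ≪ μ := by
    obtain ⟨C, hCT, hC⟩ := aux_imgC μ he he' c c' hcT hc'T hb hb' (-m)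
    refine Measure.AbsolutelyContinuous.mk (fun s hs h0 => ?_)
    rw [hνap s hs]
    exact le_antisymm (by simpa [h0] using hC s hs) (zero_le)
  have hCoV : ∫⁻ x, g (⇑(e ^ m) x) ∂μ = ∫⁻ y, g y ∂ν := by
    rw [hνdef, lintegral_map' (hgaem.mono_ac hAC) (aux_me he he' m).aemeasurable]
  have hblock : ∀ j : ℤ,
      μ (⇑(e ^ (j - m)) '' W) * (∫⁻ x in ⇑(e ^ j) '' W, g x ∂μ)
        ≤ (K * K) * (μ (⇑(e ^ j) '' W) * ∫⁻ x in ⇑(e ^ j) '' W, g x ∂ν) := by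
    intro j
    have hle : (μ (⇑(e ^ (j - m)) '' W)) • (μ.restrict (⇑(e ^ j) '' W)) ≤
        ((K * K) * μ (⇑(e ^ j) '' W)) • (ν.restrict (⇑(e ^ j) '' W)) := by
      refine Measure.le_intro (fun s hs _ => ?_)
      have hWj : MeasurableSet (⇑(e ^ j) '' W) := aux_meas_img he he' j hWm
      have hsm : MeasurableSet (s ∩ ⇑(e ^ j) '' W) := hs.inter hWj
      have hsub : s ∩ ⇑(e ^ j) '' W ⊆ ⇑(e ^ j) '' W := Set.inter_subset_right
      have hr := (aux_ratio μ he he' hWm hW0 hWfin K hK0 hKT hbd j (-m)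
        (s ∩ ⇑(e ^ j) '' W) hsm hsub).1
      rw [Measure.smul_apply, Measure.smul_apply, Measure.restrict_apply hs,
        Measure.restrict_apply hs, smul_eq_mul, smul_eq_mul]
      rw [hνap _ hsm]
      calc μ (⇑(e ^ (j - m)) '' W) * μ (s ∩ ⇑(e ^ j) '' W)
          = μ (⇑(e ^ (j + -m)) '' W) * μ (s ∩ ⇑(e ^ j) '' W) := by rw [sub_eq_add_neg]
        _ ≤ (K * K) * (μ (⇑(e ^ j) '' W) * μ (⇑(e ^ (-m)) '' (s ∩ ⇑(e ^ j) '' W))) := hr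
        _ = (K * K) * μ (⇑(e ^ j) '' W) * μ (⇑(e ^ (-m)) '' (s ∩ ⇑(e ^ j) '' W)) := by ring
    have h8 := lintegral_mono' hle (le_refl g)
    rwa [lintegral_smul_measure, lintegral_smul_measure, smul_eq_mul, smul_eq_mul, mul_assoc] at h8
  have hdiv : ∀ j : ℤ,
      (μ (⇑(e ^ (j - m)) '' W) / μ (⇑(e ^ j) '' W)) * (∫⁻ x in ⇑(e ^ j) '' W, g x ∂μ)
        ≤ (K * K) * ∫⁻ x in ⇑(e ^ j) '' W, g x ∂ν := by
    intro j
    have hj0 := (hwpos j).1.ne'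
    have hjT := (hwpos j).2
    calc (μ (⇑(e ^ (j - m)) '' W) / μ (⇑(e ^ j) '' W)) * (∫⁻ x in ⇑(e ^ j) '' W, g x ∂μ)
        = (μ (⇑(e ^ (j - m)) '' W) * ∫⁻ x in ⇑(e ^ j) '' W, g x ∂μ) / μ (⇑(e ^ j) '' W) := by
          rw [div_eq_mul_inv, div_eq_mul_inv, mul_right_comm]
      _ ≤ ((K * K) * (μ (⇑(e ^ j) '' W) * ∫⁻ x in ⇑(e ^ j) '' W, g x ∂ν)) / μ (⇑(e ^ j) '' W) :=
          ENNReal.div_le_div_right (hblock j) _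
      _ = ((K * K) * ∫⁻ x in ⇑(e ^ j) '' W, g x ∂ν) * μ (⇑(e ^ j) '' W) / μ (⇑(e ^ j) '' W) := by
          ring_nf
      _ = ((K * K) * ∫⁻ x in ⇑(e ^ j) '' W, g x ∂ν) * (μ (⇑(e ^ j) '' W) / μ (⇑(e ^ j) '' W)) :=
          mul_div_assoc _ _ _
      _ = (K * K) * ∫⁻ x in ⇑(e ^ j) '' W, g x ∂ν := by
          rw [ENNReal.div_self hj0 hjT, mul_one]
  have hIc : ∫⁻ x, (‖φ (⇑(e ^ m) x)‖₊ : ℝ≥0∞) ^ q ∂μ = ∫⁻ y, g y ∂ν := hCoV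
  rw [hIc]
  calc (⨅ j ∈ Z, μ (⇑(e ^ (j - m)) '' W) / μ (⇑(e ^ j) '' W)) *
        ∑' (j : Z), (∫⁻ x in ⇑(e ^ (j : ℤ)) '' W, g x ∂μ)
      = ∑' (j : Z), (⨅ i ∈ Z, μ (⇑(e ^ (i - m)) '' W) / μ (⇑(e ^ i) '' W)) *
          (∫⁻ x in ⇑(e ^ (j : ℤ)) '' W, g x ∂μ) := ENNReal.tsum_mul_left.symm
    _ ≤ ∑' (j : Z), (K * K) * ∫⁻ x in ⇑(e ^ (j : ℤ)) '' W, g x ∂ν := by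
        refine ENNReal.tsum_le_tsum (fun j => ?_)
        refine le_trans (mul_le_mul_left ?_ _) (hdiv (j : ℤ))
        exact iInf₂_le (j : ℤ) j.2
    _ = (K * K) * ∑' (j : Z), ∫⁻ x in ⇑(e ^ (j : ℤ)) '' W, g x ∂ν := ENNReal.tsum_mul_left
    _ ≤ (K * K) * ∑' (j : ℤ), ∫⁻ x in ⇑(e ^ j) '' W, g x ∂ν := by
        refine mul_le_mul_right ?_ _
        rw [tsum_subtype Z (fun j : ℤ => ∫⁻ x in ⇑(e ^ j) '' W, g x ∂ν)]
        exact ENNReal.tsum_le_tsum (fun j => Set.indicator_le_self _ _ j)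
    _ = (K * K) * ∫⁻ y, g y ∂ν := by
        rw [← aux_dec μ he he' hWm hcover hdisj ν g]

end Dyn

/-- normalized indicator of the `k`-th block -/
private noncomputable def blockFn {X : Type*} [MeasurableSpace X] (μ : MeasureTheory.Measure X) (e : Equiv.Perm X)
    (W : Set X) (q : ℝ) (k : ℤ) : X → ℂ :=
  (⇑(e ^ k) '' W).indicator
    (fun _ => ((((μ (⇑(e ^ k) '' W)) ^ (-q⁻¹ : ℝ)).toNNReal : ℝ) : ℂ))

section Sgl
variable {X : Type*} [MeasurableSpace X] {μ : MeasureTheory.Measure X} {e : Equiv.Perm X}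
  {W : Set X}

private theorem aux_single
    (he : Measurable e) (he' : Measurable e.symm) (hWm : MeasurableSet W)
    (hwpos : ∀ k : ℤ, 0 < μ (⇑(e ^ k) '' W) ∧ μ (⇑(e ^ k) '' W) ≠ ⊤)
    (p : ℝ≥0∞) (hp0 : p ≠ 0) (hpT : p ≠ ⊤) (hq0 : 0 < p.toReal)
    (k m : ℤ) :
    eLpNorm ((blockFn μ e W p.toReal k) ∘ ⇑(e ^ m)) p μ
      = ((μ (⇑(e ^ k) '' W))⁻¹ * μ (⇑(e ^ (k - m)) '' W)) ^ (1 / p.toReal) := by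
  classical
  set q := p.toReal
  have hqne : q ≠ 0 := hq0.ne'
  set S := ⇑(e ^ k) '' W with hSdef
  set wk := μ (⇑(e ^ k) '' W) with hwkdef
  set t : ℝ≥0 := (wk ^ (-q⁻¹ : ℝ)).toNNReal with htdef
  have hwk0 : wk ≠ 0 := (hwpos k).1.ne'
  have hwkT : wk ≠ ⊤ := (hwpos k).2
  have htT : wk ^ (-q⁻¹ : ℝ) ≠ ⊤ := by
    rw [Ne, ENNReal.rpow_eq_top_iff]
    push_neg
    exact ⟨fun h => absurd h hwk0, fun h => absurd h hwkT⟩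
  have htcoe : (t : ℝ≥0∞) = wk ^ (-q⁻¹ : ℝ) := ENNReal.coe_toNNReal htT
  have hcomp : (blockFn μ e W q k) ∘ ⇑(e ^ m)
      = (⇑(e ^ (k - m)) '' W).indicator (fun _ => ((t : ℝ) : ℂ)) := by
    funext x
    have h1 : (⇑(e ^ m)) ⁻¹' S = ⇑(e ^ (k - m)) '' W := by
      have h2 : ⇑(e ^ m) '' (⇑(e ^ (k - m)) '' W) = S := by
        rw [aux_img e m (k - m) W]
        congr 2
        ring
      rw [← h2, Equiv.preimage_image]
    calc ((blockFn μ e W q k) ∘ ⇑(e ^ m)) x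
        = ((⇑(e ^ m)) ⁻¹' S).indicator (fun _ => ((t : ℝ) : ℂ)) x :=
          (Set.indicator_comp_right (⇑(e ^ m)) (g := fun _ => ((t : ℝ) : ℂ))
            (s := S) (x := x))
      _ = (⇑(e ^ (k - m)) '' W).indicator (fun _ => ((t : ℝ) : ℂ)) x := by rw [h1]
  have hnorm : ∀ (T : Set X) (x : X),
      (‖T.indicator (fun _ => ((t : ℝ) : ℂ)) x‖₊ : ℝ≥0∞) ^ q
        = T.indicator (fun _ => ((t : ℝ≥0∞)) ^ q) x := by
    intro T x
    by_cases hx : x ∈ T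
    · simp only [Set.indicator_of_mem hx]
      congr 1
      rw [Complex.nnnorm_real, NNReal.nnnorm_eq]
    · simp only [Set.indicator_of_notMem hx, nnnorm_zero, ENNReal.coe_zero]
      exact ENNReal.zero_rpow_of_pos hq0
  rw [eLpNorm_eq_lintegral_rpow_enorm_toReal hp0 hpT, hcomp]
  simp only [enorm_eq_nnnorm]
  have hTm : MeasurableSet (⇑(e ^ (k - m)) '' W) := aux_meas_img he he' _ hWm
  have h9 : ∫⁻ x, (‖(⇑(e ^ (k - m)) '' W).indicator (fun _ => ((t : ℝ) : ℂ)) x‖₊ : ℝ≥0∞) ^ q ∂μ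
      = ((t : ℝ≥0∞)) ^ q * μ (⇑(e ^ (k - m)) '' W) := by
    calc ∫⁻ x, (‖(⇑(e ^ (k - m)) '' W).indicator (fun _ => ((t : ℝ) : ℂ)) x‖₊ : ℝ≥0∞) ^ q ∂μ
        = ∫⁻ x, (⇑(e ^ (k - m)) '' W).indicator (fun _ => ((t : ℝ≥0∞)) ^ q) x ∂μ := by
          congr 1; funext x; exact hnorm _ x
      _ = ((t : ℝ≥0∞)) ^ q * μ (⇑(e ^ (k - m)) '' W) := lintegral_indicator_const hTm _
  rw [h9]
  congr 2
  rw [htcoe, ← ENNReal.rpow_mul]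
  have harith : (-q⁻¹) * q = -1 := by field_simp
  rw [harith, ENNReal.rpow_neg_one]

private theorem aux_block_mem
    (he : Measurable e) (he' : Measurable e.symm) (hWm : MeasurableSet W)
    (hwpos : ∀ k : ℤ, 0 < μ (⇑(e ^ k) '' W) ∧ μ (⇑(e ^ k) '' W) ≠ ⊤)
    (p : ℝ≥0∞) (hp0 : p ≠ 0) (hpT : p ≠ ⊤) (hq0 : 0 < p.toReal) (k : ℤ) :
    MemLp (blockFn μ e W p.toReal k) p μ ∧ eLpNorm (blockFn μ e W p.toReal k) p μ = 1 := by
  have hid : ⇑(e ^ (0:ℤ)) = id := by rw [zpow_zero, Equiv.Perm.coe_one]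
  have hcompid : (blockFn μ e W p.toReal k) ∘ ⇑(e ^ (0:ℤ)) = blockFn μ e W p.toReal k := by
    rw [hid]; rfl
  have h1 := aux_single he he' hWm hwpos p hp0 hpT hq0 k 0
  rw [hcompid, sub_zero, ENNReal.inv_mul_cancel (hwpos k).1.ne' (hwpos k).2,
    ENNReal.one_rpow] at h1
  have hmeas : Measurable (blockFn μ e W p.toReal k) :=
    measurable_const.indicator (aux_meas_img he he' k hWm)
  exact ⟨⟨hmeas.aestronglyMeasurable, by rw [h1]; exact one_lt_top⟩, h1⟩

end Sgl

/-- Theorem ED(4): for a dissipative composition dynamical system of bounded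
distortion generated by `W`, with `T_f` invertible, `T_f` is uniformly
expansive iff one of the conditions UE1, UE2, UE3 holds. -/
theorem stmt_9
    {X : Type*} [MeasurableSpace X] (μ : MeasureTheory.Measure X) [MeasureTheory.SigmaFinite μ]
    (p : ℝ≥0∞) (hp1 : 1 ≤ p) (hpT : p ≠ ⊤)
    (e : Equiv.Perm X) (he : Measurable e) (he' : Measurable e.symm)
    (c c' : ℝ≥0∞) (hc : 0 < c) (hcT : c ≠ ⊤) (hc' : 0 < c') (hc'T : c' ≠ ⊤)
    (hb : ∀ B : Set X, MeasurableSet B → μ (⇑e ⁻¹' B) ≤ c * μ B)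
    (hb' : ∀ B : Set X, MeasurableSet B → μ (⇑e '' B) ≤ c' * μ B)
    (W : Set X) (hWm : MeasurableSet W) (hW0 : 0 < μ W) (hWfin : μ W ≠ ⊤)
    (hcover : (⋃ k : ℤ, ⇑(e ^ k) '' W) = Set.univ)
    (hdisj : Pairwise (fun k l : ℤ => Disjoint (⇑(e ^ k) '' W) (⇑(e ^ l) '' W)))
    (K : ℝ≥0∞) (hK0 : 0 < K) (hKT : K ≠ ⊤)
    (hbd : ∀ (k : ℤ) (B : Set X), MeasurableSet B → B ⊆ W →
        K⁻¹ * (μ (⇑(e ^ k) '' W) * μ B) ≤ μ (⇑(e ^ k) '' B) * μ W ∧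
        μ (⇑(e ^ k) '' B) * μ W ≤ K * (μ (⇑(e ^ k) '' W) * μ B)) :
    -- uniform expansivity: the unit sphere of `L^p` splits as `𝓐 ∪ 𝓒`
    (∃ A C : Set (X → ℂ),
        {φ : X → ℂ | MemLp φ p μ ∧ eLpNorm φ p μ = 1} = A ∪ C ∧
        (∀ M : ℝ≥0∞, M ≠ ⊤ → ∃ N : ℕ, ∀ n ≥ N,
          (∀ φ ∈ A, M ≤ eLpNorm (φ ∘ ⇑(e ^ (n : ℤ))) p μ) ∧
          (∀ φ ∈ C, M ≤ eLpNorm (φ ∘ ⇑(e ^ (-(n : ℤ)))) p μ))) ↔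
    -- UE1 ∨ UE2 ∨ UE3
    (Filter.Tendsto
        (fun n : ℕ => ⨅ k : ℤ, μ (⇑(e ^ (k + (n : ℤ))) '' W) / μ (⇑(e ^ k) '' W))
        Filter.atTop (nhds ⊤) ∨
     Filter.Tendsto
        (fun n : ℕ => ⨅ k : ℤ, μ (⇑(e ^ (k - (n : ℤ))) '' W) / μ (⇑(e ^ k) '' W))
        Filter.atTop (nhds ⊤) ∨
     (Filter.Tendsto
        (fun n : ℕ => ⨅ k ∈ Set.Ici (1 : ℤ),
          μ (⇑(e ^ (k + (n : ℤ))) '' W) / μ (⇑(e ^ k) '' W))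
        Filter.atTop (nhds ⊤) ∧
      Filter.Tendsto
        (fun n : ℕ => ⨅ k ∈ Set.Iic (0 : ℤ),
          μ (⇑(e ^ (k - (n : ℤ))) '' W) / μ (⇑(e ^ k) '' W))
        Filter.atTop (nhds ⊤))) := by
  classical
  have hp0 : p ≠ 0 := by intro h; rw [h] at hp1; simp at hp1
  have hq0 : 0 < p.toReal := ENNReal.toReal_pos hp0 hpT
  have hwpos : ∀ k : ℤ, 0 < μ (⇑(e ^ k) '' W) ∧ μ (⇑(e ^ k) '' W) ≠ ⊤ :=
    aux_w_posfin μ he he' hcT hc'T hWm hW0 hWfin hb hb'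
  have hKK0 : K * K ≠ 0 := mul_ne_zero hK0.ne' hK0.ne'
  have hKKT : K * K ≠ ⊤ := ENNReal.mul_ne_top hKT hKT
  have hsphere : ∀ φ : X → ℂ, MemLp φ p μ → eLpNorm φ p μ = 1 →
      ∑' (j : ℤ), ∫⁻ x in ⇑(e ^ j) '' W, (‖φ x‖₊ : ℝ≥0∞) ^ p.toReal ∂μ = 1 := by
    intro φ hmem h1
    rw [← aux_dec μ he he' hWm hcover hdisj μ _]
    rw [eLpNorm_eq_lintegral_rpow_enorm_toReal hp0 hpT] at h1
    have h2 := congrArg (fun z : ℝ≥0∞ => z ^ p.toReal) h1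
    rwa [aux_rpow_rpow hq0, ENNReal.one_rpow] at h2
  constructor
  · -- uniform expansivity implies UE1 ∨ UE2 ∨ UE3
    rintro ⟨A, C, hsplit, hU⟩
    have hmem : ∀ k : ℤ, MemLp (blockFn μ e W p.toReal k) p μ ∧
        eLpNorm (blockFn μ e W p.toReal k) p μ = 1 :=
      fun k => aux_block_mem he he' hWm hwpos p hp0 hpT hq0 k
    set ZA : Set ℤ := {k | blockFn μ e W p.toReal k ∈ A} with hZAdef
    have hinC : ∀ k, k ∉ ZA → blockFn μ e W p.toReal k ∈ C := by
      intro k hk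
      have h3 : blockFn μ e W p.toReal k ∈ A ∪ C := by
        rw [← hsplit]; exact hmem k
      rcases h3 with h | h
      · exact absurd h hk
      · exact h
    -- uniform multiplicative ratio bounds
    have hUA : ∀ b : ℝ≥0∞, b ≠ ⊤ → ∃ N : ℕ, ∀ n ≥ N, ∀ k ∈ ZA,
        b * μ (⇑(e ^ k) '' W) ≤ μ (⇑(e ^ (k - (n:ℤ))) '' W) := by
      intro b hbT
      obtain ⟨N, hN⟩ := hU (b ^ (1/p.toReal)) (aux_rpow_inv_ne_top hq0 hbT)
      refine ⟨N, fun n hn k hk => ?_⟩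
      have h1 := (hN n hn).1 _ hk
      rw [aux_single he he' hWm hwpos p hp0 hpT hq0 k ((n:ℤ))] at h1
      have h2 := aux_rpow_le hq0 h1
      rw [aux_rpow_rpow hq0] at h2
      calc b * μ (⇑(e ^ k) '' W)
          ≤ ((μ (⇑(e ^ k) '' W))⁻¹ * μ (⇑(e ^ (k - (n:ℤ))) '' W)) * μ (⇑(e ^ k) '' W) :=
            mul_le_mul_left h2 _
        _ = μ (⇑(e ^ (k - (n:ℤ))) '' W) * ((μ (⇑(e ^ k) '' W))⁻¹ * μ (⇑(e ^ k) '' W)) := by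
            ring
        _ = μ (⇑(e ^ (k - (n:ℤ))) '' W) := by
            rw [ENNReal.inv_mul_cancel (hwpos k).1.ne' (hwpos k).2, mul_one]
    have hUC : ∀ b : ℝ≥0∞, b ≠ ⊤ → ∃ N : ℕ, ∀ n ≥ N, ∀ k, k ∉ ZA →
        b * μ (⇑(e ^ k) '' W) ≤ μ (⇑(e ^ (k + (n:ℤ))) '' W) := by
      intro b hbT
      obtain ⟨N, hN⟩ := hU (b ^ (1/p.toReal)) (aux_rpow_inv_ne_top hq0 hbT)
      refine ⟨N, fun n hn k hk => ?_⟩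
      have h1 := (hN n hn).2 _ (hinC k hk)
      rw [aux_single he he' hWm hwpos p hp0 hpT hq0 k (-(n:ℤ)), sub_neg_eq_add] at h1
      have h2 := aux_rpow_le hq0 h1
      rw [aux_rpow_rpow hq0] at h2
      calc b * μ (⇑(e ^ k) '' W)
          ≤ ((μ (⇑(e ^ k) '' W))⁻¹ * μ (⇑(e ^ (k + (n:ℤ))) '' W)) * μ (⇑(e ^ k) '' W) :=
            mul_le_mul_left h2 _
        _ = μ (⇑(e ^ (k + (n:ℤ))) '' W) * ((μ (⇑(e ^ k) '' W))⁻¹ * μ (⇑(e ^ k) '' W)) := by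
            ring
        _ = μ (⇑(e ^ (k + (n:ℤ))) '' W) := by
            rw [ENNReal.inv_mul_cancel (hwpos k).1.ne' (hwpos k).2, mul_one]
    by_cases hZAu : ZA = Set.univ
    · -- UE2
      right; left
      refine aux_tendsto_top (fun b hbT => ?_)
      obtain ⟨N, hN⟩ := hUA b hbT
      refine ⟨N, fun n hn => le_iInf (fun k => ?_)⟩
      refine (ENNReal.le_div_iff_mul_le (Or.inl (hwpos k).1.ne') (Or.inl (hwpos k).2)).mpr ?_
      exact hN n hn k (by rw [hZAu]; trivial)
    by_cases hZAe : ZA = ∅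
    · -- UE1
      left
      refine aux_tendsto_top (fun b hbT => ?_)
      obtain ⟨N, hN⟩ := hUC b hbT
      refine ⟨N, fun n hn => le_iInf (fun k => ?_)⟩
      refine (ENNReal.le_div_iff_mul_le (Or.inl (hwpos k).1.ne') (Or.inl (hwpos k).2)).mpr ?_
      exact hN n hn k (by rw [hZAe]; exact notMem_empty k)
    · -- both classes nonempty: UE3
      obtain ⟨a₀, ha₀⟩ := Set.nonempty_iff_ne_empty.mpr hZAe
      obtain ⟨c₀, hc₀⟩ : ∃ k, k ∉ ZA := by
        by_contra h
        push_neg at h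
        exact hZAu (Set.eq_univ_of_forall h)
      obtain ⟨Na, hNa⟩ := hUA 2 ENNReal.ofNat_ne_top
      obtain ⟨Nc, hNc⟩ := hUC 2 ENNReal.ofNat_ne_top
      set N₀ : ℕ := max Na Nc with hN₀def
      have hkey : ∀ a ∈ ZA, ∀ k, k ∉ ZA → a < k + (N₀:ℤ) := by
        intro a ha k hk
        by_contra hcon
        push_neg at hcon
        set n : ℕ := (a - k).toNat with hndef
        have hnn : (n:ℤ) = a - k := by
          rw [hndef, Int.toNat_of_nonneg]
          have : (0:ℤ) ≤ (N₀:ℤ) := by positivity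
          omega
        have hnN : N₀ ≤ n := by omega
        have h1 := hNa n (le_trans (le_max_left _ _) hnN) a ha
        have h2 := hNc n (le_trans (le_max_right _ _) hnN) k hk
        have hak : a - (n:ℤ) = k := by omega
        have hka : k + (n:ℤ) = a := by omega
        rw [hak] at h1
        rw [hka] at h2
        -- 2 * w a ≤ w k and 2 * w k ≤ w a
        have h4 : (4:ℝ≥0∞) * μ (⇑(e ^ a) '' W) ≤ 1 * μ (⇑(e ^ a) '' W) := by
          calc (4:ℝ≥0∞) * μ (⇑(e ^ a) '' W) = 2 * (2 * μ (⇑(e ^ a) '' W)) := by ring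
            _ ≤ 2 * μ (⇑(e ^ k) '' W) := mul_le_mul_right h1 _
            _ ≤ μ (⇑(e ^ a) '' W) := h2
            _ = 1 * μ (⇑(e ^ a) '' W) := (one_mul _).symm
        have h5 := aux_cancel (hwpos a).1.ne' (hwpos a).2 h4
        norm_num at h5
      right; right
      -- constants for the transfer argument
      set cmx1 : ℝ≥0∞ := max c 1 with hcmx1def
      set cmx2 : ℝ≥0∞ := max c' 1 with hcmx2def
      have hcmx11 : 1 ≤ cmx1 := le_max_right _ _
      have hcmx21 : 1 ≤ cmx2 := le_max_right _ _
      have hcmx1T : cmx1 ≠ ⊤ := by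
        rw [hcmx1def]; exact (max_lt hcT.lt_top one_lt_top).ne
      have hcmx2T : cmx2 ≠ ⊤ := by
        rw [hcmx2def]; exact (max_lt hc'T.lt_top one_lt_top).ne
      have hcmx10 : cmx1 ≠ 0 := (lt_of_lt_of_le zero_lt_one hcmx11).ne'
      have hcmx20 : cmx2 ≠ 0 := (lt_of_lt_of_le zero_lt_one hcmx21).ne'
      have hstepU : ∀ k : ℤ, μ (⇑(e ^ (k+1)) '' W) ≤ cmx2 * μ (⇑(e ^ k) '' W) :=
        fun k => le_trans (aux_step_up μ he he' hWm hb' k)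
          (mul_le_mul_left (le_max_left _ _) _)
      have hstepD : ∀ k : ℤ, μ (⇑(e ^ k) '' W) ≤ cmx1 * μ (⇑(e ^ (k+1)) '' W) :=
        fun k => le_trans (aux_step_down μ he he' hWm hb k)
          (mul_le_mul_left (le_max_left _ _) _)
      constructor
      · -- F⁺ : forward expansion on k ≥ 1
        set s₁ : ℤ := max (c₀ + (N₀:ℤ)) 1 with hs₁def
        have hs₁A : s₁ ∉ ZA := by
          intro hmem₁
          have := hkey s₁ hmem₁ c₀ hc₀
          have hcle : c₀ + (N₀:ℤ) ≤ s₁ := le_max_left _ _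
          omega
        set D : ℕ := (s₁ - 1).toNat with hDdef
        set E : ℝ≥0∞ := cmx2 ^ D * cmx1 ^ D with hEdef
        have hE1 : 1 ≤ E := by
          rw [hEdef]
          calc (1:ℝ≥0∞) = 1 * 1 := (one_mul _).symm
            _ ≤ cmx2 ^ D * cmx1 ^ D := mul_le_mul' (one_le_pow_of_one_le' hcmx21 D) (one_le_pow_of_one_le' hcmx11 D)
        have hET : E ≠ ⊤ := ENNReal.mul_ne_top (ENNReal.pow_ne_top hcmx2T) (ENNReal.pow_ne_top hcmx1T)
        refine aux_tendsto_top (fun b hbT => ?_)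
        obtain ⟨N, hN⟩ := hUC (E * b) (ENNReal.mul_ne_top hET hbT)
        refine ⟨N, fun n hn => le_iInf (fun k => le_iInf (fun hk => ?_))⟩
        refine (ENNReal.le_div_iff_mul_le (Or.inl (hwpos k).1.ne') (Or.inl (hwpos k).2)).mpr ?_
        by_cases hkZ : k ∈ ZA
        · -- transfer from s₁
          have hks : k < c₀ + (N₀:ℤ) := hkey k hkZ c₀ hc₀
          have hks₁ : k ≤ s₁ := by
            have : c₀ + (N₀:ℤ) ≤ s₁ := le_max_left _ _
            omega
          have h1k : (1:ℤ) ≤ k := hk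
          set d : ℕ := (s₁ - k).toNat with hddef
          have hd : (d:ℤ) = s₁ - k := by rw [hddef, Int.toNat_of_nonneg]; omega
          have hdD : d ≤ D := by
            rw [hddef, hDdef]
            exact Int.toNat_le_toNat (by omega)
          have h3 := hN n hn s₁ hs₁A
          have hup := aux_pow_up hstepU (k + (n:ℤ)) d
          have harg1 : k + (n:ℤ) + (d:ℤ) = s₁ + (n:ℤ) := by omega
          rw [harg1] at hup
          have hdown := aux_pow_down hstepD s₁ d
          have harg2 : s₁ - (d:ℤ) = k := by omega
          rw [harg2] at hdown
          have hchain : cmx2 ^ d * (b * μ (⇑(e ^ k) '' W)) ≤ cmx2 ^ d * μ (⇑(e ^ (k + (n:ℤ))) '' W) := by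
            calc cmx2 ^ d * (b * μ (⇑(e ^ k) '' W))
                ≤ cmx2 ^ d * (b * (cmx1 ^ d * μ (⇑(e ^ s₁) '' W))) :=
                  mul_le_mul_right (mul_le_mul_right hdown _) _
              _ = (cmx2 ^ d * cmx1 ^ d) * (b * μ (⇑(e ^ s₁) '' W)) := by ring
              _ ≤ (cmx2 ^ D * cmx1 ^ D) * (b * μ (⇑(e ^ s₁) '' W)) :=
                  mul_le_mul_left (mul_le_mul' (pow_le_pow_right₀ hcmx21 hdD)
                    (pow_le_pow_right₀ hcmx11 hdD)) _
              _ = (E * b) * μ (⇑(e ^ s₁) '' W) := by rw [hEdef]; ring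
              _ ≤ μ (⇑(e ^ (s₁ + (n:ℤ))) '' W) := h3
              _ ≤ cmx2 ^ d * μ (⇑(e ^ (k + (n:ℤ))) '' W) := hup
          exact (ENNReal.mul_le_mul_iff_right (pow_ne_zero d hcmx20) (ENNReal.pow_ne_top hcmx2T)).mp hchain
        · -- direct
          have h3 := hN n hn k hkZ
          calc b * μ (⇑(e ^ k) '' W) = 1 * (b * μ (⇑(e ^ k) '' W)) := (one_mul _).symm
            _ ≤ E * (b * μ (⇑(e ^ k) '' W)) := mul_le_mul_left hE1 _
            _ = (E * b) * μ (⇑(e ^ k) '' W) := by ring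
            _ ≤ μ (⇑(e ^ (k + (n:ℤ))) '' W) := h3
      · -- B⁻ : backward expansion on k ≤ 0
        set t₁ : ℤ := min (a₀ - (N₀:ℤ)) 0 with ht₁def
        have ht₁A : t₁ ∈ ZA := by
          by_contra ht
          have := hkey a₀ ha₀ t₁ ht
          have htle : t₁ ≤ a₀ - (N₀:ℤ) := min_le_left _ _
          omega
        set D : ℕ := (0 - t₁).toNat with hDdef
        set E : ℝ≥0∞ := cmx1 ^ D * cmx2 ^ D with hEdef
        have hE1 : 1 ≤ E := by
          rw [hEdef]
          calc (1:ℝ≥0∞) = 1 * 1 := (one_mul _).symm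
            _ ≤ cmx1 ^ D * cmx2 ^ D := mul_le_mul' (one_le_pow_of_one_le' hcmx11 D) (one_le_pow_of_one_le' hcmx21 D)
        have hET : E ≠ ⊤ := ENNReal.mul_ne_top (ENNReal.pow_ne_top hcmx1T) (ENNReal.pow_ne_top hcmx2T)
        refine aux_tendsto_top (fun b hbT => ?_)
        obtain ⟨N, hN⟩ := hUA (E * b) (ENNReal.mul_ne_top hET hbT)
        refine ⟨N, fun n hn => le_iInf (fun k => le_iInf (fun hk => ?_))⟩
        refine (ENNReal.le_div_iff_mul_le (Or.inl (hwpos k).1.ne') (Or.inl (hwpos k).2)).mpr ?_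
        by_cases hkZ : k ∈ ZA
        · -- direct
          have h3 := hN n hn k hkZ
          calc b * μ (⇑(e ^ k) '' W) = 1 * (b * μ (⇑(e ^ k) '' W)) := (one_mul _).symm
            _ ≤ E * (b * μ (⇑(e ^ k) '' W)) := mul_le_mul_left hE1 _
            _ = (E * b) * μ (⇑(e ^ k) '' W) := by ring
            _ ≤ μ (⇑(e ^ (k - (n:ℤ))) '' W) := h3
        · -- transfer from t₁
          have hkt : a₀ < k + (N₀:ℤ) := hkey a₀ ha₀ k hkZ
          have hk0 : k ≤ 0 := hk
          have hkt₁ : t₁ ≤ k := by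
            have : t₁ ≤ a₀ - (N₀:ℤ) := min_le_left _ _
            omega
          set d : ℕ := (k - t₁).toNat with hddef
          have hd : (d:ℤ) = k - t₁ := by rw [hddef, Int.toNat_of_nonneg]; omega
          have hdD : d ≤ D := by
            rw [hddef, hDdef]
            exact Int.toNat_le_toNat (by omega)
          have h3 := hN n hn t₁ ht₁A
          have hdown := aux_pow_down hstepD (k - (n:ℤ)) d
          have harg1 : k - (n:ℤ) - (d:ℤ) = t₁ - (n:ℤ) := by omega
          rw [harg1] at hdown
          have hup := aux_pow_up hstepU t₁ d
          have harg2 : t₁ + (d:ℤ) = k := by omega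
          rw [harg2] at hup
          have hchain : cmx1 ^ d * (b * μ (⇑(e ^ k) '' W)) ≤ cmx1 ^ d * μ (⇑(e ^ (k - (n:ℤ))) '' W) := by
            calc cmx1 ^ d * (b * μ (⇑(e ^ k) '' W))
                ≤ cmx1 ^ d * (b * (cmx2 ^ d * μ (⇑(e ^ t₁) '' W))) :=
                  mul_le_mul_right (mul_le_mul_right hup _) _
              _ = (cmx1 ^ d * cmx2 ^ d) * (b * μ (⇑(e ^ t₁) '' W)) := by ring
              _ ≤ (cmx1 ^ D * cmx2 ^ D) * (b * μ (⇑(e ^ t₁) '' W)) :=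
                  mul_le_mul_left (mul_le_mul' (pow_le_pow_right₀ hcmx11 hdD)
                    (pow_le_pow_right₀ hcmx21 hdD)) _
              _ = (E * b) * μ (⇑(e ^ t₁) '' W) := by rw [hEdef]; ring
              _ ≤ μ (⇑(e ^ (t₁ - (n:ℤ))) '' W) := h3
              _ ≤ cmx1 ^ d * μ (⇑(e ^ (k - (n:ℤ))) '' W) := hdown
          exact (ENNReal.mul_le_mul_iff_right (pow_ne_zero d hcmx10) (ENNReal.pow_ne_top hcmx1T)).mp hchain
  · -- UE1 ∨ UE2 ∨ UE3 implies uniform expansivity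
    have hcore := fun (m : ℤ) (Z : Set ℤ) (φ : X → ℂ) (haem : AEMeasurable φ μ) =>
      aux_core μ he he' c c' hcT hc'T hb hb' hWm hW0 hWfin hcover hdisj K hK0 hKT hbd
        hwpos p.toReal hq0 m Z φ haem
    rintro (hUE1 | hUE2 | ⟨hUE3a, hUE3b⟩)
    · -- UE1 : C is the whole sphere
      refine ⟨∅, {φ : X → ℂ | MemLp φ p μ ∧ eLpNorm φ p μ = 1},
        (Set.empty_union _).symm, ?_⟩
      intro M hMT
      obtain ⟨N, hN⟩ := aux_of_tendsto_top hUE1 ((K*K) * M ^ p.toReal)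
        (ENNReal.mul_ne_top hKKT (aux_rpow_ne_top hq0 hMT))
      refine ⟨N, fun n hn => ⟨by simp, ?_⟩⟩
      rintro φ ⟨hφmem, hφ1⟩
      rw [eLpNorm_eq_lintegral_rpow_enorm_toReal hp0 hpT]
      refine aux_le_rpow hq0 ?_
      have hco := hcore (-(n:ℤ)) Set.univ φ hφmem.aestronglyMeasurable.aemeasurable
      have hmass : ∑' (j : (Set.univ : Set ℤ)),
          ∫⁻ x in ⇑(e ^ (j:ℤ)) '' W, (‖φ x‖₊ : ℝ≥0∞) ^ p.toReal ∂μ = 1 := by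
        rw [tsum_univ (fun j : ℤ => ∫⁻ x in ⇑(e ^ j) '' W, (‖φ x‖₊ : ℝ≥0∞) ^ p.toReal ∂μ)]
        exact hsphere φ hφmem hφ1
      rw [hmass, mul_one] at hco
      have hinfeq : (⨅ j ∈ (Set.univ : Set ℤ),
            μ (⇑(e ^ (j - (-(n:ℤ)))) '' W) / μ (⇑(e ^ j) '' W))
          = ⨅ k : ℤ, μ (⇑(e ^ (k + (n:ℤ))) '' W) / μ (⇑(e ^ k) '' W) := by
        rw [iInf_univ]
        exact iInf_congr (fun k => by rw [sub_neg_eq_add])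
      rw [hinfeq] at hco
      have h4 : (K*K) * M ^ p.toReal ≤ (K*K) *
          ∫⁻ x, (‖φ (⇑(e ^ (-(n:ℤ))) x)‖₊ : ℝ≥0∞) ^ p.toReal ∂μ :=
        le_trans (hN n hn) hco
      exact (ENNReal.mul_le_mul_iff_right hKK0 hKKT).mp h4
    · -- UE2 : A is the whole sphere
      refine ⟨{φ : X → ℂ | MemLp φ p μ ∧ eLpNorm φ p μ = 1}, ∅,
        (Set.union_empty _).symm, ?_⟩
      intro M hMT
      obtain ⟨N, hN⟩ := aux_of_tendsto_top hUE2 ((K*K) * M ^ p.toReal)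
        (ENNReal.mul_ne_top hKKT (aux_rpow_ne_top hq0 hMT))
      refine ⟨N, fun n hn => ⟨?_, by simp⟩⟩
      rintro φ ⟨hφmem, hφ1⟩
      rw [eLpNorm_eq_lintegral_rpow_enorm_toReal hp0 hpT]
      refine aux_le_rpow hq0 ?_
      have hco := hcore ((n:ℤ)) Set.univ φ hφmem.aestronglyMeasurable.aemeasurable
      have hmass : ∑' (j : (Set.univ : Set ℤ)),
          ∫⁻ x in ⇑(e ^ (j:ℤ)) '' W, (‖φ x‖₊ : ℝ≥0∞) ^ p.toReal ∂μ = 1 := by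
        rw [tsum_univ (fun j : ℤ => ∫⁻ x in ⇑(e ^ j) '' W, (‖φ x‖₊ : ℝ≥0∞) ^ p.toReal ∂μ)]
        exact hsphere φ hφmem hφ1
      rw [hmass, mul_one] at hco
      have hinfeq : (⨅ j ∈ (Set.univ : Set ℤ),
            μ (⇑(e ^ (j - (n:ℤ))) '' W) / μ (⇑(e ^ j) '' W))
          = ⨅ k : ℤ, μ (⇑(e ^ (k - (n:ℤ))) '' W) / μ (⇑(e ^ k) '' W) := iInf_univ
      rw [hinfeq] at hco
      have h4 : (K*K) * M ^ p.toReal ≤ (K*K) *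
          ∫⁻ x, (‖φ (⇑(e ^ ((n:ℤ))) x)‖₊ : ℝ≥0∞) ^ p.toReal ∂μ :=
        le_trans (hN n hn) hco
      exact (ENNReal.mul_le_mul_iff_right hKK0 hKKT).mp h4
    · -- UE3 : split the sphere by mass on nonpositive blocks
      have h22 : (2:ℝ≥0∞) * 2⁻¹ = 1 := ENNReal.mul_inv_cancel two_ne_zero ENNReal.ofNat_ne_top
      refine ⟨{φ : X → ℂ | (MemLp φ p μ ∧ eLpNorm φ p μ = 1) ∧
            2⁻¹ ≤ ∑' (j : ↥(Set.Iic (0:ℤ))),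
              ∫⁻ x in ⇑(e ^ (j:ℤ)) '' W, (‖φ x‖₊ : ℝ≥0∞) ^ p.toReal ∂μ},
          {φ : X → ℂ | (MemLp φ p μ ∧ eLpNorm φ p μ = 1) ∧
            ¬ 2⁻¹ ≤ ∑' (j : ↥(Set.Iic (0:ℤ))),
              ∫⁻ x in ⇑(e ^ (j:ℤ)) '' W, (‖φ x‖₊ : ℝ≥0∞) ^ p.toReal ∂μ}, ?_, ?_⟩
      · ext φ
        constructor
        · intro hφ
          by_cases h : 2⁻¹ ≤ ∑' (j : ↥(Set.Iic (0:ℤ))),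
              ∫⁻ x in ⇑(e ^ (j:ℤ)) '' W, (‖φ x‖₊ : ℝ≥0∞) ^ p.toReal ∂μ
          · exact Or.inl ⟨hφ, h⟩
          · exact Or.inr ⟨hφ, h⟩
        · rintro (⟨h, _⟩ | ⟨h, _⟩) <;> exact h
      · intro M hMT
        have hbT : (K*K) * 2 * M ^ p.toReal ≠ ⊤ :=
          ENNReal.mul_ne_top (ENNReal.mul_ne_top hKKT ENNReal.ofNat_ne_top)
            (aux_rpow_ne_top hq0 hMT)
        obtain ⟨N1, hN1⟩ := aux_of_tendsto_top hUE3b ((K*K) * 2 * M ^ p.toReal) hbT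
        obtain ⟨N2, hN2⟩ := aux_of_tendsto_top hUE3a ((K*K) * 2 * M ^ p.toReal) hbT
        refine ⟨max N1 N2, fun n hn => ⟨?_, ?_⟩⟩
        · -- A part : forward composition
          rintro φ ⟨⟨hφmem, hφ1⟩, hφA⟩
          rw [eLpNorm_eq_lintegral_rpow_enorm_toReal hp0 hpT]
          refine aux_le_rpow hq0 ?_
          have hco := hcore ((n:ℤ)) (Set.Iic (0:ℤ)) φ hφmem.aestronglyMeasurable.aemeasurable
          have h5 : (K*K) * M ^ p.toReal ≤ (K*K) *
              ∫⁻ x, (‖φ (⇑(e ^ ((n:ℤ))) x)‖₊ : ℝ≥0∞) ^ p.toReal ∂μ := by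
            calc (K*K) * M ^ p.toReal
                = ((K*K) * 2 * M ^ p.toReal) * 2⁻¹ := by
                  rw [show ((K*K) * 2 * M ^ p.toReal) * 2⁻¹
                      = ((K*K) * M ^ p.toReal) * (2 * 2⁻¹) by ring, h22, mul_one]
              _ ≤ (⨅ j ∈ Set.Iic (0:ℤ), μ (⇑(e ^ (j - (n:ℤ))) '' W) / μ (⇑(e ^ j) '' W)) *
                  ∑' (j : ↥(Set.Iic (0:ℤ))),
                    ∫⁻ x in ⇑(e ^ (j:ℤ)) '' W, (‖φ x‖₊ : ℝ≥0∞) ^ p.toReal ∂μ :=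
                  mul_le_mul' (hN1 n (le_trans (le_max_left _ _) hn)) hφA
              _ ≤ (K*K) * ∫⁻ x, (‖φ (⇑(e ^ ((n:ℤ))) x)‖₊ : ℝ≥0∞) ^ p.toReal ∂μ := hco
          exact (ENNReal.mul_le_mul_iff_right hKK0 hKKT).mp h5
        · -- C part : backward composition
          rintro φ ⟨⟨hφmem, hφ1⟩, hφC⟩
          rw [eLpNorm_eq_lintegral_rpow_enorm_toReal hp0 hpT]
          refine aux_le_rpow hq0 ?_
          have hmassC : 2⁻¹ ≤ ∑' (j : ↥(Set.Ici (1:ℤ))),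
              ∫⁻ x in ⇑(e ^ (j:ℤ)) '' W, (‖φ x‖₊ : ℝ≥0∞) ^ p.toReal ∂μ := by
            refine aux_half ?_ hφC
            rw [aux_tsum_split_int (fun j : ℤ =>
              ∫⁻ x in ⇑(e ^ j) '' W, (‖φ x‖₊ : ℝ≥0∞) ^ p.toReal ∂μ)]
            exact hsphere φ hφmem hφ1
          have hco := hcore (-(n:ℤ)) (Set.Ici (1:ℤ)) φ hφmem.aestronglyMeasurable.aemeasurable
          have hinfeq : (⨅ j ∈ Set.Ici (1:ℤ),
                μ (⇑(e ^ (j - (-(n:ℤ)))) '' W) / μ (⇑(e ^ j) '' W))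
              = ⨅ j ∈ Set.Ici (1:ℤ), μ (⇑(e ^ (j + (n:ℤ))) '' W) / μ (⇑(e ^ j) '' W) :=
            iInf_congr (fun j => iInf_congr (fun _ => by rw [sub_neg_eq_add]))
          rw [hinfeq] at hco
          have h5 : (K*K) * M ^ p.toReal ≤ (K*K) *
              ∫⁻ x, (‖φ (⇑(e ^ (-(n:ℤ))) x)‖₊ : ℝ≥0∞) ^ p.toReal ∂μ := by
            calc (K*K) * M ^ p.toReal
                = ((K*K) * 2 * M ^ p.toReal) * 2⁻¹ := by
                  rw [show ((K*K) * 2 * M ^ p.toReal) * 2⁻¹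
                      = ((K*K) * M ^ p.toReal) * (2 * 2⁻¹) by ring, h22, mul_one]
              _ ≤ (⨅ j ∈ Set.Ici (1:ℤ), μ (⇑(e ^ (j + (n:ℤ))) '' W) / μ (⇑(e ^ j) '' W)) *
                  ∑' (j : ↥(Set.Ici (1:ℤ))),
                    ∫⁻ x in ⇑(e ^ (j:ℤ)) '' W, (‖φ x‖₊ : ℝ≥0∞) ^ p.toReal ∂μ :=
                  mul_le_mul' (hN2 n (le_trans (le_max_right _ _) hn)) hmassC
              _ ≤ (K*K) * ∫⁻ x, (‖φ (⇑(e ^ (-(n:ℤ))) x)‖₊ : ℝ≥0∞) ^ p.toReal ∂μ := hco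
          exact (ENNReal.mul_le_mul_iff_right hKK0 hKKT).mp h5
end

section
/- Let $(X,\mathcal{B},\mu,f,T_f)$ be a dissipative composition dynamical system of bounded distortion generated by $W$, with $T_f$ invertible. If $\limsup_{n\to\infty}\sup_{k\ge 0}\left(\frac{\mu(f^k(W))}{\mu(f^{k+n}(W))}\right)^{1/n}<1$ and $\liminf_{n\to\infty}\inf_{k\le 0}\left(\frac{\mu(f^{k-n}(W))}{\mu(f^k(W))}\right)^{1/n}>1$, then $T_f$ is not structurally stable, and hence not strongly structurally stable. -/
open MeasureTheory Filter Set ENNReal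

/-- Structural stability in the sense of Pugh. -/
def StructurallyStable {E : Type*} [NormedAddCommGroup E]
    [NormedSpace ℂ E] (T : E ≃L[ℂ] E) : Prop :=
  ∃ ε : ℝ, 0 < ε ∧ ∀ φ : E → E, Continuous φ →
    (∀ x, ‖φ x‖ ≤ ε) → LipschitzWith (Real.toNNReal ε) φ →
    ∃ h : E ≃ₜ E, ∀ x, h (T x) = T (h x) + φ (h x)

/-- Strong structural stability. -/
def StronglyStructurallyStable {E : Type*} [NormedAddCommGroup E]
    [NormedSpace ℂ E] (T : E ≃L[ℂ] E) : Prop :=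
  ∀ γ : ℝ, 0 < γ → ∃ ε : ℝ, 0 < ε ∧ ∀ φ : E → E, Continuous φ →
    (∀ x, ‖φ x‖ ≤ ε) → LipschitzWith (Real.toNNReal ε) φ →
    ∃ h : E ≃ₜ E, (∀ x, h (T x) = T (h x) + φ (h x)) ∧ ∀ x, ‖h x - x‖ ≤ γ


section Key

variable {X : Type*} [MeasurableSpace X] (μ : MeasureTheory.Measure X)

/-- All integer powers of `e` are quasi-measure-preserving. -/
lemma qmp_zpow (e : Equiv.Perm X) (he : Measurable e) (he' : Measurable e.symm)
    (c c' : ℝ≥0∞)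
    (hb : ∀ B : Set X, MeasurableSet B → μ (⇑e ⁻¹' B) ≤ c * μ B)
    (hb' : ∀ B : Set X, MeasurableSet B → μ (⇑e '' B) ≤ c' * μ B)
    (k : ℤ) : Measure.QuasiMeasurePreserving ⇑(e ^ k) μ μ := by
  have q1 : Measure.QuasiMeasurePreserving ⇑e μ μ := by
    refine ⟨he, Measure.AbsolutelyContinuous.mk fun s hs h0 => ?_⟩
    rw [Measure.map_apply he hs]
    exact le_antisymm (le_trans (hb s hs) (by simp [h0])) zero_le
  have q2 : Measure.QuasiMeasurePreserving ⇑e.symm μ μ := by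
    refine ⟨he', Measure.AbsolutelyContinuous.mk fun s hs h0 => ?_⟩
    rw [Measure.map_apply he' hs]
    have himg : ⇑e.symm ⁻¹' s = ⇑e '' s := (Equiv.image_eq_preimage_symm e s).symm
    rw [himg]
    exact le_antisymm (le_trans (hb' s hs) (by simp [h0])) zero_le
  induction k using Int.induction_on with
  | zero => simpa using Measure.QuasiMeasurePreserving.id μ
  | succ n ih =>
      have hco : ⇑(e ^ ((n : ℤ) + 1)) = ⇑(e ^ (n : ℤ)) ∘ ⇑e := by
        rw [zpow_add_one]
        ext x
        simp [Equiv.Perm.mul_apply, Equiv.Perm.inv_def]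
      rw [hco]
      exact ih.comp q1
  | pred n ih =>
      have hco : ⇑(e ^ (-(n : ℤ) - 1)) = ⇑(e ^ (-(n : ℤ))) ∘ ⇑e.symm := by
        rw [zpow_sub_one]
        ext x
        simp [Equiv.Perm.mul_apply, Equiv.Perm.inv_def]
      rw [hco]
      exact ih.comp q2

end Key

section Key2

lemma key_aux
    {X : Type*} [MeasurableSpace X] (μ : MeasureTheory.Measure X)
    (p : ℝ≥0∞) (hp1 : 1 ≤ p) (hpT : p ≠ ⊤)
    (e : Equiv.Perm X) (he : Measurable e) (he' : Measurable e.symm)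
    (c c' : ℝ≥0∞)
    (hb : ∀ B : Set X, MeasurableSet B → μ (⇑e ⁻¹' B) ≤ c * μ B)
    (hb' : ∀ B : Set X, MeasurableSet B → μ (⇑e '' B) ≤ c' * μ B)
    (W : Set X) (hWm : MeasurableSet W) (hW0 : 0 < μ W) (hWfin : μ W ≠ ⊤)
    (hdisj : Pairwise (fun k l : ℤ => Disjoint (⇑(e ^ k) '' W) (⇑(e ^ l) '' W)))
    (K : ℝ≥0∞) (hK0 : 0 < K) (hKT : K ≠ ⊤)
    (hbd : ∀ (k : ℤ) (B : Set X), MeasurableSet B → B ⊆ W →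
        K⁻¹ * (μ (⇑(e ^ k) '' W) * μ B) ≤ μ (⇑(e ^ k) '' B) * μ W ∧
        μ (⇑(e ^ k) '' B) * μ W ≤ K * (μ (⇑(e ^ k) '' W) * μ B))
    [Fact (1 ≤ p)]
    (T : MeasureTheory.Lp ℂ p μ ≃L[ℂ] MeasureTheory.Lp ℂ p μ)
    (hT : ∀ φ : MeasureTheory.Lp ℂ p μ, (T φ : X → ℂ) =ᵐ[μ] fun x => φ (e x))
    (h1 : Filter.limsup
        (fun n : ℕ => ⨆ k ∈ Set.Ici (0 : ℤ),
          (μ (⇑(e ^ k) '' W) / μ (⇑(e ^ (k + (n : ℤ))) '' W)) ^ (1 / (n : ℝ)))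
        Filter.atTop < 1)
    (h2 : 1 < Filter.liminf
        (fun n : ℕ => ⨅ k ∈ Set.Iic (0 : ℤ),
          (μ (⇑(e ^ (k - (n : ℤ))) '' W) / μ (⇑(e ^ k) '' W)) ^ (1 / (n : ℝ)))
        Filter.atTop)
    (y : MeasureTheory.Lp ℂ p μ) (t : ℝ) (ht : 0 < t)
    (heq : y = T y + (t : ℂ) • indicatorConstLp p hWm hWfin (1 : ℂ)) : False := by
  have hp0 : p ≠ 0 := (lt_of_lt_of_le zero_lt_one hp1).ne'
  set u : MeasureTheory.Lp ℂ p μ := indicatorConstLp p hWm hWfin (1 : ℂ) with hu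
  set ψ : X → ℂ := ⇑y with hψ
  have hψm : StronglyMeasurable ψ := Lp.stronglyMeasurable y
  set ind : X → ℂ := W.indicator (fun _ => (t : ℂ)) with hind
  have qmp : ∀ k : ℤ, Measure.QuasiMeasurePreserving ⇑(e ^ k) μ μ :=
    qmp_zpow μ e he he' c c' hb hb'
  -- the pointwise functional equation holds a.e.
  have hae : ∀ᵐ x ∂μ, ψ x = ψ (e x) + ind x := by
    have e1 : ⇑y =ᵐ[μ] ⇑(T y + (t : ℂ) • u) := by rw [← heq]
    have e2 := Lp.coeFn_add (T y) ((t : ℂ) • u)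
    have e3 := Lp.coeFn_smul (t : ℂ) u
    have e4 : ⇑u =ᵐ[μ] W.indicator fun _ => (1 : ℂ) := indicatorConstLp_coeFn
    have e5 := hT y
    filter_upwards [e1, e2, e3, e4, e5] with x f1 f2 f3 f4 f5
    rw [hψ]
    calc (y : X → ℂ) x = (T y : X → ℂ) x + ((t : ℂ) • u : Lp ℂ p μ) x := by rw [f1, f2]; rfl
    _ = ψ (e x) + (t : ℂ) * (u : X → ℂ) x := by rw [f3, f5]; rfl
    _ = ψ (e x) + ind x := by
        rw [f4, hind]
        by_cases hx : x ∈ W <;> simp [Set.indicator_of_mem, Set.indicator_of_notMem, hx]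
  set A : Set X := {x | ψ x = ψ (e x) + ind x} with hA
  have hAm : MeasurableSet A := by
    have hmeas : Measurable fun x => ψ x - (ψ (e x) + ind x) :=
      hψm.measurable.sub ((hψm.measurable.comp he).add (measurable_const.indicator hWm))
    have : A = (fun x => ψ x - (ψ (e x) + ind x)) ⁻¹' {0} := by
      ext x; simp [hA, sub_eq_zero]
    rw [this]; exact hmeas (measurableSet_singleton 0)
  have hμAc : μ Aᶜ = 0 := by
    have : Aᶜ = {x | ¬ (ψ x = ψ (e x) + ind x)} := by rw [hA, Set.compl_setOf]
    rw [this]; exact ae_iff.mp hae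
  set G : Set X := ⋂ k : ℤ, ⇑(e ^ k) ⁻¹' A with hG
  have hGm : MeasurableSet G := MeasurableSet.iInter fun k => (qmp k).measurable hAm
  have hμGc : μ Gᶜ = 0 := by
    rw [hG, Set.compl_iInter]
    refine measure_iUnion_null fun k => ?_
    rw [← Set.preimage_compl]
    exact (qmp k).preimage_null hμAc
  have hEmul : ∀ (j k : ℤ) (x : X), (e ^ j) ((e ^ k) x) = (e ^ (j + k)) x := by
    intro j k x; rw [← Equiv.Perm.mul_apply, ← zpow_add]
  have hGstep : ∀ x ∈ G, ∀ k : ℤ, ψ ((e ^ k) x) = ψ ((e ^ (k + 1)) x) + ind ((e ^ k) x) := by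
    intro x hx k
    have hxA : (e ^ k) x ∈ A := Set.mem_iInter.mp hx k
    have he1 : e ((e ^ k) x) = (e ^ (k + 1)) x := by
      rw [add_comm]
      have h := hEmul 1 k x
      rwa [zpow_one] at h
    have := hxA
    rw [hA] at this
    simpa [he1] using this
  have hnotW : ∀ (k : ℤ), k ≠ 0 → ∀ x ∈ W, (e ^ k) x ∉ W := by
    intro k hk x hx hmem
    have hd : Disjoint (⇑(e ^ k) '' W) (⇑(e ^ (0 : ℤ)) '' W) := hdisj hk
    have hmem' : (e ^ k) x ∈ ⇑(e ^ (0 : ℤ)) '' W := by simpa using hmem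
    exact Set.disjoint_left.mp hd (Set.mem_image_of_mem _ hx) hmem'
  -- orbit identities
  have lemNeg : ∀ x, x ∈ W → x ∈ G → ∀ n : ℕ, ψ ((e ^ (-(n : ℤ))) x) = ψ x := by
    intro x hxW hxG n
    induction n with
    | zero => simp
    | succ n ih =>
        have hst := hGstep x hxG (-(n : ℤ) - 1)
        have hne : (-(n : ℤ) - 1) ≠ 0 := by omega
        rw [hind, Set.indicator_of_notMem (hnotW _ hne x hxW)] at hst
        have harg : (-(n : ℤ) - 1) + 1 = -(n : ℤ) := by ring
        rw [harg, add_zero] at hst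
        have hc : (-((n + 1 : ℕ) : ℤ)) = -(n : ℤ) - 1 := by push_cast; ring
        rw [hc, hst, ih]
  have lemPos : ∀ x, x ∈ W → x ∈ G → ∀ n : ℕ, ψ ((e ^ ((n : ℤ) + 1)) x) = ψ x - t := by
    intro x hxW hxG n
    induction n with
    | zero =>
        have hst := hGstep x hxG 0
        simp only [zpow_zero, Equiv.Perm.coe_one, id_eq] at hst
        rw [hind, Set.indicator_of_mem hxW] at hst
        rw [show ((0 : ℕ) : ℤ) + 1 = (0 : ℤ) + 1 by norm_num]
        have := eq_sub_of_add_eq hst.symm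
        simpa using this
    | succ n ih =>
        have hst := hGstep x hxG ((n : ℤ) + 1)
        have hne : ((n : ℤ) + 1) ≠ 0 := by omega
        rw [hind, Set.indicator_of_notMem (hnotW _ hne x hxW)] at hst
        rw [add_zero] at hst
        have hc : (((n + 1 : ℕ) : ℤ) + 1) = ((n : ℤ) + 1) + 1 := by push_cast; ring
        rw [hc, ← hst, ih]
  -- Chebyshev: superlevel sets of ψ have finite measure
  have hFfin : ∀ δ : ℝ≥0∞, δ ≠ 0 → μ {x | δ ≤ (‖ψ x‖₊ : ℝ≥0∞)} ≠ ⊤ := by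
    intro δ hδ
    have hle := meas_ge_le_mul_pow_eLpNorm_enorm μ hp0 hpT (Lp.aestronglyMeasurable y) hδ (by simp)
    refine ne_top_of_le_ne_top ?_ hle
    exact ENNReal.mul_ne_top
      (ENNReal.rpow_ne_top_of_nonneg ENNReal.toReal_nonneg (ENNReal.inv_ne_top.2 hδ))
      (ENNReal.rpow_ne_top_of_nonneg ENNReal.toReal_nonneg (Lp.eLpNorm_ne_top y))
  -- raising rpow inequalities to the n-th power
  have hraise : ∀ (a b : ℝ≥0∞) (n : ℕ), 1 ≤ n → a ^ (1 / (n : ℝ)) ≤ b → a ≤ b ^ n := by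
    intro a b n hn hlt
    have hn0 : (n : ℝ) ≠ 0 := Nat.cast_ne_zero.mpr (by omega)
    have h1 : (a ^ (1 / (n : ℝ))) ^ (n : ℝ) ≤ b ^ (n : ℝ) :=
      ENNReal.rpow_le_rpow hlt (by positivity)
    rw [← ENNReal.rpow_mul, one_div, inv_mul_cancel₀ hn0, ENNReal.rpow_one,
      ENNReal.rpow_natCast] at h1
    exact h1
  have hraise' : ∀ (a b : ℝ≥0∞) (n : ℕ), 1 ≤ n → b ≤ a ^ (1 / (n : ℝ)) → b ^ n ≤ a := by
    intro a b n hn hlt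
    have hn0 : (n : ℝ) ≠ 0 := Nat.cast_ne_zero.mpr (by omega)
    have h1 : b ^ (n : ℝ) ≤ (a ^ (1 / (n : ℝ))) ^ (n : ℝ) :=
      ENNReal.rpow_le_rpow hlt (by positivity)
    rw [← ENNReal.rpow_mul, one_div, inv_mul_cancel₀ hn0, ENNReal.rpow_one,
      ENNReal.rpow_natCast] at h1
    exact h1
  obtain ⟨r, hr1, hr2⟩ := exists_between h1
  have hr0 : r ≠ 0 := (lt_of_le_of_lt zero_le hr1).ne'
  have hrT : r ≠ ⊤ := ne_top_of_lt hr2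
  obtain ⟨s, hs1, hs2⟩ := exists_between h2
  have hs0 : s ≠ 0 := (lt_of_le_of_lt zero_le hs1).ne'
  have hsT : s ≠ ⊤ := ne_top_of_lt hs2
  have hgrow1 : ∀ᶠ n : ℕ in atTop, μ W ≤ r ^ n * μ (⇑(e ^ (n : ℤ)) '' W) := by
    filter_upwards [eventually_lt_of_limsup_lt hr1, eventually_ge_atTop 1] with n hn hn1
    have h0i : (0 : ℤ) ∈ Set.Ici (0 : ℤ) := Set.self_mem_Ici
    have hterm := le_biSup
      (f := fun k : ℤ => (μ (⇑(e ^ k) '' W) / μ (⇑(e ^ (k + (n : ℤ))) '' W)) ^ (1 / (n : ℝ))) h0i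
    have hterm2 : (μ W / μ (⇑(e ^ (n : ℤ)) '' W)) ^ (1 / (n : ℝ)) ≤ r := by
      refine le_trans ?_ (le_of_lt (lt_of_le_of_lt hterm hn))
      simp
    have := hraise _ _ n hn1 hterm2
    exact (ENNReal.div_le_iff_le_mul (Or.inr (ENNReal.pow_ne_top hrT))
      (Or.inr (pow_ne_zero n hr0))).mp this
  have hgrow2 : ∀ᶠ n : ℕ in atTop, s ^ n * μ W ≤ μ (⇑(e ^ (-(n : ℤ))) '' W) := by
    filter_upwards [eventually_lt_of_lt_liminf hs2, eventually_ge_atTop 1] with n hn hn1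
    have h0i : (0 : ℤ) ∈ Set.Iic (0 : ℤ) := Set.self_mem_Iic
    have hterm := biInf_le
      (f := fun k : ℤ => (μ (⇑(e ^ (k - (n : ℤ))) '' W) / μ (⇑(e ^ k) '' W)) ^ (1 / (n : ℝ))) h0i
    have hterm2 : s ≤ (μ (⇑(e ^ (-(n : ℤ))) '' W) / μ W) ^ (1 / (n : ℝ)) := by
      refine le_trans (le_of_lt (lt_of_lt_of_le hn hterm)) ?_
      simp
    have := hraise' _ _ n hn1 hterm2
    rw [ENNReal.le_div_iff_mul_le (Or.inl hW0.ne') (Or.inl hWfin)] at this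
    exact this
  -- generic contradiction from a geometric bound
  have helper : ∀ (q D : ℝ≥0∞), q < 1 → D ≠ ⊤ →
      (∀ᶠ n : ℕ in atTop, μ W ≤ q ^ n * D) → False := by
    intro q D hq hD hev
    rcases eq_or_ne D 0 with h0 | h0
    · obtain ⟨n, hn⟩ := hev.exists
      rw [h0, mul_zero] at hn
      exact hW0.ne' (le_antisymm hn zero_le)
    · have hq0 : Tendsto (fun n : ℕ => q ^ n) atTop (nhds 0) :=
        ENNReal.tendsto_pow_atTop_nhds_zero_of_lt_one hq
      have hpos : 0 < μ W / D := ENNReal.div_pos hW0.ne' hD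
      have hev2 : ∀ᶠ n : ℕ in atTop, q ^ n < μ W / D := hq0.eventually_lt_const hpos
      obtain ⟨n, h1n, h2n⟩ := (hev.and hev2).exists
      have hlt : q ^ n * D < (μ W / D) * D := ENNReal.mul_lt_mul_left h0 hD h2n
      rw [ENNReal.div_mul_cancel h0 hD] at hlt
      exact absurd (h1n.trans_lt hlt) (lt_irrefl _)
  have hcontr1 : ∀ D : ℝ≥0∞, D ≠ ⊤ →
      (∀ n : ℕ, 1 ≤ n → μ (⇑(e ^ (n : ℤ)) '' W) ≤ D) → False := by
    intro D hD hDb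
    refine helper r D hr2 hD ?_
    filter_upwards [hgrow1, eventually_ge_atTop 1] with n hg hn1
    exact hg.trans (mul_le_mul_right (hDb n hn1) _)
  have hcontr2 : ∀ D : ℝ≥0∞, D ≠ ⊤ →
      (∀ n : ℕ, 1 ≤ n → μ (⇑(e ^ (-(n : ℤ))) '' W) ≤ D) → False := by
    intro D hD hDb
    refine helper s⁻¹ D (ENNReal.inv_lt_one.mpr hs1) hD ?_
    filter_upwards [hgrow2, eventually_ge_atTop 1] with n hg hn1
    have hle : s ^ n * μ W ≤ D := hg.trans (hDb n hn1)
    have : μ W ≤ D / s ^ n := by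
      rw [ENNReal.le_div_iff_mul_le (Or.inl (pow_ne_zero n hs0))
        (Or.inl (ENNReal.pow_ne_top hsT))]
      rwa [mul_comm] at hle
    rwa [div_eq_mul_inv, ENNReal.inv_pow, mul_comm] at this
  -- the general bound via bounded distortion
  have hDist : ∀ (k : ℤ) (B : Set X) (F : Set X), MeasurableSet B → B ⊆ W → μ B ≠ 0 →
      (⇑(e ^ k) '' B ⊆ F) → μ (⇑(e ^ k) '' W) ≤ (K * (μ F * μ W)) / μ B := by
    intro k B F hBm hBW hB0 hsub
    have hBfin : μ B ≠ ⊤ := ne_top_of_le_ne_top hWfin (measure_mono hBW)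
    have h1' := (hbd k B hBm hBW).1
    have h2' : μ (⇑(e ^ k) '' B) * μ W ≤ μ F * μ W :=
      mul_le_mul_left (measure_mono hsub) _
    have h3' : K⁻¹ * (μ (⇑(e ^ k) '' W) * μ B) ≤ μ F * μ W := h1'.trans h2'
    have h4' : μ (⇑(e ^ k) '' W) * μ B ≤ K * (μ F * μ W) := by
      calc μ (⇑(e ^ k) '' W) * μ B
          = K * (K⁻¹ * (μ (⇑(e ^ k) '' W) * μ B)) := by
            rw [← mul_assoc, ENNReal.mul_inv_cancel hK0.ne' hKT, one_mul]
        _ ≤ K * (μ F * μ W) := mul_le_mul_right h3' K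
    exact (ENNReal.le_div_iff_mul_le (Or.inl hB0) (Or.inl hBfin)).mpr h4'
  -- Step 1: ψ vanishes a.e. on W
  have hψ0W : μ (W ∩ G ∩ {x | ψ x ≠ 0}) = 0 := by
    have hBnull : ∀ δ : ℝ≥0∞, δ ≠ 0 →
        μ (W ∩ G ∩ {x | δ ≤ (‖ψ x‖₊ : ℝ≥0∞)}) = 0 := by
      intro δ hδ
      by_contra hB0
      set B := W ∩ G ∩ {x | δ ≤ (‖ψ x‖₊ : ℝ≥0∞)} with hBdef
      have hBm : MeasurableSet B :=
        (hWm.inter hGm).inter (measurableSet_le measurable_const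
          (measurable_coe_nnreal_ennreal.comp hψm.measurable.nnnorm))
      have hBW : B ⊆ W := fun x hx => hx.1.1
      have himg_sub : ∀ n : ℕ, ⇑(e ^ (-(n : ℤ))) '' B ⊆ {x | δ ≤ (‖ψ x‖₊ : ℝ≥0∞)} := by
        rintro n _ ⟨b, hbB, rfl⟩
        have hval := lemNeg b hbB.1.1 hbB.1.2 n
        show δ ≤ (‖ψ ((e ^ (-(n : ℤ))) b)‖₊ : ℝ≥0∞)
        rw [hval]
        exact hbB.2
      have hDT : (K * (μ {x | δ ≤ (‖ψ x‖₊ : ℝ≥0∞)} * μ W)) / μ B ≠ ⊤ :=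
        (ENNReal.div_lt_top
          (ENNReal.mul_ne_top hKT (ENNReal.mul_ne_top (hFfin δ hδ) hWfin)) hB0).ne
      exact hcontr2 _ hDT fun n _ => hDist (-(n : ℤ)) B _ hBm hBW hB0 (himg_sub n)
    have hsub : (W ∩ G ∩ {x | ψ x ≠ 0}) ⊆
        ⋃ m : ℕ, (W ∩ G ∩ {x | ((m : ℝ≥0∞))⁻¹ ≤ (‖ψ x‖₊ : ℝ≥0∞)}) := by
      rintro x ⟨hxWG, hx0⟩
      have hne : (‖ψ x‖₊ : ℝ≥0∞) ≠ 0 := by simpa using hx0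
      obtain ⟨m, hm⟩ := ENNReal.exists_inv_nat_lt hne
      exact Set.mem_iUnion.mpr ⟨m, ⟨hxWG, hm.le⟩⟩
    refine measure_mono_null hsub (measure_iUnion_null fun m =>
      hBnull _ (ENNReal.inv_ne_zero.mpr (ENNReal.natCast_ne_top m)))
  -- Step 2
  have hB'0 : μ (W ∩ G ∩ {x | ψ x = 0}) ≠ 0 := by
    intro h0
    have hsub : W ⊆ (W ∩ G ∩ {x | ψ x = 0}) ∪ ((W ∩ G ∩ {x | ψ x ≠ 0}) ∪ Gᶜ) := by
      intro x hx
      by_cases hG' : x ∈ G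
      · by_cases hz : ψ x = 0
        · exact Or.inl ⟨⟨hx, hG'⟩, hz⟩
        · exact Or.inr (Or.inl ⟨⟨hx, hG'⟩, hz⟩)
      · exact Or.inr (Or.inr hG')
    have : μ W = 0 := by
      have h5 : μ W ≤ μ (W ∩ G ∩ {x | ψ x = 0}) + (μ (W ∩ G ∩ {x | ψ x ≠ 0}) + μ Gᶜ) :=
        (measure_mono hsub).trans ((measure_union_le _ _).trans
          (add_le_add_right (measure_union_le _ _) _))
      rw [h0, hψ0W, hμGc] at h5
      simpa using h5
    exact hW0.ne' this
  set B' := W ∩ G ∩ {x | ψ x = 0} with hB'def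
  have hB'm : MeasurableSet B' := by
    have hz : MeasurableSet {x | ψ x = 0} := by
      have : {x | ψ x = 0} = ψ ⁻¹' {0} := rfl
      rw [this]
      exact hψm.measurable (measurableSet_singleton 0)
    exact (hWm.inter hGm).inter hz
  have hB'W : B' ⊆ W := fun x hx => hx.1.1
  have himg2 : ∀ n : ℕ, ⇑(e ^ ((n : ℤ) + 1)) '' B' ⊆
      {x | ENNReal.ofReal t ≤ (‖ψ x‖₊ : ℝ≥0∞)} := by
    rintro n _ ⟨b, hbB, rfl⟩
    have hval := lemPos b hbB.1.1 hbB.1.2 n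
    have hv2 : ψ ((e ^ ((n : ℤ) + 1)) b) = -(t : ℂ) := by
      rw [hval, hbB.2]; ring
    show ENNReal.ofReal t ≤ (‖ψ ((e ^ ((n : ℤ) + 1)) b)‖₊ : ℝ≥0∞)
    rw [hv2]
    simp only [nnnorm_neg, Complex.nnnorm_real]
    rw [Real.nnnorm_of_nonneg ht.le]
    exact le_of_eq (ENNReal.ofReal_eq_coe_nnreal ht.le)
  have hδt : ENNReal.ofReal t ≠ 0 := (ENNReal.ofReal_pos.mpr ht).ne'
  have hDT2 : (K * (μ {x | ENNReal.ofReal t ≤ (‖ψ x‖₊ : ℝ≥0∞)} * μ W)) / μ B' ≠ ⊤ :=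
    (ENNReal.div_lt_top
      (ENNReal.mul_ne_top hKT (ENNReal.mul_ne_top (hFfin _ hδt) hWfin)) hB'0).ne
  refine hcontr1 _ hDT2 ?_
  intro n hn1
  have hD := hDist ((((n - 1 : ℕ)) : ℤ) + 1) B' _ hB'm hB'W hB'0 (himg2 (n - 1))
  have harg : (((n - 1 : ℕ) : ℤ) + 1) = (n : ℤ) := by omega
  rwa [harg] at hD

end Key2

/-- Proposition 4.1: under the displayed conditions, `T_f` is not structurally
stable, and hence not strongly structurally stable. -/
theorem stmt_16
    {X : Type*} [MeasurableSpace X] (μ : MeasureTheory.Measure X) [MeasureTheory.SigmaFinite μ]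
    (p : ℝ≥0∞) (hp1 : 1 ≤ p) (hpT : p ≠ ⊤)
    (e : Equiv.Perm X) (he : Measurable e) (he' : Measurable e.symm)
    (c c' : ℝ≥0∞) (hc : 0 < c) (hcT : c ≠ ⊤) (hc' : 0 < c') (hc'T : c' ≠ ⊤)
    (hb : ∀ B : Set X, MeasurableSet B → μ (⇑e ⁻¹' B) ≤ c * μ B)
    (hb' : ∀ B : Set X, MeasurableSet B → μ (⇑e '' B) ≤ c' * μ B)
    (W : Set X) (hWm : MeasurableSet W) (hW0 : 0 < μ W) (hWfin : μ W ≠ ⊤)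
    (hcover : (⋃ k : ℤ, ⇑(e ^ k) '' W) = Set.univ)
    (hdisj : Pairwise (fun k l : ℤ => Disjoint (⇑(e ^ k) '' W) (⇑(e ^ l) '' W)))
    (K : ℝ≥0∞) (hK0 : 0 < K) (hKT : K ≠ ⊤)
    (hbd : ∀ (k : ℤ) (B : Set X), MeasurableSet B → B ⊆ W →
        K⁻¹ * (μ (⇑(e ^ k) '' W) * μ B) ≤ μ (⇑(e ^ k) '' B) * μ W ∧
        μ (⇑(e ^ k) '' B) * μ W ≤ K * (μ (⇑(e ^ k) '' W) * μ B))
    [Fact (1 ≤ p)]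
    (T : MeasureTheory.Lp ℂ p μ ≃L[ℂ] MeasureTheory.Lp ℂ p μ)
    (hT : ∀ φ : MeasureTheory.Lp ℂ p μ, (T φ : X → ℂ) =ᵐ[μ] fun x => φ (e x))
    (h1 : Filter.limsup
        (fun n : ℕ => ⨆ k ∈ Set.Ici (0 : ℤ),
          (μ (⇑(e ^ k) '' W) / μ (⇑(e ^ (k + (n : ℤ))) '' W)) ^ (1 / (n : ℝ)))
        Filter.atTop < 1)
    (h2 : 1 < Filter.liminf
        (fun n : ℕ => ⨅ k ∈ Set.Iic (0 : ℤ),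
          (μ (⇑(e ^ (k - (n : ℤ))) '' W) / μ (⇑(e ^ k) '' W)) ^ (1 / (n : ℝ)))
        Filter.atTop) :
    ¬ StructurallyStable T ∧ ¬ StronglyStructurallyStable T := by
  have hkey : ¬ StructurallyStable T := by
    rintro ⟨ε, hε, hst⟩
    set u : MeasureTheory.Lp ℂ p μ := indicatorConstLp p hWm hWfin (1 : ℂ) with hu
    set t : ℝ := ε / (‖u‖ + 1) with htdef
    have hupos : (0 : ℝ) ≤ ‖u‖ := norm_nonneg u
    have ht : 0 < t := div_pos hε (by linarith)
    set v : MeasureTheory.Lp ℂ p μ := (t : ℂ) • u with hv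
    have hvnorm : ‖v‖ ≤ ε := by
      rw [hv, norm_smul]
      have hnt : ‖(t : ℂ)‖ = t := by
        rw [Complex.norm_real, Real.norm_eq_abs, abs_of_pos ht]
      rw [hnt]
      calc t * ‖u‖ ≤ t * (‖u‖ + 1) := by
            exact mul_le_mul_of_nonneg_left (by linarith) ht.le
        _ = ε := by rw [htdef]; field_simp
    obtain ⟨h, hh⟩ := hst (fun _ => v) continuous_const (fun _ => hvnorm)
      ((LipschitzWith.const v).weaken zero_le)
    have h0 := hh 0
    rw [map_zero] at h0
    exact key_aux μ p hp1 hpT e he he' c c' hb hb' W hWm hW0 hWfin hdisj K hK0 hKT hbd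
      T hT h1 h2 (h 0) t ht h0
  refine ⟨hkey, fun hs => hkey ?_⟩
  obtain ⟨ε, hε, hst⟩ := hs 1 one_pos
  exact ⟨ε, hε, fun φ hc hn hl => (hst φ hc hn hl).imp fun h hh => hh.1⟩
end

section
/- Let $(X,\mathcal{B},\mu,f)$ be a dissipative system of bounded distortion generated by $W$ with distortion constant $H$ as in the two-sided distortion inequality over all translates. Then for every measurable $B$ with $0<\mu(B)<\infty$ and every $n\in\mathbb{Z}$: $\mu(f^n(B))\ge\frac{1}{H}\mu(B)\inf_{k\in\mathbb{Z}}\frac{\mu(f^{k+n}(W))}{\mu(f^k(W))}$, where $B=\dot{\bigcup}_{k\in\mathbb{Z}}(B\cap f^k(W))$. -/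
open MeasureTheory Filter Set ENNReal

private lemma zpow_meas' {X : Type*} [MeasurableSpace X]
    (e : Equiv.Perm X) (he : Measurable e) (he' : Measurable e.symm) :
    ∀ k : ℤ, Measurable ⇑(e ^ k) := by
  intro k
  induction k using Int.induction_on with
  | zero => simpa using measurable_id
  | succ n ih =>
      rw [zpow_add_one, Equiv.Perm.coe_mul]
      exact ih.comp he
  | pred n ih =>
      rw [zpow_sub_one, Equiv.Perm.coe_mul, Equiv.Perm.inv_def]
      exact ih.comp he'

private lemma zpow_null' {X : Type*} [MeasurableSpace X] (μ : Measure X)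
    (e : Equiv.Perm X) (he : Measurable e) (he' : Measurable e.symm)
    (hns : ∀ B : Set X, MeasurableSet B → (μ (⇑e ⁻¹' B) = 0 ↔ μ B = 0)) :
    ∀ k : ℤ, ∀ B : Set X, MeasurableSet B → (μ (⇑(e ^ k) '' B) = 0 ↔ μ B = 0) := by
  have himg : ∀ B : Set X, MeasurableSet B → (μ (⇑e '' B) = 0 ↔ μ B = 0) := by
    intro B hB
    have hmeas : MeasurableSet (⇑e '' B) := by
      rw [Equiv.image_eq_preimage_symm]; exact he' hB
    have := hns (⇑e '' B) hmeas
    rw [Equiv.preimage_image] at this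
    exact this.symm
  have himg' : ∀ B : Set X, MeasurableSet B → (μ (⇑e.symm '' B) = 0 ↔ μ B = 0) := by
    intro B hB
    rw [Equiv.image_eq_preimage_symm, Equiv.symm_symm]
    exact hns B hB
  intro k
  induction k using Int.induction_on with
  | zero => intro B hB; simp
  | succ n ih =>
      intro B hB
      have hmeas : MeasurableSet (⇑e '' B) := by
        rw [Equiv.image_eq_preimage_symm]; exact he' hB
      rw [zpow_add_one, Equiv.Perm.coe_mul, Set.image_comp]
      rw [ih (⇑e '' B) hmeas]
      exact himg B hB
  | pred n ih =>
      intro B hB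
      have hmeas : MeasurableSet (⇑e.symm '' B) := by
        rw [Equiv.image_eq_preimage_symm, Equiv.symm_symm]; exact he hB
      rw [zpow_sub_one, Equiv.Perm.coe_mul, Equiv.Perm.inv_def, Set.image_comp]
      rw [ih (⇑e.symm '' B) hmeas]
      exact himg' B hB

/-- In a dissipative system of bounded distortion generated by `W`, with
distortion constant `H` over all translates, every measurable `B` with
`0 < μ(B) < ∞` satisfies
`μ(fⁿ(B)) ≥ H⁻¹ μ(B) · inf_{k∈ℤ} μ(f^{k+n}(W))/μ(f^k(W))` for every `n ∈ ℤ`. -/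
theorem stmt_18
    {X : Type*} [MeasurableSpace X] (μ : Measure X) [SigmaFinite μ]
    (e : Equiv.Perm X) (he : Measurable e) (he' : Measurable e.symm)
    (hns : ∀ B : Set X, MeasurableSet B → (μ (⇑e ⁻¹' B) = 0 ↔ μ B = 0))
    (W : Set X) (hWm : MeasurableSet W) (hW0 : 0 < μ W) (hWfin : μ W ≠ ⊤)
    (hcover : (⋃ k : ℤ, ⇑(e ^ k) '' W) = Set.univ)
    (hdisj : Pairwise (fun k l : ℤ => Disjoint (⇑(e ^ k) '' W) (⇑(e ^ l) '' W)))
    (H : ℝ≥0∞) (hH0 : 0 < H) (hHT : H ≠ ⊤)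
    (hbd : ∀ (B : Set X), MeasurableSet B → B ⊆ W → 0 < μ B → ∀ s t : ℤ,
        H⁻¹ * (μ (⇑(e ^ (t + s)) '' W) / μ (⇑(e ^ s) '' W))
            ≤ μ (⇑(e ^ (t + s)) '' B) / μ (⇑(e ^ s) '' B) ∧
        μ (⇑(e ^ (t + s)) '' B) / μ (⇑(e ^ s) '' B)
            ≤ H * (μ (⇑(e ^ (t + s)) '' W) / μ (⇑(e ^ s) '' W))) :
    ∀ (B : Set X), MeasurableSet B → 0 < μ B → μ B ≠ ⊤ → ∀ n : ℤ,
      H⁻¹ * μ B * (⨅ k : ℤ, μ (⇑(e ^ (k + n)) '' W) / μ (⇑(e ^ k) '' W))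
        ≤ μ (⇑(e ^ n) '' B) := by
  intro B hBm hB0 hBfin n
  have hm : ∀ k : ℤ, Measurable ⇑(e ^ k) := zpow_meas' e he he'
  have hnull := zpow_null' μ e he he' hns
  have himgpre : ∀ (k : ℤ) (S : Set X), ⇑(e ^ k) '' S = ⇑(e ^ (-k)) ⁻¹' S := by
    intro k S
    rw [Equiv.image_eq_preimage_symm]
    congr 1
    rw [← Equiv.Perm.inv_def, ← zpow_neg]
  have hmeasIm : ∀ (k : ℤ) (S : Set X), MeasurableSet S →
      MeasurableSet (⇑(e ^ k) '' S) := by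
    intro k S hS
    rw [himgpre]
    exact hm (-k) hS
  set I : ℝ≥0∞ := ⨅ k : ℤ, μ (⇑(e ^ (k + n)) '' W) / μ (⇑(e ^ k) '' W) with hI
  set Bk : ℤ → Set X := fun k => B ∩ ⇑(e ^ k) '' W with hBk
  have hBkm : ∀ k, MeasurableSet (Bk k) := fun k => hBm.inter (hmeasIm k W hWm)
  have hBkdisj : Pairwise (Function.onFun Disjoint Bk) := fun k l hkl =>
    (hdisj hkl).mono inter_subset_right inter_subset_right
  have hBun : B = ⋃ k : ℤ, Bk k := by
    rw [hBk, ← Set.inter_iUnion, hcover, Set.inter_univ]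
  -- termwise key inequality
  have key : ∀ k : ℤ, H⁻¹ * μ (Bk k) * I ≤ μ (⇑(e ^ n) '' Bk k) := by
    intro k
    set C : Set X := ⇑(e ^ k) ⁻¹' B ∩ W with hC
    have hCm : MeasurableSet C := ((hm k) hBm).inter hWm
    have hCW : C ⊆ W := inter_subset_right
    have himage : ⇑(e ^ k) '' C = Bk k := by
      rw [hC, Set.image_inter (Equiv.injective _),
        Set.image_preimage_eq _ (Equiv.surjective _)]
    have hcomp : ⇑(e ^ n) '' Bk k = ⇑(e ^ (n + k)) '' C := by
      rw [← himage, ← Set.image_comp, ← Equiv.Perm.coe_mul, ← zpow_add]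
    by_cases h0 : μ C = 0
    · have hz : μ (Bk k) = 0 := by
        rw [← himage]
        exact (hnull k C hCm).mpr h0
      simp [hz]
    · have hCpos : 0 < μ C := pos_iff_ne_zero.mpr h0
      have hb := (hbd C hCm hCW hCpos k n).1
      have h1 : (H⁻¹ * (μ (⇑(e ^ (n + k)) '' W) / μ (⇑(e ^ k) '' W))) * μ (⇑(e ^ k) '' C)
          ≤ μ (⇑(e ^ (n + k)) '' C) := ENNReal.mul_le_of_le_div hb
      have hIle : I ≤ μ (⇑(e ^ (n + k)) '' W) / μ (⇑(e ^ k) '' W) := by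
        rw [hI, add_comm n k]
        exact iInf_le _ k
      calc H⁻¹ * μ (Bk k) * I
          ≤ H⁻¹ * μ (Bk k) * (μ (⇑(e ^ (n + k)) '' W) / μ (⇑(e ^ k) '' W)) :=
            mul_le_mul_right hIle _
        _ = (H⁻¹ * (μ (⇑(e ^ (n + k)) '' W) / μ (⇑(e ^ k) '' W))) * μ (⇑(e ^ k) '' C) := by
            rw [himage]; ring
        _ ≤ μ (⇑(e ^ (n + k)) '' C) := h1
        _ = μ (⇑(e ^ n) '' Bk k) := by rw [hcomp]
  -- sum up
  have hμB : μ B = ∑' k : ℤ, μ (Bk k) := by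
    conv_lhs => rw [hBun]
    exact measure_iUnion hBkdisj hBkm
  have hμImB : μ (⇑(e ^ n) '' B) = ∑' k : ℤ, μ (⇑(e ^ n) '' Bk k) := by
    conv_lhs => rw [hBun, Set.image_iUnion]
    refine measure_iUnion ?_ (fun k => hmeasIm n _ (hBkm k))
    intro k l hkl
    exact (Set.disjoint_image_iff (Equiv.injective _)).mpr (hBkdisj hkl)
  calc H⁻¹ * μ B * I = ∑' k : ℤ, H⁻¹ * μ (Bk k) * I := by
        rw [hμB, ← ENNReal.tsum_mul_left, ← ENNReal.tsum_mul_right]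
    _ ≤ ∑' k : ℤ, μ (⇑(e ^ n) '' Bk k) := ENNReal.tsum_le_tsum key
    _ = μ (⇑(e ^ n) '' B) := hμImB.symm
end
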